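/- arXiv:2502.01178 — 6 statements merged into one kernel-verified Lean document; each statement's English description precedes it below -/
import Mathlib

section
/- Let 0 < a ≤ b < 1 and s > 0, and suppose Y_0 = ⌊aN⌋ in the biparental Moran model with viability selection. Then there exists a constant C > 0 (depending on a, b and s but not on N) such that ℙ(T_{⌊bN⌋} > C·N) → 0 as N → ∞. -/
open MeasureTheory Filter

/-- The biparental Moran model with viability selection on a population of size `N`
with selection parameter `s`, realized on a probability space `Ω`.
`W n` is the matrix of genetic weights, `Y n` the set of advantaged individuals,
`mo n`, `fa n`, `ka n` the positions of the mother, father and killed individual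
at time step `n`. -/
structure MoranModel (N : ℕ) (s : ℝ) (Ω : Type) [MeasurableSpace Ω] where
  P : Measure Ω
  isProb : IsProbabilityMeasure P
  W : ℕ → Ω → Fin N → Fin N → ℝ
  Y : ℕ → Ω → Finset (Fin N)
  mo : ℕ → Ω → Fin N
  fa : ℕ → Ω → Fin N
  ka : ℕ → Ω → Fin N
  meas_W : ∀ n, Measurable (W n)
  meas_Y : ∀ n (A : Set (Finset (Fin N))), MeasurableSet (Y n ⁻¹' A)
  meas_mo : ∀ n, Measurable (mo n)
  meas_fa : ∀ n, Measurable (fa n)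
  meas_ka : ∀ n, Measurable (ka n)
  W_init : ∀ ω i j, W 0 ω i j = if i = j then (1 : ℝ) else 0
  Y_rec : ∀ n ω, Y (n + 1) ω =
    if mo n ω ∈ Y n ω then insert (ka n ω) (Y n ω) else (Y n ω).erase (ka n ω)
  W_rec : ∀ n ω i j, W (n + 1) ω i j =
    if i = ka n ω then (W n ω (mo n ω) j + W n ω (fa n ω) j) / 2 else W n ω i j
  /-- Conditionally on the natural filtration of the chain `(W, Y)`, the mother and
  father are uniform on the population, and independently the killed individual `k` is
  chosen with probability proportional to `1 + s` if disadvantaged, `1` if advantaged. -/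
  law : ∀ (n : ℕ) (A : Set Ω),
    MeasurableSet[⨆ k ∈ Set.Iic n,
      (MeasurableSpace.comap (W k) inferInstance ⊔ MeasurableSpace.comap (Y k) ⊤)] A →
    ∀ i j k : Fin N,
      (P (A ∩ {ω | mo n ω = i ∧ fa n ω = j ∧ ka n ω = k})).toReal =
        (1 / (N : ℝ) ^ 2) *
          ∫ ω in A, (1 + s * (if k ∈ Y n ω then 0 else 1)) /
            (((Y n ω).card : ℝ) + (1 + s) * ((N : ℝ) - ((Y n ω).card : ℝ))) ∂P

/-- The natural filtration of the chain `(W, Y)`. -/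
def MoranModel.F {N : ℕ} {s : ℝ} {Ω : Type} [MeasurableSpace Ω]
    (M : MoranModel N s Ω) (n : ℕ) : MeasurableSpace Ω :=
  ⨆ k ∈ Set.Iic n,
    (MeasurableSpace.comap (M.W k) inferInstance ⊔ MeasurableSpace.comap (M.Y k) ⊤)


/-- The hitting time `T_k` of level `k` by the number of advantaged individuals
`(Yₙ)ₙ`, with value `∞` if the level is never hit. -/
noncomputable def MoranModel.T {N : ℕ} {s : ℝ} {Ω : Type} [MeasurableSpace Ω]
    (M : MoranModel N s Ω) (k : ℕ) (ω : Ω) : ℕ∞ :=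
  ⨅ (n : ℕ) (_ : (M.Y n ω).card = k), (n : ℕ∞)



namespace MoranAux

noncomputable section

variable (K : ℕ) (s : ℝ)

/-- Denominator in the selection law. -/
def Dd (x : ℕ) : ℝ := (x : ℝ) + (1 + s) * ((K : ℝ) - (x : ℝ))

/-- Probability that the number of advantaged individuals increases by one. -/
def pup (x : ℕ) : ℝ := ((x : ℝ) * ((1 + s) * ((K : ℝ) - (x : ℝ)))) / ((K : ℝ) * Dd K s x)

/-- Probability that the number of advantaged individuals decreases by one. -/
def pdn (x : ℕ) : ℝ := (((K : ℝ) - (x : ℝ)) * (x : ℝ)) / ((K : ℝ) * Dd K s x)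

/-- Transition kernel of the count of advantaged individuals. -/
def ptrans (t x : ℕ) : ℝ :=
  if x = t + 1 then pup K s t
  else if t = x + 1 then pdn K s t
  else if x = t then 1 - pup K s t - pdn K s t
  else 0

variable {K s}

lemma Dd_pos (hs : 0 < s) {x : ℕ} (hx : x ≤ K) (hK : 0 < K) : 0 < Dd K s x := by
  have h1 : (x : ℝ) ≤ K := by exact_mod_cast hx
  have : (0:ℝ) < K := by exact_mod_cast hK
  unfold Dd; nlinarith

lemma Dd_le (hs : 0 < s) {x : ℕ} (hx : x ≤ K) : Dd K s x ≤ (1 + s) * K := by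
  have h1 : (x : ℝ) ≤ K := by exact_mod_cast hx
  have h0 : (0:ℝ) ≤ x := Nat.cast_nonneg x
  unfold Dd; nlinarith

lemma pup_nonneg (hs : 0 < s) {x : ℕ} (hx : x ≤ K) (hK : 0 < K) : 0 ≤ pup K s x := by
  have h1 : (x : ℝ) ≤ K := by exact_mod_cast hx
  have h0 : (0:ℝ) ≤ x := Nat.cast_nonneg x
  have hD := Dd_pos hs hx hK
  have : (0:ℝ) < K := by exact_mod_cast hK
  apply div_nonneg
  · nlinarith [mul_nonneg h0 (mul_nonneg (by linarith : (0:ℝ) ≤ 1 + s) (sub_nonneg.2 h1))]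
  · nlinarith

lemma pdn_nonneg (hs : 0 < s) {x : ℕ} (hx : x ≤ K) (hK : 0 < K) : 0 ≤ pdn K s x := by
  have h1 : (x : ℝ) ≤ K := by exact_mod_cast hx
  have h0 : (0:ℝ) ≤ x := Nat.cast_nonneg x
  have hD := Dd_pos hs hx hK
  have : (0:ℝ) < K := by exact_mod_cast hK
  apply div_nonneg
  · nlinarith [mul_nonneg h0 (mul_nonneg (by linarith : (0:ℝ) ≤ 1 + s) (sub_nonneg.2 h1))]
  · nlinarith

lemma pup_eq_pdn (x : ℕ) : pup K s x = (1 + s) * pdn K s x := by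
  unfold pup pdn; field_simp

lemma pup_add_pdn_le_one (hs : 0 < s) {x : ℕ} (hx : x ≤ K) (hK : 0 < K) :
    pup K s x + pdn K s x ≤ 1 := by
  have h1 : (x : ℝ) ≤ K := by exact_mod_cast hx
  have h0 : (0:ℝ) ≤ x := Nat.cast_nonneg x
  have hD := Dd_pos hs hx hK
  have hKr : (0:ℝ) < K := by exact_mod_cast hK
  rw [pup, pdn, ← add_div, div_le_one (by positivity)]
  have : (K:ℝ) * Dd K s x = (K:ℝ) * x + (K:ℝ) * ((1+s) * ((K:ℝ) - x)) := by
    unfold Dd; ring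
  nlinarith [mul_nonneg (by linarith : (0:ℝ) ≤ 1 + s)
      (mul_nonneg (sub_nonneg.2 h1) (sub_nonneg.2 h1)), mul_self_nonneg (x:ℝ)]


section Model

variable {Ω : Type} [MeasurableSpace Ω] {K : ℕ} {s : ℝ} (M : MoranModel K s Ω)

lemma F_le_ambient (n : ℕ) : M.F n ≤ ‹MeasurableSpace Ω› := by
  apply iSup_le; intro k; apply iSup_le; intro _
  apply sup_le
  · exact (M.meas_W k).comap_le
  · intro A hA
    obtain ⟨B, -, rfl⟩ := hA
    exact M.meas_Y k B

lemma measY_F {k n : ℕ} (hk : k ≤ n) (A : Set (Finset (Fin K))) :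
    MeasurableSet[M.F n] (M.Y k ⁻¹' A) := by
  have h1 : MeasurableSet[MeasurableSpace.comap (M.Y k) ⊤] (M.Y k ⁻¹' A) :=
    ⟨A, trivial, rfl⟩
  have h2 : (MeasurableSpace.comap (M.W k) inferInstance ⊔ MeasurableSpace.comap (M.Y k) ⊤)
      ≤ M.F n := le_iSup₂ (f := fun k (_ : k ∈ Set.Iic n) =>
        MeasurableSpace.comap (M.W k) inferInstance ⊔ MeasurableSpace.comap (M.Y k) ⊤) k hk
  have h3 : MeasurableSpace.comap (M.Y k) ⊤ ≤ M.F n := le_trans le_sup_right h2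
  exact h3 _ h1

lemma law_const (n : ℕ) (A : Set Ω) (hA : MeasurableSet[M.F n] A) (T : Finset (Fin K))
    (hAT : ∀ ω ∈ A, M.Y n ω = T) (i j k : Fin K) :
    (M.P (A ∩ {ω | M.mo n ω = i ∧ M.fa n ω = j ∧ M.ka n ω = k})).toReal =
      1 / (K:ℝ)^2 * ((1 + s * (if k ∈ T then 0 else 1)) / Dd K s T.card
        * (M.P A).toReal) := by
  have hAmeas : MeasurableSet A := F_le_ambient M n A hA
  rw [M.law n A hA i j k]
  congr 1
  have hcongr : ∀ ω ∈ A, (1 + s * (if k ∈ M.Y n ω then 0 else 1)) /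
      (((M.Y n ω).card : ℝ) + (1 + s) * ((K : ℝ) - ((M.Y n ω).card : ℝ)))
      = (1 + s * (if k ∈ T then 0 else 1)) / Dd K s T.card := by
    intro ω hω; rw [hAT ω hω]; rfl
  rw [setIntegral_congr_fun hAmeas hcongr, setIntegral_const, smul_eq_mul, mul_comm]
  rfl

end Model


section Comb

/-- Sum of a membership-indicator function over a fintype. -/
lemma sum_mem_ite {α : Type*} [Fintype α] [DecidableEq α] (T : Finset α) (c1 c2 : ℝ) :
    ∑ k : α, (if k ∈ T then c1 else c2)
      = (T.card : ℝ) * c1 + ((Fintype.card α - T.card : ℕ) : ℝ) * c2 := by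
  rw [Finset.sum_ite, Finset.sum_const, Finset.sum_const]
  have h1 : (Finset.univ.filter (fun k => k ∈ T)) = T := by ext k; simp
  have h2 : (Finset.univ.filter (fun k => ¬ k ∈ T)).card = Fintype.card α - T.card := by
    rw [Finset.filter_not, Finset.card_sdiff_of_subset (by simp [h1, Finset.subset_univ]), h1,
      Finset.card_univ]
  rw [h1, h2, nsmul_eq_mul, nsmul_eq_mul]

lemma sum_snd {α : Type*} [Fintype α] (g : α → ℝ) :
    ∑ q : α × α, g q.2 = (Fintype.card α : ℝ) * ∑ k, g k := by
  rw [Fintype.sum_prod_type]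
  simp [Finset.sum_const, nsmul_eq_mul, Finset.card_univ]

/-- Cardinality of the set of advantaged individuals after one step, as a function of
the mother `i` and killed individual `k`. -/
def newcard {K : ℕ} (T : Finset (Fin K)) (i k : Fin K) : ℕ :=
  if i ∈ T then (insert k T).card else (T.erase k).card

set_option maxHeartbeats 1000000 in
lemma sum_weights {K : ℕ} {s : ℝ} (hs : 0 < s) (hK : 0 < K) (T : Finset (Fin K)) (x : ℕ) :
    ∑ p ∈ Finset.univ.filter (fun p : Fin K × Fin K × Fin K => newcard T p.1 p.2.2 = x),
      (1 + s * (if p.2.2 ∈ T then 0 else 1)) / Dd K s T.card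
    = (K:ℝ)^2 * ptrans K s T.card x := by
  classical
  set t := T.card with ht
  have htK : t ≤ K := by
    have := Finset.card_le_univ T; simpa using this
  have hDpos := Dd_pos hs htK hK
  have hD : Dd K s t ≠ 0 := ne_of_gt hDpos
  have hKr : (0:ℝ) < K := by exact_mod_cast hK
  have hD' : ((t:ℝ) + (1+s) * ((K:ℝ) - (t:ℝ))) ≠ 0 := hD
  set C1 : ℝ := (t:ℝ) * (if t = x then 1 / Dd K s t else 0)
    + ((K - t : ℕ):ℝ) * (if t + 1 = x then (1 + s) / Dd K s t else 0) with hC1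
  set C2 : ℝ := (t:ℝ) * (if t = x + 1 then 1 / Dd K s t else 0)
    + ((K - t : ℕ):ℝ) * (if t = x then (1 + s) / Dd K s t else 0) with hC2
  have hinner : ∀ i : Fin K,
      (∑ k : Fin K, (if newcard T i k = x then
        (1 + s * (if k ∈ T then 0 else 1)) / Dd K s t else 0))
      = if i ∈ T then C1 else C2 := by
    intro i
    by_cases hi : i ∈ T
    · have hptw : ∀ k : Fin K, (if newcard T i k = x then
          (1 + s * (if k ∈ T then 0 else 1)) / Dd K s t else 0)
          = (if k ∈ T then (if t = x then 1 / Dd K s t else 0)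
              else (if t + 1 = x then (1 + s) / Dd K s t else 0)) := by
        intro k
        by_cases hk : k ∈ T
        · simp [newcard, hi, hk, Finset.insert_eq_self.2 hk, ← ht]
        · simp [newcard, hi, hk, Finset.card_insert_of_notMem hk, ← ht, mul_one]
      rw [Finset.sum_congr rfl (fun k _ => hptw k), sum_mem_ite, if_pos hi, hC1,
        Fintype.card_fin]
    · have hptw : ∀ k : Fin K, (if newcard T i k = x then
          (1 + s * (if k ∈ T then 0 else 1)) / Dd K s t else 0)
          = (if k ∈ T then (if t = x + 1 then 1 / Dd K s t else 0)
              else (if t = x then (1 + s) / Dd K s t else 0)) := by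
        intro k
        by_cases hk : k ∈ T
        · have hcard : (T.erase k).card = t - 1 := by rw [Finset.card_erase_of_mem hk]
          have ht1 : 1 ≤ t := Finset.card_pos.2 ⟨k, hk⟩
          by_cases hx : t = x + 1
          · have hxx : newcard T i k = x := by
              simp only [newcard, if_neg hi]; omega
            rw [if_pos hxx, if_pos hk, if_pos hx, if_pos hk]
            simp
          · have hxx : ¬ (newcard T i k = x) := by
              simp only [newcard, if_neg hi]; omega
            rw [if_neg hxx, if_pos hk, if_neg hx]
        · have herase : T.erase k = T := Finset.erase_eq_of_notMem hk
          have hnc : newcard T i k = t := by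
            simp only [newcard, if_neg hi, herase, ht]
          by_cases hx : t = x
          · have hxx : newcard T i k = x := by omega
            rw [if_pos hxx, if_neg hk, if_pos hx, if_neg hk]
            simp [mul_one]
          · have hxx : ¬ (newcard T i k = x) := by omega
            rw [if_neg hxx, if_neg hk, if_neg hx]
      rw [Finset.sum_congr rfl (fun k _ => hptw k), sum_mem_ite, if_neg hi, hC2,
        Fintype.card_fin]
  have hmain : ∑ p ∈ Finset.univ.filter
        (fun p : Fin K × Fin K × Fin K => newcard T p.1 p.2.2 = x),
      (1 + s * (if p.2.2 ∈ T then 0 else 1)) / Dd K s t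
      = (K:ℝ) * ((t:ℝ) * C1 + ((K - t : ℕ):ℝ) * C2) := by
    rw [Finset.sum_filter, Fintype.sum_prod_type]
    have hstep : ∀ i : Fin K,
        (∑ q : Fin K × Fin K, if newcard T i q.2 = x then
          (1 + s * (if q.2 ∈ T then 0 else 1)) / Dd K s t else 0)
        = (if i ∈ T then C1 else C2) * (K:ℝ) := by
      intro i
      rw [sum_snd (fun k : Fin K => if newcard T i k = x then
        (1 + s * (if k ∈ T then 0 else 1)) / Dd K s t else 0), hinner i, Fintype.card_fin,
        mul_comm]
    rw [Finset.sum_congr rfl (fun i _ => hstep i), ← Finset.sum_mul, sum_mem_ite,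
      Fintype.card_fin]
    ring
  rw [hmain]
  have hc : ((K - t : ℕ):ℝ) = (K:ℝ) - (t:ℝ) := by
    push_cast [htK]; ring
  by_cases h1 : x = t + 1
  · have e1 : ¬ (t = x) := by omega
    have e2 : (t + 1 = x) := by omega
    have e3 : ¬ (t = x + 1) := by omega
    rw [hC1, hC2, hc]
    simp only [ptrans, if_pos h1, if_neg e1, if_pos e2, if_neg e3]
    unfold pup Dd
    field_simp
    ring
  · by_cases h2 : t = x + 1
    · have e1 : ¬ (t = x) := by omega
      have e2 : ¬ (t + 1 = x) := by omega
      rw [hC1, hC2, hc]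
      simp only [ptrans, if_neg h1, if_pos h2, if_neg e1, if_neg e2]
      unfold pdn Dd
      field_simp
      ring
    · by_cases h3 : x = t
      · have e1 : (t = x) := by omega
        have e2 : ¬ (t + 1 = x) := by omega
        rw [hC1, hC2, hc]
        simp only [ptrans, if_neg h1, if_neg h2, if_pos h3, if_pos e1, if_neg e2]
        unfold pup pdn Dd
        field_simp
        ring
      · have e1 : ¬ (t = x) := by omega
        have e2 : ¬ (t + 1 = x) := by omega
        rw [hC1, hC2]
        simp only [ptrans, if_neg h1, if_neg h2, if_neg h3, if_neg e1, if_neg e2]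
        ring

end Comb


section Step

variable {Ω : Type} [MeasurableSpace Ω] {K : ℕ} {s : ℝ} (M : MoranModel K s Ω)

lemma step_dist (hs : 0 < s) (hK : 0 < K) (n : ℕ) (A : Set Ω)
    (hA : MeasurableSet[M.F n] A) (T : Finset (Fin K))
    (hAT : ∀ ω ∈ A, M.Y n ω = T) (x : ℕ) :
    (M.P (A ∩ {ω | (M.Y (n+1) ω).card = x})).toReal
      = ptrans K s T.card x * (M.P A).toReal := by
  classical
  haveI : IsProbabilityMeasure M.P := M.isProb
  have hAmeas : MeasurableSet A := F_le_ambient M n A hA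
  set U : Finset (Fin K × Fin K × Fin K) :=
    Finset.univ.filter (fun p => newcard T p.1 p.2.2 = x) with hU
  have hset : A ∩ {ω | (M.Y (n+1) ω).card = x}
      = ⋃ p ∈ U, A ∩ {ω | M.mo n ω = p.1 ∧ M.fa n ω = p.2.1 ∧ M.ka n ω = p.2.2} := by
    ext ω
    simp only [Set.mem_inter_iff, Set.mem_setOf_eq, Set.mem_iUnion, Finset.mem_coe, hU,
      Finset.mem_filter, Finset.mem_univ, true_and, exists_prop]
    constructor
    · rintro ⟨hωA, hcard⟩
      refine ⟨(M.mo n ω, M.fa n ω, M.ka n ω), ?_, hωA, rfl, rfl, rfl⟩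
      have hy := M.Y_rec n ω
      rw [hAT ω hωA] at hy
      simpa [newcard, hy, apply_ite Finset.card] using hcard
    · rintro ⟨⟨i, j, k⟩, hp, hωA, h1, h2, h3⟩
      refine ⟨hωA, ?_⟩
      have hy := M.Y_rec n ω
      rw [hAT ω hωA] at hy
      subst h1; subst h2; subst h3
      simpa [newcard, hy, apply_ite Finset.card] using hp
  have hmeas : ∀ p ∈ U, MeasurableSet
      (A ∩ {ω | M.mo n ω = p.1 ∧ M.fa n ω = p.2.1 ∧ M.ka n ω = p.2.2}) := by
    rintro ⟨i, j, k⟩ -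
    have hrw : {ω | M.mo n ω = i ∧ M.fa n ω = j ∧ M.ka n ω = k}
        = M.mo n ⁻¹' {i} ∩ (M.fa n ⁻¹' {j} ∩ M.ka n ⁻¹' {k}) := by
      ext ω; simp [Set.mem_preimage]
    exact hAmeas.inter (hrw ▸ (((M.meas_mo n) (measurableSet_singleton i)).inter
      (((M.meas_fa n) (measurableSet_singleton j)).inter
        ((M.meas_ka n) (measurableSet_singleton k)))))
  have hdisj : (U : Set (Fin K × Fin K × Fin K)).PairwiseDisjoint
      (fun p => A ∩ {ω | M.mo n ω = p.1 ∧ M.fa n ω = p.2.1 ∧ M.ka n ω = p.2.2}) := by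
    rintro ⟨i, j, k⟩ - ⟨i', j', k'⟩ - hne
    refine Set.disjoint_left.2 ?_
    rintro ω ⟨-, h1, h2, h3⟩ ⟨-, h4, h5, h6⟩
    simp only at h1 h2 h3 h4 h5 h6
    exact hne (by
      rw [Prod.mk.injEq, Prod.mk.injEq]
      exact ⟨h1.symm.trans h4, ⟨h2.symm.trans h5, h3.symm.trans h6⟩⟩)
  rw [hset, measure_biUnion_finset hdisj hmeas,
    ENNReal.toReal_sum (fun p _ => measure_ne_top _ _)]
  have hterm : ∀ p ∈ U,
      (M.P (A ∩ {ω | M.mo n ω = p.1 ∧ M.fa n ω = p.2.1 ∧ M.ka n ω = p.2.2})).toReal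
      = ((1 + s * (if p.2.2 ∈ T then 0 else 1)) / Dd K s T.card)
          * (1 / (K:ℝ)^2 * (M.P A).toReal) := by
    intro p _
    rw [law_const M n A hA T hAT p.1 p.2.1 p.2.2]
    ring
  rw [Finset.sum_congr rfl hterm, ← Finset.sum_mul, hU, sum_weights hs hK T x]
  have hK2 : ((K:ℝ)^2) ≠ 0 := by
    have : (0:ℝ) < K := by exact_mod_cast hK
    positivity
  field_simp

end Step


section Stopped

variable {Ω : Type} [MeasurableSpace Ω] {K : ℕ} {s : ℝ}

/-- A state is active if strictly between the lower threshold `l` and the target `m`. -/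
def active (l m x : ℕ) : Prop := l < x ∧ x < m

instance (l m x : ℕ) : Decidable (active l m x) := by unfold active; infer_instance

/-- The stopped chain: count of advantaged individuals, together with the number of
steps made so far, frozen upon leaving the interval `(l, m)`. -/
def SP (M : MoranModel K s Ω) (l m : ℕ) : ℕ → Ω → ℕ × ℕ
  | 0, ω => ((M.Y 0 ω).card, 0)
  | (n+1), ω => if active l m (SP M l m n ω).1
      then ((M.Y (n+1) ω).card, (SP M l m n ω).2 + 1)
      else SP M l m n ω

variable (M : MoranModel K s Ω) (l m : ℕ)

lemma SP_succ_active {n : ℕ} {ω : Ω} (h : active l m (SP M l m n ω).1) :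
    SP M l m (n+1) ω = ((M.Y (n+1) ω).card, (SP M l m n ω).2 + 1) := by
  simp [SP, h]

lemma SP_succ_inactive {n : ℕ} {ω : Ω} (h : ¬ active l m (SP M l m n ω).1) :
    SP M l m (n+1) ω = SP M l m n ω := by
  simp [SP, h]

lemma SP_fst_eq (n : ℕ) (ω : Ω) (h : active l m (SP M l m n ω).1) :
    (SP M l m n ω).1 = (M.Y n ω).card := by
  cases n with
  | zero => rfl
  | succ n =>
    by_cases h' : active l m (SP M l m n ω).1
    · rw [SP_succ_active M l m h']
    · exact absurd ((SP_succ_inactive M l m h') ▸ h) h'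

lemma SP_snd_eq (n : ℕ) (ω : Ω) (h : active l m (SP M l m n ω).1) :
    (SP M l m n ω).2 = n := by
  induction n with
  | zero => rfl
  | succ n ih =>
    by_cases h' : active l m (SP M l m n ω).1
    · rw [SP_succ_active M l m h']; simp [ih h']
    · exact absurd ((SP_succ_inactive M l m h') ▸ h) h'

lemma SP_snd_le (n : ℕ) (ω : Ω) : (SP M l m n ω).2 ≤ n := by
  induction n with
  | zero => exact le_refl 0
  | succ n ih =>
    by_cases h' : active l m (SP M l m n ω).1
    · rw [SP_succ_active M l m h']; simpa using ih
    · rw [SP_succ_inactive M l m h']; exact ih.trans (Nat.le_succ n)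

lemma SP_exists (n : ℕ) (ω : Ω) : ∃ j ≤ n, (SP M l m n ω).1 = (M.Y j ω).card := by
  induction n with
  | zero => exact ⟨0, le_refl 0, rfl⟩
  | succ n ih =>
    by_cases h' : active l m (SP M l m n ω).1
    · exact ⟨n+1, le_refl _, by rw [SP_succ_active M l m h']⟩
    · obtain ⟨j, hj, hy⟩ := ih
      exact ⟨j, hj.trans (Nat.le_succ n), by rw [SP_succ_inactive M l m h']; exact hy⟩

lemma card_succ_le (n : ℕ) (ω : Ω) : (M.Y (n+1) ω).card ≤ (M.Y n ω).card + 1 := by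
  rw [M.Y_rec n ω]
  split
  · exact Finset.card_insert_le _ _
  · exact (Finset.card_erase_le).trans (Nat.le_succ _)

lemma SP_fst_le (hm0 : ∀ ω, (M.Y 0 ω).card ≤ m) (n : ℕ) (ω : Ω) :
    (SP M l m n ω).1 ≤ m := by
  induction n with
  | zero => exact hm0 ω
  | succ n ih =>
    by_cases h' : active l m (SP M l m n ω).1
    · rw [SP_succ_active M l m h']
      have h1 : (M.Y (n+1) ω).card ≤ (M.Y n ω).card + 1 := card_succ_le M n ω
      have h2 : (M.Y n ω).card = (SP M l m n ω).1 := (SP_fst_eq M l m n ω h').symm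
      have h3 : (SP M l m n ω).1 < m := h'.2
      simp only []
      omega
    · rw [SP_succ_inactive M l m h']; exact ih

lemma SP_fst_le_K (n : ℕ) (ω : Ω) : (SP M l m n ω).1 ≤ K := by
  obtain ⟨j, -, hj⟩ := SP_exists M l m n ω
  rw [hj]
  have := Finset.card_le_univ (M.Y j ω)
  simpa using this

lemma F_mono {n n' : ℕ} (h : n ≤ n') : M.F n ≤ M.F n' := by
  apply iSup_le; intro k; apply iSup_le; intro hk
  exact le_iSup₂ (f := fun k (_ : k ∈ Set.Iic n') =>
    MeasurableSpace.comap (M.W k) inferInstance ⊔ MeasurableSpace.comap (M.Y k) ⊤) k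
    (le_trans hk h)

lemma measSP (n : ℕ) : ∀ v : ℕ × ℕ, MeasurableSet[M.F n] {ω | SP M l m n ω = v} := by
  induction n with
  | zero =>
    intro v
    have h : {ω | SP M l m 0 ω = v} = M.Y 0 ⁻¹' {T | (T.card, 0) = v} := by
      ext ω; simp [SP]
    rw [h]; exact measY_F M (le_refl 0) _
  | succ n ih =>
    intro v
    have hset : {ω | SP M l m (n+1) ω = v}
        = (⋃ u ∈ {u : ℕ × ℕ | active l m u.1 ∧ u.2 + 1 = v.2},
            {ω | SP M l m n ω = u} ∩ M.Y (n+1) ⁻¹' {T | T.card = v.1})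
          ∪ ({ω : Ω | ¬ active l m v.1} ∩ {ω | SP M l m n ω = v}) := by
      ext ω
      simp only [Set.mem_union, Set.mem_iUnion, Set.mem_inter_iff, Set.mem_setOf_eq,
        Set.mem_preimage, Set.mem_singleton_iff, exists_prop]
      constructor
      · intro hv
        by_cases h' : active l m (SP M l m n ω).1
        · left
          refine ⟨SP M l m n ω, ⟨h', ?_⟩, rfl, ?_⟩
          · rw [← hv, SP_succ_active M l m h']
          · rw [← hv, SP_succ_active M l m h']
        · right
          have he := SP_succ_inactive M l m h'
          constructor
          · rw [← hv, he]; exact h'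
          · rw [← hv, he]
      · rintro (⟨u, ⟨hu, hu2⟩, hSP, hcard⟩ | ⟨hna, hSP⟩)
        · have hact : active l m (SP M l m n ω).1 := by rw [hSP]; exact hu
          rw [SP_succ_active M l m hact, hcard, hSP, hu2]
        · have hna' : ¬ active l m (SP M l m n ω).1 := by rw [hSP]; exact hna
          rw [SP_succ_inactive M l m hna', hSP]
    rw [hset]
    apply MeasurableSet.union
    · apply MeasurableSet.biUnion (Set.to_countable _)
      intro u _
      apply MeasurableSet.inter
      · exact (F_mono M (Nat.le_succ n)) _ (ih u)
      · exact measY_F M (le_refl (n+1)) {T | T.card = v.1}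
    · by_cases hact : active l m v.1
      · have h0 : {ω : Ω | ¬ active l m v.1} = ∅ := by ext ω; simp [hact]
        rw [h0, Set.empty_inter]; exact @MeasurableSet.empty _ (M.F (n+1))
      · have h0 : {ω : Ω | ¬ active l m v.1} = Set.univ := by ext ω; simp [hact]
        rw [h0, Set.univ_inter]
        exact (F_mono M (Nat.le_succ n)) _ (ih v)

/-- The finite window containing all reachable states of `SP` at time `n`. -/
def Rr (K n : ℕ) : Finset (ℕ × ℕ) := Finset.range (K+1) ×ˢ Finset.range (n+1)

lemma SP_mem_Rr (n : ℕ) (ω : Ω) : SP M l m n ω ∈ Rr K n := by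
  rw [Rr, Finset.mem_product, Finset.mem_range, Finset.mem_range]
  exact ⟨Nat.lt_succ_of_le (SP_fst_le_K M l m n ω), Nat.lt_succ_of_le (SP_snd_le M l m n ω)⟩

/-- Expectation of `u (SP n)`. -/
noncomputable def ee (n : ℕ) (u : ℕ × ℕ → ℝ) : ℝ :=
  ∑ v ∈ Rr K n, u v * (M.P {ω | SP M l m n ω = v}).toReal

/-- One-step transition operator for the stopped chain. -/
noncomputable def Qop (K : ℕ) (s : ℝ) (l m : ℕ) (u : ℕ × ℕ → ℝ) : ℕ × ℕ → ℝ := fun v =>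
  if active l m v.1 then ∑ x ∈ Finset.range (K+1), ptrans K s v.1 x * u (x, v.2 + 1)
  else u v

lemma measure_partition_Y (E : Set Ω) (hE : MeasurableSet E) (n : ℕ) :
    (M.P E).toReal = ∑ T : Finset (Fin K), (M.P (E ∩ M.Y n ⁻¹' {T})).toReal := by
  haveI : IsProbabilityMeasure M.P := M.isProb
  have hcover : E = ⋃ T ∈ (Finset.univ : Finset (Finset (Fin K))), E ∩ M.Y n ⁻¹' {T} := by
    ext ω
    simp only [Set.mem_iUnion, Set.mem_inter_iff, Set.mem_preimage, Set.mem_singleton_iff,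
      Finset.mem_univ, exists_prop, true_and]
    exact ⟨fun h => ⟨M.Y n ω, h, rfl⟩, fun ⟨T, h, _⟩ => h⟩
  have hdisj : (↑(Finset.univ : Finset (Finset (Fin K))) :
      Set (Finset (Fin K))).PairwiseDisjoint (fun T => E ∩ M.Y n ⁻¹' {T}) := by
    intro T _ T' _ hne
    refine Set.disjoint_left.2 ?_
    rintro ω ⟨-, h1⟩ ⟨-, h2⟩
    exact hne (by rw [← h1, ← h2]) 
  have hmeas : ∀ T ∈ (Finset.univ : Finset (Finset (Fin K))),
      MeasurableSet (E ∩ M.Y n ⁻¹' {T}) := fun T _ => hE.inter (M.meas_Y n {T})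
  conv_lhs => rw [hcover]
  rw [measure_biUnion_finset hdisj hmeas,
    ENNReal.toReal_sum (fun T _ => measure_ne_top _ _)]

lemma measure_partition_SP (E : Set Ω) (hE : MeasurableSet E) (n : ℕ) :
    (M.P E).toReal = ∑ v ∈ Rr K n, (M.P ({ω | SP M l m n ω = v} ∩ E)).toReal := by
  haveI : IsProbabilityMeasure M.P := M.isProb
  have hcover : E = ⋃ v ∈ Rr K n, {ω | SP M l m n ω = v} ∩ E := by
    ext ω
    simp only [Set.mem_iUnion, Set.mem_inter_iff, Set.mem_setOf_eq, exists_prop]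
    exact ⟨fun h => ⟨SP M l m n ω, SP_mem_Rr M l m n ω, rfl, h⟩, fun ⟨v, _, _, h⟩ => h⟩
  have hdisj : (↑(Rr K n) : Set (ℕ × ℕ)).PairwiseDisjoint
      (fun v => {ω | SP M l m n ω = v} ∩ E) := by
    intro v _ v' _ hne
    refine Set.disjoint_left.2 ?_
    rintro ω ⟨h1, -⟩ ⟨h2, -⟩
    exact hne (by rw [← h1, ← h2])
  have hmeas : ∀ v ∈ Rr K n, MeasurableSet ({ω | SP M l m n ω = v} ∩ E) :=
    fun v _ => ((F_le_ambient M n) _ (measSP M l m n v)).inter hE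
  conv_lhs => rw [hcover]
  rw [measure_biUnion_finset hdisj hmeas,
    ENNReal.toReal_sum (fun v _ => measure_ne_top _ _)]

end Stopped


section Recursion

variable {Ω : Type} [MeasurableSpace Ω] {K : ℕ} {s : ℝ} (M : MoranModel K s Ω) (l m : ℕ)

/-- Transition coefficient for the stopped chain. -/
noncomputable def coef (K : ℕ) (s : ℝ) (l m : ℕ) (v w : ℕ × ℕ) : ℝ :=
  if active l m v.1 then (if w.2 = v.2 + 1 then ptrans K s v.1 w.1 else 0)
  else (if w = v then 1 else 0)

lemma key2 (hs : 0 < s) (hK : 0 < K) (n : ℕ) (v : ℕ × ℕ) (T : Finset (Fin K)) (w : ℕ × ℕ) :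
    (M.P (({ω | SP M l m n ω = v} ∩ M.Y n ⁻¹' {T}) ∩ {ω | SP M l m (n+1) ω = w})).toReal
      = coef K s l m v w * (M.P ({ω | SP M l m n ω = v} ∩ M.Y n ⁻¹' {T})).toReal := by
  classical
  set A := {ω | SP M l m n ω = v} ∩ M.Y n ⁻¹' {T} with hA
  have hAF : MeasurableSet[M.F n] A := by
    apply MeasurableSet.inter
    · exact measSP M l m n v
    · exact measY_F M (le_refl n) {T}
  have hAT : ∀ ω ∈ A, M.Y n ω = T := fun ω hω => hω.2
  by_cases hact : active l m v.1
  · by_cases hw2 : w.2 = v.2 + 1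
    · have hseteq : A ∩ {ω | SP M l m (n+1) ω = w}
          = A ∩ {ω | (M.Y (n+1) ω).card = w.1} := by
        ext ω
        simp only [Set.mem_inter_iff, Set.mem_setOf_eq, and_congr_right_iff]
        intro hωA
        have hv : SP M l m n ω = v := hωA.1
        have hact' : active l m (SP M l m n ω).1 := by rw [hv]; exact hact
        rw [SP_succ_active M l m hact', hv, Prod.ext_iff]
        simp [hw2]
      rw [hseteq, step_dist M hs hK n A hAF T hAT w.1]
      rw [coef, if_pos hact, if_pos hw2]
      by_cases hemp : A = ∅
      · rw [hemp]; simp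
      · obtain ⟨ω, hω⟩ := Set.nonempty_iff_ne_empty.2 hemp
        have h1 : SP M l m n ω = v := hω.1
        have h2 : M.Y n ω = T := hω.2
        have hact' : active l m (SP M l m n ω).1 := by rw [h1]; exact hact
        have h3 := SP_fst_eq M l m n ω hact'
        rw [h1, h2] at h3
        rw [h3]
    · have hseteq : A ∩ {ω | SP M l m (n+1) ω = w} = ∅ := by
        ext ω
        simp only [Set.mem_inter_iff, Set.mem_setOf_eq, Set.mem_empty_iff_false,
          iff_false, not_and]
        intro hωA hw
        have hv : SP M l m n ω = v := hωA.1
        have hact' : active l m (SP M l m n ω).1 := by rw [hv]; exact hact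
        rw [SP_succ_active M l m hact', hv] at hw
        exact hw2 (by rw [← hw])
      rw [hseteq, coef, if_pos hact, if_neg hw2]
      simp
  · by_cases hwv : w = v
    · have hseteq : A ∩ {ω | SP M l m (n+1) ω = w} = A := by
        ext ω
        simp only [Set.mem_inter_iff, Set.mem_setOf_eq, and_iff_left_iff_imp]
        intro hωA
        have hv : SP M l m n ω = v := hωA.1
        have hna : ¬ active l m (SP M l m n ω).1 := by rw [hv]; exact hact
        rw [SP_succ_inactive M l m hna, hv, hwv]
      rw [hseteq, coef, if_neg hact, if_pos hwv, one_mul]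
    · have hseteq : A ∩ {ω | SP M l m (n+1) ω = w} = ∅ := by
        ext ω
        simp only [Set.mem_inter_iff, Set.mem_setOf_eq, Set.mem_empty_iff_false,
          iff_false, not_and]
        intro hωA hw
        have hv : SP M l m n ω = v := hωA.1
        have hna : ¬ active l m (SP M l m n ω).1 := by rw [hv]; exact hact
        rw [SP_succ_inactive M l m hna, hv] at hw
        exact hwv hw.symm
      rw [hseteq, coef, if_neg hact, if_neg hwv]
      simp

lemma Rr_mono (n : ℕ) : Rr K n ⊆ Rr K (n+1) := by
  apply Finset.product_subset_product (le_refl _)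
  intro c hc
  rw [Finset.mem_range] at hc ⊢
  omega

lemma sum_coef {n : ℕ} (v : ℕ × ℕ) (hv : v ∈ Rr K n) (u : ℕ × ℕ → ℝ) :
    ∑ w ∈ Rr K (n+1), u w * coef K s l m v w = Qop K s l m u v := by
  classical
  have hv2 : v.2 < n + 1 := by
    rw [Rr, Finset.mem_product, Finset.mem_range, Finset.mem_range] at hv
    exact hv.2
  by_cases hact : active l m v.1
  · rw [Qop, if_pos hact, Rr, Finset.sum_product]
    apply Finset.sum_congr rfl
    intro x _
    have hc : ∀ c ∈ Finset.range (n+1+1), u (x, c) * coef K s l m v (x, c)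
        = if c = v.2 + 1 then ptrans K s v.1 x * u (x, v.2 + 1) else 0 := by
      intro c _
      rw [coef, if_pos hact]
      by_cases hcv : c = v.2 + 1
      · rw [if_pos hcv]
        have : ((x, c) : ℕ × ℕ).2 = v.2 + 1 := hcv
        rw [if_pos this, hcv, mul_comm]
      · rw [if_neg hcv]
        have : ¬ (((x, c) : ℕ × ℕ).2 = v.2 + 1) := hcv
        rw [if_neg this, mul_zero]
    rw [Finset.sum_congr rfl hc, Finset.sum_ite_eq' (Finset.range (n+1+1)) (v.2+1)
      (fun _ => ptrans K s v.1 x * u (x, v.2 + 1))]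
    rw [if_pos (Finset.mem_range.2 (by omega))]
  · rw [Qop, if_neg hact]
    have hterm : ∀ w ∈ Rr K (n+1), u w * coef K s l m v w
        = if w = v then u w else 0 := by
      intro w _
      rw [coef, if_neg hact]
      by_cases hwv : w = v
      · rw [if_pos hwv, if_pos hwv, mul_one]
      · rw [if_neg hwv, if_neg hwv, mul_zero]
    rw [Finset.sum_congr rfl hterm, Finset.sum_ite_eq' (Rr K (n+1)) v u]
    rw [if_pos (Rr_mono n hv)]

lemma ee_succ (hs : 0 < s) (hK : 0 < K) (n : ℕ) (u : ℕ × ℕ → ℝ) :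
    ee M l m (n+1) u = ee M l m n (Qop K s l m u) := by
  classical
  haveI : IsProbabilityMeasure M.P := M.isProb
  have hw : ∀ w : ℕ × ℕ, (M.P {ω | SP M l m (n+1) ω = w}).toReal
      = ∑ v ∈ Rr K n, coef K s l m v w * (M.P {ω | SP M l m n ω = v}).toReal := by
    intro w
    rw [measure_partition_SP M l m {ω | SP M l m (n+1) ω = w}
      ((F_le_ambient M (n+1)) _ (measSP M l m (n+1) w)) n]
    apply Finset.sum_congr rfl
    intro v _
    have hmv : MeasurableSet {ω | SP M l m n ω = v} :=
      (F_le_ambient M n) _ (measSP M l m n v)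
    have hmw : MeasurableSet {ω | SP M l m (n+1) ω = w} :=
      (F_le_ambient M (n+1)) _ (measSP M l m (n+1) w)
    rw [measure_partition_Y M ({ω | SP M l m n ω = v} ∩ {ω | SP M l m (n+1) ω = w})
      (hmv.inter hmw) n]
    have hre : ∀ T : Finset (Fin K),
        ({ω | SP M l m n ω = v} ∩ {ω | SP M l m (n+1) ω = w}) ∩ M.Y n ⁻¹' {T}
        = ({ω | SP M l m n ω = v} ∩ M.Y n ⁻¹' {T}) ∩ {ω | SP M l m (n+1) ω = w} :=
      fun T => Set.inter_right_comm _ _ _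
    rw [Finset.sum_congr rfl (fun T _ => by rw [hre T, key2 M l m hs hK n v T w]),
      ← Finset.mul_sum,
      ← measure_partition_Y M {ω | SP M l m n ω = v} hmv n]
  rw [ee, Finset.sum_congr rfl (fun w _ => by rw [hw w])]
  have hswap : ∑ w ∈ Rr K (n+1), u w *
      (∑ v ∈ Rr K n, coef K s l m v w * (M.P {ω | SP M l m n ω = v}).toReal)
      = ∑ v ∈ Rr K n, (∑ w ∈ Rr K (n+1), u w * coef K s l m v w)
          * (M.P {ω | SP M l m n ω = v}).toReal := by
    rw [Finset.sum_congr rfl (fun w _ => Finset.mul_sum _ _ _), Finset.sum_comm]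
    apply Finset.sum_congr rfl
    intro v _
    rw [Finset.sum_mul]
    apply Finset.sum_congr rfl
    intro w _
    ring
  rw [hswap, ee]
  exact Finset.sum_congr rfl (fun v hv => by rw [sum_coef l m v hv u])

end Recursion


section Mart

variable {K : ℕ} {s : ℝ}

lemma sum_ptrans (hs : 0 < s) {t : ℕ} (ht1 : 1 ≤ t) (htK : t + 1 ≤ K) (f : ℕ → ℝ) :
    ∑ x ∈ Finset.range (K+1), ptrans K s t x * f x
      = pdn K s t * f (t-1) + (1 - pup K s t - pdn K s t) * f t + pup K s t * f (t+1) := by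
  classical
  have hsub : ({t-1, t, t+1} : Finset ℕ) ⊆ Finset.range (K+1) := by
    intro x hx
    simp only [Finset.mem_insert, Finset.mem_singleton] at hx
    rw [Finset.mem_range]
    omega
  rw [← Finset.sum_subset hsub (fun x _ hx => ?_)]
  · have h1 : (t : ℕ) - 1 ∉ ({t, t+1} : Finset ℕ) := by
      simp only [Finset.mem_insert, Finset.mem_singleton]; omega
    have h2 : (t : ℕ) ∉ ({t+1} : Finset ℕ) := by
      simp only [Finset.mem_singleton]; omega
    rw [Finset.sum_insert h1, Finset.sum_insert h2, Finset.sum_singleton]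
    have e1 : ptrans K s t (t-1) = pdn K s t := by
      rw [ptrans, if_neg (by omega), if_pos (by omega)]
    have e2 : ptrans K s t t = 1 - pup K s t - pdn K s t := by
      rw [ptrans, if_neg (by omega), if_neg (by omega), if_pos rfl]
    have e3 : ptrans K s t (t+1) = pup K s t := by
      rw [ptrans, if_pos rfl]
    rw [e1, e2, e3]
    ring
  · have hx' : ¬ (x = t + 1) ∧ ¬ (t = x + 1) ∧ ¬ (x = t) := by
      simp only [Finset.mem_insert, Finset.mem_singleton] at hx
      omega
    rw [ptrans, if_neg hx'.1, if_neg hx'.2.1, if_neg hx'.2.2, zero_mul]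

lemma mart1 (hs : 0 < s) {t : ℕ} (ht1 : 1 ≤ t) :
    pdn K s t * ((1+s)⁻¹)^(t-1) + (1 - pup K s t - pdn K s t) * ((1+s)⁻¹)^t
      + pup K s t * ((1+s)⁻¹)^(t+1) = ((1+s)⁻¹:ℝ)^t := by
  have hs1 : (1:ℝ) + s ≠ 0 := by linarith
  have hl : ((1+s):ℝ) * (1+s)⁻¹ = 1 := mul_inv_cancel₀ hs1
  have e1 : (((1+s):ℝ)⁻¹)^(t-1) = (1+s) * ((1+s)⁻¹)^t := by
    have ht' : t - 1 + 1 = t := by omega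
    calc (((1+s):ℝ)⁻¹)^(t-1) = ((1+s)⁻¹)^(t-1) * ((1+s) * (1+s)⁻¹) := by rw [hl, mul_one]
    _ = (1+s) * (((1+s)⁻¹)^(t-1) * (1+s)⁻¹) := by ring
    _ = (1+s) * ((1+s)⁻¹)^(t-1+1) := by rw [pow_succ]
    _ = (1+s) * ((1+s)⁻¹)^t := by rw [ht']
  rw [e1, pow_succ, pup_eq_pdn]
  linear_combination (pdn K s t * ((1+s)⁻¹:ℝ)^t) * hl

lemma mart2 (hs : 0 < s) {t : ℕ} (ht1 : 1 ≤ t) {q r : ℝ}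
    (hr1 : ((1+s):ℝ)⁻¹ < r) (hr2 : r < 1) (hpq : q ≤ pup K s t) :
    pdn K s t * r^(t-1) + (1 - pup K s t - pdn K s t) * r^t + pup K s t * r^(t+1)
      ≤ (1 - q*((1-r)*(1 - (r*(1+s))⁻¹))) * r^t := by
  have hs1 : (0:ℝ) < 1 + s := by linarith
  have hr0 : (0:ℝ) < r := lt_trans (by positivity) hr1
  have hrt : (0:ℝ) < r^t := by positivity
  have hprod : (1:ℝ) < r * (1+s) := by
    have h := mul_lt_mul_of_pos_right hr1 hs1
    rw [inv_mul_cancel₀ hs1.ne'] at h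
    exact h
  have hη : (0:ℝ) < (1-r)*(1 - (r*(1+s))⁻¹) := by
    apply mul_pos (by linarith)
    have h2 : (r*(1+s))⁻¹ < 1 := by
      rw [inv_lt_one_iff₀]
      right; exact hprod
    linarith
  have heq : pdn K s t * r^(t-1) + (1 - pup K s t - pdn K s t) * r^t + pup K s t * r^(t+1)
      = (1 - pup K s t * ((1-r)*(1 - (r*(1+s))⁻¹))) * r^t := by
    have e1 : r^(t-1) = r^t * r⁻¹ := by
      have ht' : t - 1 + 1 = t := by omega
      rw [← ht', pow_succ]
      field_simp
      simp
    have e2 : pdn K s t = pup K s t * (1+s)⁻¹ := by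
      rw [pup_eq_pdn]; field_simp
    rw [pow_succ, e2, e1]
    field_simp
    ring
  rw [heq]
  have hmul : q * ((1-r)*(1 - (r*(1+s))⁻¹)) ≤ pup K s t * ((1-r)*(1 - (r*(1+s))⁻¹)) :=
    mul_le_mul_of_nonneg_right hpq hη.le
  have : (1 - pup K s t * ((1-r)*(1 - (r*(1+s))⁻¹)))
      ≤ (1 - q*((1-r)*(1 - (r*(1+s))⁻¹))) := by linarith
  exact mul_le_mul_of_nonneg_right this hrt.le

end Mart


section MasterSec

variable {Ω : Type} [MeasurableSpace Ω] {K : ℕ} {s : ℝ}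

lemma ee_mono (M : MoranModel K s Ω) (l m n : ℕ) {u u' : ℕ × ℕ → ℝ}
    (h : ∀ v ∈ Rr K n, u v ≤ u' v) : ee M l m n u ≤ ee M l m n u' :=
  Finset.sum_le_sum fun v hv => mul_le_mul_of_nonneg_right (h v hv) ENNReal.toReal_nonneg

lemma ee_zero (M : MoranModel K s Ω) (l m : ℕ) {x0 : ℕ}
    (hx0 : ∀ ω, (M.Y 0 ω).card = x0) (hx0K : x0 ≤ K) (u : ℕ × ℕ → ℝ) :
    ee M l m 0 u = u (x0, 0) := by
  classical
  haveI : IsProbabilityMeasure M.P := M.isProb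
  rw [ee]
  have hAv : ∀ v : ℕ × ℕ, {ω : Ω | SP M l m 0 ω = v}
      = if v = (x0, 0) then Set.univ else ∅ := by
    intro v
    by_cases h : v = (x0, 0)
    · rw [if_pos h]; ext ω
      simp only [Set.mem_setOf_eq, Set.mem_univ, iff_true, h]
      show ((M.Y 0 ω).card, 0) = (x0, 0)
      rw [hx0 ω]
    · rw [if_neg h]; ext ω
      simp only [Set.mem_setOf_eq, Set.mem_empty_iff_false, iff_false]
      intro hc
      apply h
      rw [← hc]
      show ((M.Y 0 ω).card, 0) = (x0, 0)
      rw [hx0 ω]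
  have hterm : ∀ v ∈ Rr K 0, u v * (M.P {ω | SP M l m 0 ω = v}).toReal
      = if v = (x0, 0) then u v else 0 := by
    intro v _
    rw [hAv v]
    by_cases h : v = (x0, 0)
    · rw [if_pos h, if_pos h]; simp
    · rw [if_neg h, if_neg h]; simp
  rw [Finset.sum_congr rfl hterm, Finset.sum_ite_eq' (Rr K 0) ((x0, 0) : ℕ × ℕ) u,
    if_pos]
  rw [Rr, Finset.mem_product, Finset.mem_range, Finset.mem_range]
  exact ⟨Nat.lt_succ_of_le hx0K, Nat.lt_succ_of_le (le_refl 0)⟩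

lemma ee_le_init (M : MoranModel K s Ω) (l m : ℕ) (hs : 0 < s) (hK : 0 < K) {x0 : ℕ}
    (hx0 : ∀ ω, (M.Y 0 ω).card = x0) (hx0K : x0 ≤ K) (u : ℕ × ℕ → ℝ)
    (hQ : ∀ v : ℕ × ℕ, v.1 ≤ K → Qop K s l m u v ≤ u v) (n : ℕ) :
    ee M l m n u ≤ u (x0, 0) := by
  induction n with
  | zero => rw [ee_zero M l m hx0 hx0K u]
  | succ n ih =>
    rw [ee_succ M l m hs hK n u]
    refine le_trans (ee_mono M l m n (fun v hv => ?_)) ih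
    apply hQ
    rw [Rr, Finset.mem_product, Finset.mem_range, Finset.mem_range] at hv
    omega

lemma Qop_u1 (l m : ℕ) (hs : 0 < s) (hK : 0 < K) (hmK : m ≤ K) :
    ∀ v : ℕ × ℕ, v.1 ≤ K →
      Qop K s l m (fun v : ℕ × ℕ => (((1+s):ℝ)⁻¹) ^ v.1) v ≤ (((1+s):ℝ)⁻¹) ^ v.1 := by
  intro v _
  rw [Qop]
  by_cases hact : active l m v.1
  · rw [if_pos hact]
    have ht1 : 1 ≤ v.1 := by have := hact.1; omega
    have htK : v.1 + 1 ≤ K := by have := hact.2; omega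
    show (∑ x ∈ Finset.range (K+1), ptrans K s v.1 x * (((1+s):ℝ)⁻¹) ^ x)
        ≤ (((1+s):ℝ)⁻¹) ^ v.1
    rw [sum_ptrans hs ht1 htK (fun x => (((1+s):ℝ)⁻¹) ^ x)]
    exact le_of_eq (mart1 hs ht1)
  · rw [if_neg hact]

lemma Qop_u2 (l m : ℕ) (hs : 0 < s) (hK : 0 < K) (hmK : m ≤ K) {q r : ℝ}
    (hq0 : 0 < q) (hq1 : q ≤ 1) (hr1 : ((1+s):ℝ)⁻¹ < r) (hr2 : r < 1)
    (hpq : ∀ x : ℕ, l < x → x < m → q ≤ pup K s x) :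
    ∀ v : ℕ × ℕ, v.1 ≤ K →
      Qop K s l m (fun v : ℕ × ℕ =>
          r ^ v.1 * ((1 - q*((1-r)*(1 - (r*(1+s))⁻¹)))⁻¹) ^ v.2) v
        ≤ r ^ v.1 * ((1 - q*((1-r)*(1 - (r*(1+s))⁻¹)))⁻¹) ^ v.2 := by
  have hs1 : (0:ℝ) < 1 + s := by linarith
  have hr0 : (0:ℝ) < r := lt_trans (by positivity) hr1
  have hprod : (1:ℝ) < r * (1+s) := by
    have h := mul_lt_mul_of_pos_right hr1 hs1
    rw [inv_mul_cancel₀ hs1.ne'] at h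
    exact h
  have hinv1 : (r*(1+s))⁻¹ < 1 := by
    rw [inv_lt_one_iff₀]; right; exact hprod
  have hinv0 : (0:ℝ) < (r*(1+s))⁻¹ := by positivity
  have hη0 : (0:ℝ) < (1-r)*(1 - (r*(1+s))⁻¹) := by
    apply mul_pos (by linarith) (by linarith)
  have hη1 : (1-r)*(1 - (r*(1+s))⁻¹) < 1 := by nlinarith
  have hρ0 : (0:ℝ) < 1 - q*((1-r)*(1 - (r*(1+s))⁻¹)) := by nlinarith
  intro v _
  rw [Qop]
  by_cases hact : active l m v.1
  · rw [if_pos hact]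
    have ht1 : 1 ≤ v.1 := by have := hact.1; omega
    have htK : v.1 + 1 ≤ K := by have := hact.2; omega
    show (∑ x ∈ Finset.range (K+1), ptrans K s v.1 x *
        (r ^ x * ((1 - q*((1-r)*(1 - (r*(1+s))⁻¹)))⁻¹) ^ (v.2 + 1)))
        ≤ r ^ v.1 * ((1 - q*((1-r)*(1 - (r*(1+s))⁻¹)))⁻¹) ^ v.2
    rw [sum_ptrans hs ht1 htK (fun x =>
      r ^ x * ((1 - q*((1-r)*(1 - (r*(1+s))⁻¹)))⁻¹) ^ (v.2 + 1))]
    set ρ : ℝ := 1 - q*((1-r)*(1 - (r*(1+s))⁻¹)) with hρ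
    have hmm : (0:ℝ) ≤ (ρ⁻¹) ^ (v.2 + 1) := by positivity
    have e : pdn K s v.1 * (r ^ (v.1-1) * (ρ⁻¹) ^ (v.2+1))
        + (1 - pup K s v.1 - pdn K s v.1) * (r ^ v.1 * (ρ⁻¹) ^ (v.2+1))
        + pup K s v.1 * (r ^ (v.1+1) * (ρ⁻¹) ^ (v.2+1))
        = (pdn K s v.1 * r ^ (v.1-1) + (1 - pup K s v.1 - pdn K s v.1) * r ^ v.1
            + pup K s v.1 * r ^ (v.1+1)) * (ρ⁻¹) ^ (v.2+1) := by ring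
    rw [e]
    have hbound := mart2 (K := K) hs ht1 hr1 hr2 (hpq v.1 hact.1 hact.2)
    rw [← hρ] at hbound
    refine le_trans (mul_le_mul_of_nonneg_right hbound hmm) (le_of_eq ?_)
    rw [pow_succ]
    field_simp
  · rw [if_neg hact]

theorem master (M : MoranModel K s Ω)
    (hs : 0 < s) (hK : 0 < K) {l m x0 : ℕ} {q r : ℝ}
    (hx0 : ∀ ω, (M.Y 0 ω).card = x0)
    (hlx0 : l ≤ x0) (hx0m : x0 ≤ m) (hmK : m ≤ K)
    (hq0 : 0 < q) (hq1 : q ≤ 1)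
    (hr1 : ((1+s):ℝ)⁻¹ < r) (hr2 : r < 1)
    (hpq : ∀ x : ℕ, l < x → x < m → q ≤ pup K s x)
    (nstar : ℕ) :
    (M.P {ω | ∀ kk ≤ nstar, (M.Y kk ω).card ≠ m}).toReal
      ≤ (((1+s):ℝ)⁻¹) ^ (x0 - l)
        + (r⁻¹) ^ (m - x0) * (1 - q*((1-r)*(1 - (r*(1+s))⁻¹))) ^ nstar := by
  classical
  haveI : IsProbabilityMeasure M.P := M.isProb
  have hs1 : (0:ℝ) < 1 + s := by linarith
  have hlam0 : (0:ℝ) < ((1+s):ℝ)⁻¹ := by positivity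
  have hlam1 : ((1+s):ℝ)⁻¹ < 1 := by
    rw [inv_lt_one_iff₀]; right; linarith
  have hr0 : (0:ℝ) < r := lt_trans hlam0 hr1
  have hprod : (1:ℝ) < r * (1+s) := by
    have h := mul_lt_mul_of_pos_right hr1 hs1
    rw [inv_mul_cancel₀ hs1.ne'] at h
    exact h
  have hinv1 : (r*(1+s))⁻¹ < 1 := by
    rw [inv_lt_one_iff₀]; right; exact hprod
  have hinv0 : (0:ℝ) < (r*(1+s))⁻¹ := by positivity
  have hη0 : (0:ℝ) < (1-r)*(1 - (r*(1+s))⁻¹) := by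
    apply mul_pos (by linarith) (by linarith)
  have hη1 : (1-r)*(1 - (r*(1+s))⁻¹) < 1 := by nlinarith
  have hρ0 : (0:ℝ) < 1 - q*((1-r)*(1 - (r*(1+s))⁻¹)) := by nlinarith
  set lam : ℝ := ((1+s):ℝ)⁻¹ with hlam
  set ρ : ℝ := 1 - q*((1-r)*(1 - (r*(1+s))⁻¹)) with hρ
  set badL : Finset (ℕ × ℕ) := (Rr K nstar).filter (fun v => v.1 ≤ l) with hbadL
  set badA : Finset (ℕ × ℕ) :=
    (Rr K nstar).filter (fun v => active l m v.1 ∧ v.2 = nstar) with hbadA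
  have hsub : {ω : Ω | ∀ kk ≤ nstar, (M.Y kk ω).card ≠ m}
      ⊆ (⋃ v ∈ badL, {ω : Ω | SP M l m nstar ω = v})
        ∪ (⋃ v ∈ badA, {ω : Ω | SP M l m nstar ω = v}) := by
    intro ω hω
    have hvR := SP_mem_Rr M l m nstar ω
    have hvm : (SP M l m nstar ω).1 ≤ m :=
      SP_fst_le M l m (fun ω' => by rw [hx0 ω']; exact hx0m) nstar ω
    have hvne : (SP M l m nstar ω).1 ≠ m := by
      obtain ⟨j, hj, hy⟩ := SP_exists M l m nstar ω
      rw [hy]; exact hω j hj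
    by_cases hl : (SP M l m nstar ω).1 ≤ l
    · left
      have hmem : SP M l m nstar ω ∈ badL := by
        rw [hbadL, Finset.mem_filter]; exact ⟨hvR, hl⟩
      exact Set.mem_biUnion hmem rfl
    · right
      have hact : active l m (SP M l m nstar ω).1 := ⟨by omega, by omega⟩
      have hmem : SP M l m nstar ω ∈ badA := by
        rw [hbadA, Finset.mem_filter]
        exact ⟨hvR, hact, SP_snd_eq M l m nstar ω hact⟩
      exact Set.mem_biUnion hmem rfl
  have hmAv : ∀ v : ℕ × ℕ, MeasurableSet {ω : Ω | SP M l m nstar ω = v} :=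
    fun v => (F_le_ambient M nstar) _ (measSP M l m nstar v)
  have hsum : ∀ b : Finset (ℕ × ℕ),
      (M.P (⋃ v ∈ b, {ω : Ω | SP M l m nstar ω = v})).toReal
        = ∑ v ∈ b, (M.P {ω : Ω | SP M l m nstar ω = v}).toReal := by
    intro b
    have hdisj : (↑b : Set (ℕ × ℕ)).PairwiseDisjoint
        (fun v => {ω : Ω | SP M l m nstar ω = v}) := by
      intro v _ v' _ hne
      refine Set.disjoint_left.2 ?_
      intro ω h1 h2
      simp only [Set.mem_setOf_eq] at h1 h2
      exact hne (by rw [← h1, ← h2])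
    rw [measure_biUnion_finset hdisj (fun v _ => hmAv v),
      ENNReal.toReal_sum (fun v _ => measure_ne_top _ _)]
  have hx0K : x0 ≤ K := le_trans hx0m hmK
  have hu1 : ee M l m nstar (fun v : ℕ × ℕ => lam ^ v.1) ≤ lam ^ x0 :=
    ee_le_init M l m hs hK hx0 hx0K _ (Qop_u1 l m hs hK hmK) nstar
  have hu2 : ee M l m nstar (fun v : ℕ × ℕ => r ^ v.1 * (ρ⁻¹) ^ v.2) ≤ r ^ x0 := by
    have h := ee_le_init M l m hs hK hx0 hx0K
      (fun v : ℕ × ℕ => r ^ v.1 * (ρ⁻¹) ^ v.2)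
      (Qop_u2 l m hs hK hmK hq0 hq1 hr1 hr2 hpq) nstar
    simpa using h
  have hlow : (M.P (⋃ v ∈ badL, {ω : Ω | SP M l m nstar ω = v})).toReal
      ≤ lam ^ (x0 - l) := by
    rw [hsum badL]
    have hLe : ∀ v ∈ badL, (M.P {ω : Ω | SP M l m nstar ω = v}).toReal
        ≤ (lam ^ l)⁻¹ * (lam ^ v.1 * (M.P {ω : Ω | SP M l m nstar ω = v}).toReal) := by
      intro v hv
      rw [hbadL, Finset.mem_filter] at hv
      have h1 : lam ^ l ≤ lam ^ v.1 := pow_le_pow_of_le_one hlam0.le hlam1.le hv.2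
      have hP : (0:ℝ) ≤ (M.P {ω : Ω | SP M l m nstar ω = v}).toReal :=
        ENNReal.toReal_nonneg
      have h2 : (lam ^ l)⁻¹ * (lam ^ l * (M.P {ω : Ω | SP M l m nstar ω = v}).toReal)
          ≤ (lam ^ l)⁻¹ * (lam ^ v.1 * (M.P {ω : Ω | SP M l m nstar ω = v}).toReal) := by
        apply mul_le_mul_of_nonneg_left (mul_le_mul_of_nonneg_right h1 hP)
        positivity
      refine le_trans (le_of_eq ?_) h2
      field_simp
    calc ∑ v ∈ badL, (M.P {ω : Ω | SP M l m nstar ω = v}).toReal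
          ≤ ∑ v ∈ badL, (lam ^ l)⁻¹
              * (lam ^ v.1 * (M.P {ω : Ω | SP M l m nstar ω = v}).toReal) :=
          Finset.sum_le_sum hLe
      _ = (lam ^ l)⁻¹ * ∑ v ∈ badL,
            lam ^ v.1 * (M.P {ω : Ω | SP M l m nstar ω = v}).toReal := by
          rw [Finset.mul_sum]
      _ ≤ (lam ^ l)⁻¹ * ∑ v ∈ Rr K nstar,
            lam ^ v.1 * (M.P {ω : Ω | SP M l m nstar ω = v}).toReal := by
          apply mul_le_mul_of_nonneg_left ?_ (by positivity)
          apply Finset.sum_le_sum_of_subset_of_nonneg (Finset.filter_subset _ _)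
          intro v _ _
          exact mul_nonneg (by positivity) ENNReal.toReal_nonneg
      _ ≤ (lam ^ l)⁻¹ * lam ^ x0 := mul_le_mul_of_nonneg_left hu1 (by positivity)
      _ = lam ^ (x0 - l) := by
          have e : lam ^ x0 = lam ^ (x0 - l) * lam ^ l := by
            rw [← pow_add]; congr 1; omega
          rw [e]
          field_simp
  have hactb : (M.P (⋃ v ∈ badA, {ω : Ω | SP M l m nstar ω = v})).toReal
      ≤ (r⁻¹) ^ (m - x0) * ρ ^ nstar := by
    rw [hsum badA]
    have hc0 : (0:ℝ) < r ^ m * (ρ⁻¹) ^ nstar := by positivity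
    have hLe : ∀ v ∈ badA, (M.P {ω : Ω | SP M l m nstar ω = v}).toReal
        ≤ (r ^ m * (ρ⁻¹) ^ nstar)⁻¹
            * (r ^ v.1 * (ρ⁻¹) ^ v.2 * (M.P {ω : Ω | SP M l m nstar ω = v}).toReal) := by
      intro v hv
      rw [hbadA, Finset.mem_filter] at hv
      have hv1m : v.1 ≤ m := le_of_lt hv.2.1.2
      have h1 : r ^ m ≤ r ^ v.1 := pow_le_pow_of_le_one hr0.le hr2.le hv1m
      have h1' : r ^ m * (ρ⁻¹) ^ nstar ≤ r ^ v.1 * (ρ⁻¹) ^ v.2 := by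
        rw [hv.2.2]
        exact mul_le_mul_of_nonneg_right h1 (by positivity)
      have hP : (0:ℝ) ≤ (M.P {ω : Ω | SP M l m nstar ω = v}).toReal :=
        ENNReal.toReal_nonneg
      have h2 : (r ^ m * (ρ⁻¹) ^ nstar)⁻¹
            * ((r ^ m * (ρ⁻¹) ^ nstar) * (M.P {ω : Ω | SP M l m nstar ω = v}).toReal)
          ≤ (r ^ m * (ρ⁻¹) ^ nstar)⁻¹
            * (r ^ v.1 * (ρ⁻¹) ^ v.2 * (M.P {ω : Ω | SP M l m nstar ω = v}).toReal) := by
        apply mul_le_mul_of_nonneg_left (mul_le_mul_of_nonneg_right h1' hP)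
        positivity
      refine le_trans (le_of_eq ?_) h2
      field_simp
    calc ∑ v ∈ badA, (M.P {ω : Ω | SP M l m nstar ω = v}).toReal
        ≤ ∑ v ∈ badA, (r ^ m * (ρ⁻¹) ^ nstar)⁻¹
            * (r ^ v.1 * (ρ⁻¹) ^ v.2 * (M.P {ω : Ω | SP M l m nstar ω = v}).toReal) :=
        Finset.sum_le_sum hLe
    _ = (r ^ m * (ρ⁻¹) ^ nstar)⁻¹ * ∑ v ∈ badA,
          r ^ v.1 * (ρ⁻¹) ^ v.2 * (M.P {ω : Ω | SP M l m nstar ω = v}).toReal := by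
        rw [Finset.mul_sum]
    _ ≤ (r ^ m * (ρ⁻¹) ^ nstar)⁻¹ * ∑ v ∈ Rr K nstar,
          r ^ v.1 * (ρ⁻¹) ^ v.2 * (M.P {ω : Ω | SP M l m nstar ω = v}).toReal := by
        apply mul_le_mul_of_nonneg_left ?_ (by positivity)
        apply Finset.sum_le_sum_of_subset_of_nonneg (Finset.filter_subset _ _)
        intro v _ _
        exact mul_nonneg (by positivity) ENNReal.toReal_nonneg
    _ ≤ (r ^ m * (ρ⁻¹) ^ nstar)⁻¹ * r ^ x0 :=
        mul_le_mul_of_nonneg_left hu2 (by positivity)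
    _ = (r⁻¹) ^ (m - x0) * ρ ^ nstar := by
        have e : r ^ m = r ^ (m - x0) * r ^ x0 := by
          rw [← pow_add]; congr 1; omega
        rw [e, inv_pow]
        rw [mul_inv, mul_inv, inv_inv]
        field_simp
        rw [← mul_pow, mul_one_div_cancel hr0.ne', one_pow]
  have hmono : M.P {ω : Ω | ∀ kk ≤ nstar, (M.Y kk ω).card ≠ m}
      ≤ M.P (⋃ v ∈ badL, {ω : Ω | SP M l m nstar ω = v})
        + M.P (⋃ v ∈ badA, {ω : Ω | SP M l m nstar ω = v}) :=
    le_trans (measure_mono hsub) (measure_union_le _ _)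
  have hfin : M.P (⋃ v ∈ badL, {ω : Ω | SP M l m nstar ω = v})
      + M.P (⋃ v ∈ badA, {ω : Ω | SP M l m nstar ω = v}) ≠ ⊤ :=
    ENNReal.add_ne_top.2 ⟨measure_ne_top _ _, measure_ne_top _ _⟩
  calc (M.P {ω : Ω | ∀ kk ≤ nstar, (M.Y kk ω).card ≠ m}).toReal
      ≤ (M.P (⋃ v ∈ badL, {ω : Ω | SP M l m nstar ω = v})
        + M.P (⋃ v ∈ badA, {ω : Ω | SP M l m nstar ω = v})).toReal :=
      ENNReal.toReal_mono hfin hmono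
  _ = (M.P (⋃ v ∈ badL, {ω : Ω | SP M l m nstar ω = v})).toReal
      + (M.P (⋃ v ∈ badA, {ω : Ω | SP M l m nstar ω = v})).toReal :=
      ENNReal.toReal_add (measure_ne_top _ _) (measure_ne_top _ _)
  _ ≤ lam ^ (x0 - l) + (r⁻¹) ^ (m - x0) * ρ ^ nstar := add_le_add hlow hactb

end MasterSec

end

end MoranAux

set_option maxHeartbeats 1000000 in
open MoranAux in
/-- Let `0 < a ≤ b < 1` and suppose that the initial number of advantaged individuals is
`⌊aN⌋`.  Then there is a constant `C > 0` (not depending on `N`) such that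
`ℙ(T_{⌊bN⌋} > C N) → 0` as `N → ∞`.  The event `T_{⌊bN⌋} > C N` is expressed as: the level
`⌊bN⌋` is not hit at any time `n ≤ C N`.  (The population size is written `N + 2` so that
it ranges over the integers `≥ 2`.) -/
theorem moran_hitting_time_linear_bound
    (s a b : ℝ) (hs : 0 < s) (ha : 0 < a) (hab : a ≤ b) (hb : b < 1)
    (Ω : ℕ → Type) [∀ N, MeasurableSpace (Ω N)]
    (M : ∀ N : ℕ, MoranModel (N + 2) s (Ω N))
    (hY0 : ∀ N ω, ((M N).Y 0 ω).card = ⌊a * ((N : ℝ) + 2)⌋₊) :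
    ∃ C : ℝ, 0 < C ∧
      Tendsto (fun N : ℕ =>
          (M N).P {ω | ∀ n : ℕ, (n : ℝ) ≤ C * ((N : ℝ) + 2) →
            ((M N).Y n ω).card ≠ ⌊b * ((N : ℝ) + 2)⌋₊})
        atTop (nhds 0) := by
  classical
  have hs1 : (0:ℝ) < 1 + s := by linarith
  have hlam0 : (0:ℝ) < (1+s)⁻¹ := by positivity
  have hlam1 : ((1+s):ℝ)⁻¹ < 1 := by
    rw [inv_lt_one_iff₀]; right; linarith
  set r : ℝ := (((1:ℝ)+s)⁻¹ + 1)/2 with hrdef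
  have hr1 : ((1+s):ℝ)⁻¹ < r := by rw [hrdef]; linarith
  have hr2 : r < 1 := by rw [hrdef]; linarith
  have hr0 : (0:ℝ) < r := lt_trans hlam0 hr1
  set q : ℝ := a*(1-b)/2 with hqdef
  have hb0 : (0:ℝ) < 1 - b := by linarith
  have hq0 : 0 < q := by rw [hqdef]; positivity
  have hq1 : q ≤ 1 := by rw [hqdef]; nlinarith
  have hprod : (1:ℝ) < r * (1+s) := by
    have h := mul_lt_mul_of_pos_right hr1 hs1
    rw [inv_mul_cancel₀ hs1.ne'] at h
    exact h
  have hinv1 : (r*(1+s))⁻¹ < 1 := by rw [inv_lt_one_iff₀]; right; exact hprod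
  have hinv0 : (0:ℝ) < (r*(1+s))⁻¹ := by positivity
  have hη0 : (0:ℝ) < (1-r)*(1 - (r*(1+s))⁻¹) := mul_pos (by linarith) (by linarith)
  have hη1 : (1-r)*(1 - (r*(1+s))⁻¹) < 1 := by nlinarith
  set ρ : ℝ := 1 - q*((1-r)*(1 - (r*(1+s))⁻¹)) with hρdef
  have hρ0 : (0:ℝ) < ρ := by rw [hρdef]; nlinarith
  have hρ1 : ρ < 1 := by rw [hρdef]; nlinarith
  set natC : ℕ := ⌈Real.log r⁻¹ / Real.log ρ⁻¹⌉₊ + 1 with hnatC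
  have hlogρ : 0 < Real.log ρ⁻¹ := by
    rw [Real.log_inv]
    have := Real.log_neg hρ0 hρ1
    linarith
  have hCgt : Real.log r⁻¹ / Real.log ρ⁻¹ < (natC:ℝ) := by
    have h1 : Real.log r⁻¹ / Real.log ρ⁻¹ ≤ ((⌈Real.log r⁻¹ / Real.log ρ⁻¹⌉₊ : ℕ) : ℝ) :=
      Nat.le_ceil _
    have h2 : ((⌈Real.log r⁻¹ / Real.log ρ⁻¹⌉₊ : ℕ) : ℝ) < (natC : ℝ) := by
      rw [hnatC]; push_cast; linarith
    linarith
  have hρC : ρ ^ natC < r := by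
    have h1 : Real.log r⁻¹ < (natC:ℝ) * Real.log ρ⁻¹ := (div_lt_iff₀ hlogρ).1 hCgt
    have h2 : Real.log (ρ ^ natC) < Real.log r := by
      rw [Real.log_inv, Real.log_inv] at h1
      rw [Real.log_pow]
      linarith
    have h3 : ρ ^ natC = Real.exp (Real.log (ρ ^ natC)) :=
      (Real.exp_log (by positivity)).symm
    have h4 : r = Real.exp (Real.log r) := (Real.exp_log hr0).symm
    rw [h3, h4]
    exact Real.exp_lt_exp.2 h2
  set γ : ℝ := r⁻¹ * ρ ^ natC with hγdef
  have hγ0 : (0:ℝ) ≤ γ := by rw [hγdef]; positivity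
  have hγ1 : γ < 1 := by
    have h := mul_lt_mul_of_pos_left hρC (inv_pos.2 hr0)
    rw [inv_mul_cancel₀ hr0.ne'] at h
    rw [hγdef]
    exact h
  refine ⟨(natC : ℝ), by positivity, ?_⟩
  -- abbreviations
  set x0 : ℕ → ℕ := fun N => ⌊a * ((N:ℝ) + 2)⌋₊ with hx0def
  set mm : ℕ → ℕ := fun N => ⌊b * ((N:ℝ) + 2)⌋₊ with hmmdef
  -- per-N bound from the master estimate
  have key : ∀ N : ℕ,
      ((M N).P {ω | ∀ n : ℕ, (n : ℝ) ≤ (natC:ℝ) * ((N : ℝ) + 2) →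
        ((M N).Y n ω).card ≠ ⌊b * ((N : ℝ) + 2)⌋₊}).toReal
      ≤ (((1+s):ℝ)⁻¹) ^ (x0 N - x0 N / 2) + γ ^ (N+2) := by
    intro N
    have hKpos : 0 < N + 2 := by omega
    have hK2 : ((N+2:ℕ):ℝ) = (N:ℝ) + 2 := by push_cast; ring
    have hx0m : x0 N ≤ mm N := by
      apply Nat.floor_le_floor
      apply mul_le_mul_of_nonneg_right hab
      positivity
    have hmK : mm N ≤ N + 2 := by
      have : mm N < N + 2 := by
        rw [hmmdef]
        simp only []
        rw [Nat.floor_lt (mul_nonneg (by linarith) (by positivity))]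
        push_cast
        nlinarith
      omega
    have hpq : ∀ x : ℕ, x0 N / 2 < x → x < mm N → q ≤ pup (N+2) s x := by
      intro x hlx hxm
      have hxK : x ≤ N + 2 := by omega
      have hKr : (0:ℝ) < ((N+2:ℕ):ℝ) := by positivity
      have hD := Dd_pos hs hxK hKpos
      have hDle := Dd_le hs hxK
      have h2x : a * ((N:ℝ)+2) < 2 * (x:ℝ) := by
        have hn1 : x0 N + 1 ≤ 2 * x := by omega
        have hn2 : a * ((N:ℝ)+2) < (x0 N : ℝ) + 1 := by
          rw [hx0def]
          exact Nat.lt_floor_add_one _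
        have : ((x0 N : ℕ):ℝ) + 1 ≤ 2 * (x:ℝ) := by exact_mod_cast hn1
        linarith
      have hxb : (x:ℝ) < b * ((N:ℝ)+2) := by
        have h1 : (x:ℝ) < (mm N : ℝ) := by exact_mod_cast hxm
        have h2 : (mm N : ℝ) ≤ b * ((N:ℝ)+2) := by
          rw [hmmdef]
          exact Nat.floor_le (mul_nonneg (by linarith) (by positivity))
        linarith
      have hxKr : (x:ℝ) ≤ ((N+2:ℕ):ℝ) := by exact_mod_cast hxK
      unfold pup
      rw [le_div_iff₀ (by positivity)]
      have hstep : (a * ((N:ℝ)+2)/2) * ((1-b) * ((N:ℝ)+2)) ≤ (x:ℝ) * (((N+2:ℕ):ℝ) - x) := by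
        apply mul_le_mul (by linarith) (by rw [hK2]; nlinarith) (by nlinarith) (by positivity)
      calc q * (((N+2:ℕ):ℝ) * Dd (N+2) s x)
          ≤ q * (((N+2:ℕ):ℝ) * ((1+s) * ((N+2:ℕ):ℝ))) := by
            apply mul_le_mul_of_nonneg_left (mul_le_mul_of_nonneg_left hDle hKr.le) hq0.le
        _ = (1+s) * ((a * ((N:ℝ)+2)/2) * ((1-b) * ((N:ℝ)+2))) := by
            rw [hqdef, hK2]; ring
        _ ≤ (1+s) * ((x:ℝ) * (((N+2:ℕ):ℝ) - x)) := by
            apply mul_le_mul_of_nonneg_left hstep (by linarith)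
        _ = (x:ℝ) * ((1+s) * (((N+2:ℕ):ℝ) - x)) := by ring
    have hEvent : {ω | ∀ n : ℕ, (n : ℝ) ≤ (natC:ℝ) * ((N : ℝ) + 2) →
          ((M N).Y n ω).card ≠ ⌊b * ((N : ℝ) + 2)⌋₊}
        = {ω | ∀ kk ≤ natC * (N+2), ((M N).Y kk ω).card ≠ mm N} := by
      ext ω
      simp only [Set.mem_setOf_eq]
      have hcast : ∀ kk : ℕ, ((kk:ℝ) ≤ (natC:ℝ) * ((N:ℝ)+2)) ↔ kk ≤ natC * (N+2) := by
        intro kk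
        rw [← hK2, ← Nat.cast_mul, Nat.cast_le]
      constructor
      · intro h kk hkk
        exact h kk ((hcast kk).2 hkk)
      · intro h kk hkk
        exact h kk ((hcast kk).1 hkk)
    rw [hEvent]
    have hmaster := master (M N) hs hKpos (l := x0 N / 2) (m := mm N) (x0 := x0 N)
      (q := q) (r := r) (hY0 N) (Nat.div_le_self _ _) hx0m hmK hq0 hq1 hr1 hr2 hpq
      (natC * (N+2))
    refine le_trans hmaster (add_le_add le_rfl ?_)
    rw [← hρdef]
    -- (r⁻¹)^(mm N - x0 N) * ρ^(natC*(N+2)) ≤ γ^(N+2)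
    have h1 : (r⁻¹) ^ (mm N - x0 N) ≤ (r⁻¹) ^ (N+2) := by
      apply pow_le_pow_right₀
      · rw [le_inv_comm₀ (by norm_num) hr0]
        simpa using hr2.le
      · omega
    have h2 : ρ ^ (natC*(N+2)) = (ρ ^ natC) ^ (N+2) := by rw [pow_mul]
    calc (r⁻¹) ^ (mm N - x0 N) * ρ ^ (natC*(N+2))
        ≤ (r⁻¹) ^ (N+2) * ρ ^ (natC*(N+2)) := by
          apply mul_le_mul_of_nonneg_right h1 (by positivity)
      _ = γ ^ (N+2) := by rw [h2, hγdef, mul_pow]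
  -- the real bound tends to zero
  have hx0top : Tendsto (fun N => x0 N) atTop atTop := by
    rw [hx0def]
    have h1 : Tendsto (fun N : ℕ => a * ((N:ℝ) + 2)) atTop atTop := by
      apply Filter.Tendsto.const_mul_atTop ha
      apply tendsto_atTop_add_const_right
      exact tendsto_natCast_atTop_atTop
    exact (tendsto_nat_floor_atTop.comp h1)
  have hdtop : Tendsto (fun N => x0 N - x0 N / 2) atTop atTop := by
    rw [tendsto_atTop_atTop] at hx0top ⊢
    intro bb
    obtain ⟨i, hi⟩ := hx0top (2*bb + 2)
    exact ⟨i, fun N hN => by have := hi N hN; omega⟩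
  have hterm1 : Tendsto (fun N => (((1+s):ℝ)⁻¹) ^ (x0 N - x0 N / 2)) atTop (nhds 0) :=
    (tendsto_pow_atTop_nhds_zero_of_lt_one hlam0.le hlam1).comp hdtop
  have hterm2 : Tendsto (fun N : ℕ => γ ^ (N+2)) atTop (nhds 0) :=
    (tendsto_pow_atTop_nhds_zero_of_lt_one hγ0 hγ1).comp (tendsto_add_atTop_nat 2)
  have hg : Tendsto (fun N => (((1+s):ℝ)⁻¹) ^ (x0 N - x0 N / 2) + γ ^ (N+2))
      atTop (nhds 0) := by
    have := hterm1.add hterm2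
    simpa using this
  -- transfer to ℝ≥0∞
  have hle : ∀ N : ℕ, (M N).P {ω | ∀ n : ℕ, (n : ℝ) ≤ (natC:ℝ) * ((N : ℝ) + 2) →
        ((M N).Y n ω).card ≠ ⌊b * ((N : ℝ) + 2)⌋₊}
      ≤ ENNReal.ofReal ((((1+s):ℝ)⁻¹) ^ (x0 N - x0 N / 2) + γ ^ (N+2)) := by
    intro N
    haveI : IsProbabilityMeasure (M N).P := (M N).isProb
    rw [← ENNReal.ofReal_toReal (measure_ne_top ((M N).P) _)]
    exact ENNReal.ofReal_le_ofReal (key N)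
  have hofReal : Tendsto (fun N => ENNReal.ofReal
      ((((1+s):ℝ)⁻¹) ^ (x0 N - x0 N / 2) + γ ^ (N+2))) atTop (nhds 0) := by
    have := ENNReal.tendsto_ofReal hg
    simpa using this
  exact tendsto_of_tendsto_of_tendsto_of_le_of_le tendsto_const_nhds hofReal
    (fun N => zero_le) hle
end

section
/- In the biparental Moran model with viability selection, the rescaled triplet Z_n = (Y_n/N, U_n/N, V_n/N) satisfies, for every n ≥ 0: (a) ‖Z_{n+1} − Z_n‖ ≤ √3/N almost surely, and (b) 𝔼(Z_{n+1} − Z_n | ℱ_n) = (1/N) g(Z_n), where g(y,u,v) = ( s y(1−y)/(y+(1+s)(1−y)), u/2 + (u+v)y/2 − u/(y+(1+s)(1−y)), v/2 + (u+v)(1−y)/2 − (1+s)v/(y+(1+s)(1−y)) ). -/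
open MeasureTheory Filter

/-- `U n`, the total genetic weight of the initially advantaged ancestors among the
advantaged individuals at time `n`. -/
noncomputable def MoranModel.U {N : ℕ} {s : ℝ} {Ω : Type} [MeasurableSpace Ω]
    (M : MoranModel N s Ω) (n : ℕ) (ω : Ω) : ℝ :=
  ∑ l ∈ M.Y n ω, ∑ l' ∈ M.Y 0 ω, M.W n ω l l'

/-- `V n`, the total genetic weight of the initially advantaged ancestors among the
disadvantaged individuals at time `n`. -/
noncomputable def MoranModel.V {N : ℕ} {s : ℝ} {Ω : Type} [MeasurableSpace Ω]
    (M : MoranModel N s Ω) (n : ℕ) (ω : Ω) : ℝ :=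
  ∑ l ∈ (M.Y n ω)ᶜ, ∑ l' ∈ M.Y 0 ω, M.W n ω l l'

/-- The rescaled triplet `Zₙ = (Yₙ/N, Uₙ/N, Vₙ/N) ∈ [0,1]³`. -/
noncomputable def MoranModel.Z {N : ℕ} {s : ℝ} {Ω : Type} [MeasurableSpace Ω]
    (M : MoranModel N s Ω) (n : ℕ) (ω : Ω) : ℝ × ℝ × ℝ :=
  (((M.Y n ω).card : ℝ) / N, M.U n ω / N, M.V n ω / N)

/-- The Euclidean norm on `ℝ³`. -/
noncomputable def norm3 (p : ℝ × ℝ × ℝ) : ℝ :=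
  Real.sqrt (p.1 ^ 2 + p.2.1 ^ 2 + p.2.2 ^ 2)

/-- The drift function `g` of the limiting dynamical system. -/
noncomputable def gdrift (s : ℝ) (p : ℝ × ℝ × ℝ) : ℝ × ℝ × ℝ :=
  (s * p.1 * (1 - p.1) / (p.1 + (1 + s) * (1 - p.1)),
   p.2.1 / 2 + (p.2.1 + p.2.2) * p.1 / 2 - p.2.1 / (p.1 + (1 + s) * (1 - p.1)),
   p.2.2 / 2 + (p.2.1 + p.2.2) * (1 - p.1) / 2 -
     (1 + s) * p.2.2 / (p.1 + (1 + s) * (1 - p.1)))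

namespace MoranModel

variable {N : ℕ} {s : ℝ} {Ω : Type} [MeasurableSpace Ω] (M : MoranModel N s Ω)

lemma W_nonneg : ∀ n ω i j, 0 ≤ M.W n ω i j := by
  intro n
  induction n with
  | zero => intro ω i j; rw [M.W_init]; split <;> norm_num
  | succ n ih =>
    intro ω i j
    rw [M.W_rec]
    split
    · have := ih ω (M.mo n ω) j
      have := ih ω (M.fa n ω) j
      linarith
    · exact ih ω i j

lemma W_rowsum : ∀ n ω i, ∑ j, M.W n ω i j = 1 := by
  intro n
  induction n with
  | zero =>
    intro ω i
    simp only [M.W_init]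
    simp
  | succ n ih =>
    intro ω i
    simp only [M.W_rec]
    split
    · rw [← Finset.sum_div, Finset.sum_add_distrib, ih, ih]; norm_num
    · exact ih ω i

/-- The genetic score of individual `l` at time `n`. -/
noncomputable def Rw (n : ℕ) (ω : Ω) (l : Fin N) : ℝ := ∑ l' ∈ M.Y 0 ω, M.W n ω l l'

lemma Rw_nonneg (n : ℕ) (ω : Ω) (l : Fin N) : 0 ≤ M.Rw n ω l :=
  Finset.sum_nonneg fun l' _ => M.W_nonneg n ω l l'

lemma Rw_le_one (n : ℕ) (ω : Ω) (l : Fin N) : M.Rw n ω l ≤ 1 := by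
  have h : M.Rw n ω l ≤ ∑ l', M.W n ω l l' :=
    Finset.sum_le_sum_of_subset_of_nonneg (Finset.subset_univ _)
      (fun l' _ _ => M.W_nonneg n ω l l')
  rw [M.W_rowsum n ω l] at h
  exact h

lemma U_eq (n : ℕ) (ω : Ω) : M.U n ω = ∑ l ∈ M.Y n ω, M.Rw n ω l := rfl

lemma V_eq (n : ℕ) (ω : Ω) : M.V n ω = ∑ l ∈ (M.Y n ω)ᶜ, M.Rw n ω l := rfl

/-- The next value of `Y` given that the mother is at `i` and the killed individual at `k`. -/
def Yn (n : ℕ) (i k : Fin N) (ω : Ω) : Finset (Fin N) :=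
  if i ∈ M.Y n ω then insert k (M.Y n ω) else (M.Y n ω).erase k

/-- The next value of the score vector. -/
noncomputable def Rn (n : ℕ) (i j k : Fin N) (ω : Ω) (l : Fin N) : ℝ :=
  if l = k then (M.Rw n ω i + M.Rw n ω j) / 2 else M.Rw n ω l

/-- The next value of `U`. -/
noncomputable def Un (n : ℕ) (i j k : Fin N) (ω : Ω) : ℝ :=
  ∑ l ∈ M.Yn n i k ω, M.Rn n i j k ω l

/-- The next value of `V`. -/
noncomputable def Vn (n : ℕ) (i j k : Fin N) (ω : Ω) : ℝ :=
  ∑ l ∈ (M.Yn n i k ω)ᶜ, M.Rn n i j k ω l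

lemma Y_succ (n : ℕ) (ω : Ω) : M.Y (n+1) ω = M.Yn n (M.mo n ω) (M.ka n ω) ω := M.Y_rec n ω

lemma Y0_succ (n : ℕ) (ω : Ω) : M.Y 0 ω = M.Y 0 ω := rfl

lemma Rw_succ (n : ℕ) (ω : Ω) (l : Fin N) :
    M.Rw (n+1) ω l = M.Rn n (M.mo n ω) (M.fa n ω) (M.ka n ω) ω l := by
  unfold Rn
  split
  case isTrue h =>
    unfold Rw
    rw [Finset.sum_congr rfl (fun l' _ => by rw [M.W_rec, if_pos h]),
      ← Finset.sum_div, Finset.sum_add_distrib]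
  case isFalse h =>
    unfold Rw
    exact Finset.sum_congr rfl (fun l' _ => by rw [M.W_rec, if_neg h])

lemma U_succ (n : ℕ) (ω : Ω) :
    M.U (n+1) ω = M.Un n (M.mo n ω) (M.fa n ω) (M.ka n ω) ω := by
  rw [U_eq, Un, M.Y_succ]
  exact Finset.sum_congr rfl fun l _ => M.Rw_succ n ω l

lemma V_succ (n : ℕ) (ω : Ω) :
    M.V (n+1) ω = M.Vn n (M.mo n ω) (M.fa n ω) (M.ka n ω) ω := by
  rw [V_eq, Vn, M.Y_succ]
  exact Finset.sum_congr rfl fun l _ => M.Rw_succ n ω l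

lemma sum_Rn_erase (n : ℕ) (i j k : Fin N) (ω : Ω) (T : Finset (Fin N)) :
    ∑ l ∈ T.erase k, M.Rn n i j k ω l
      = ∑ l ∈ T, M.Rw n ω l - (if k ∈ T then M.Rw n ω k else 0) := by
  have h : ∀ l ∈ T.erase k, M.Rn n i j k ω l = M.Rw n ω l :=
    fun l hl => if_neg (Finset.ne_of_mem_erase hl)
  rw [Finset.sum_congr rfl h]
  by_cases hk : k ∈ T
  · rw [if_pos hk, Finset.sum_erase_eq_sub hk]
  · rw [if_neg hk, Finset.erase_eq_of_notMem hk, sub_zero]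

lemma sum_Rn_insert (n : ℕ) (i j k : Fin N) (ω : Ω) (T : Finset (Fin N)) :
    ∑ l ∈ insert k T, M.Rn n i j k ω l
      = ∑ l ∈ T, M.Rw n ω l - (if k ∈ T then M.Rw n ω k else 0)
        + (M.Rw n ω i + M.Rw n ω j) / 2 := by
  have h : insert k T = insert k (T.erase k) := by
    ext x; simp only [Finset.mem_insert, Finset.mem_erase]; tauto
  rw [h, Finset.sum_insert (Finset.notMem_erase k T), M.sum_Rn_erase]
  unfold Rn
  rw [if_pos rfl]
  ring

lemma Un_sub (n : ℕ) (i j k : Fin N) (ω : Ω) :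
    M.Un n i j k ω - M.U n ω
      = (if i ∈ M.Y n ω then (M.Rw n ω i + M.Rw n ω j) / 2 else 0)
        - (if k ∈ M.Y n ω then M.Rw n ω k else 0) := by
  unfold Un Yn
  by_cases hi : i ∈ M.Y n ω
  · rw [if_pos hi, if_pos hi, M.sum_Rn_insert, ← M.U_eq]
    split_ifs <;> ring
  · rw [if_neg hi, if_neg hi, M.sum_Rn_erase, ← M.U_eq]
    split_ifs <;> ring

lemma Vn_sub (n : ℕ) (i j k : Fin N) (ω : Ω) :
    M.Vn n i j k ω - M.V n ω
      = (if i ∈ M.Y n ω then 0 else (M.Rw n ω i + M.Rw n ω j) / 2)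
        - (if k ∈ M.Y n ω then 0 else M.Rw n ω k) := by
  unfold Vn Yn
  by_cases hi : i ∈ M.Y n ω
  · rw [if_pos hi, if_pos hi, Finset.compl_insert, M.sum_Rn_erase, ← M.V_eq]
    simp only [Finset.mem_compl]
    split_ifs <;> ring
  · rw [if_neg hi, if_neg hi, Finset.compl_erase, M.sum_Rn_insert, ← M.V_eq]
    simp only [Finset.mem_compl]
    split_ifs <;> ring

lemma card_Yn (n : ℕ) (i k : Fin N) (ω : Ω) :
    ((M.Yn n i k ω).card : ℝ) - ((M.Y n ω).card : ℝ)
      = (if i ∈ M.Y n ω then (if k ∈ M.Y n ω then 0 else 1)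
         else (if k ∈ M.Y n ω then -1 else 0)) := by
  unfold Yn
  by_cases hi : i ∈ M.Y n ω
  · rw [if_pos hi, if_pos hi]
    by_cases hk : k ∈ M.Y n ω
    · rw [if_pos hk, Finset.insert_eq_self.2 hk]; ring
    · rw [if_neg hk, Finset.card_insert_of_notMem hk]; push_cast; ring
  · rw [if_neg hi, if_neg hi]
    by_cases hk : k ∈ M.Y n ω
    · rw [if_pos hk, Finset.card_erase_of_mem hk]
      have : 1 ≤ (M.Y n ω).card := Finset.card_pos.2 ⟨k, hk⟩
      push_cast [this]; ring
    · rw [if_neg hk, Finset.erase_eq_of_notMem hk]; ring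

end MoranModel
namespace MoranModel

variable {N : ℕ} {s : ℝ} {Ω : Type} [MeasurableSpace Ω] (M : MoranModel N s Ω)

lemma abs_card_diff (n : ℕ) (ω : Ω) :
    |((M.Y (n+1) ω).card : ℝ) - ((M.Y n ω).card : ℝ)| ≤ 1 := by
  rw [M.Y_succ, M.card_Yn]
  split_ifs <;> norm_num

lemma abs_U_diff (n : ℕ) (ω : Ω) : |M.U (n+1) ω - M.U n ω| ≤ 1 := by
  rw [M.U_succ, M.Un_sub]
  have h1 := M.Rw_nonneg n ω (M.mo n ω); have h2 := M.Rw_le_one n ω (M.mo n ω)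
  have h3 := M.Rw_nonneg n ω (M.fa n ω); have h4 := M.Rw_le_one n ω (M.fa n ω)
  have h5 := M.Rw_nonneg n ω (M.ka n ω); have h6 := M.Rw_le_one n ω (M.ka n ω)
  rw [abs_le]; constructor <;> (split_ifs <;> linarith)

lemma abs_V_diff (n : ℕ) (ω : Ω) : |M.V (n+1) ω - M.V n ω| ≤ 1 := by
  rw [M.V_succ, M.Vn_sub]
  have h1 := M.Rw_nonneg n ω (M.mo n ω); have h2 := M.Rw_le_one n ω (M.mo n ω)
  have h3 := M.Rw_nonneg n ω (M.fa n ω); have h4 := M.Rw_le_one n ω (M.fa n ω)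
  have h5 := M.Rw_nonneg n ω (M.ka n ω); have h6 := M.Rw_le_one n ω (M.ka n ω)
  rw [abs_le]; constructor <;> (split_ifs <;> linarith)

lemma Z_diff (n : ℕ) (ω : Ω) :
    M.Z (n+1) ω - M.Z n ω
      = ((((M.Y (n+1) ω).card : ℝ) - ((M.Y n ω).card : ℝ)) / N,
         (M.U (n+1) ω - M.U n ω) / N, (M.V (n+1) ω - M.V n ω) / N) := by
  simp only [Z, Prod.mk_sub_mk, div_sub_div_same]

lemma norm3_bound (hN : 2 ≤ N) (n : ℕ) (ω : Ω) :
    norm3 (M.Z (n + 1) ω - M.Z n ω) ≤ Real.sqrt 3 / N := by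
  have hN0 : (0:ℝ) < N := by positivity
  rw [M.Z_diff]
  unfold norm3
  have key : ∀ x : ℝ, |x| ≤ 1 → (x / N) ^ 2 ≤ 1 / (N:ℝ)^2 := by
    intro x hx
    rw [div_pow]
    have hx2 : x ^ 2 ≤ 1 := (sq_le_one_iff_abs_le_one x).2 hx
    gcongr
  have h1 := key _ (M.abs_card_diff n ω)
  have h2 := key _ (M.abs_U_diff n ω)
  have h3 := key _ (M.abs_V_diff n ω)
  calc Real.sqrt _ ≤ Real.sqrt (3 / (N:ℝ)^2) := by
        apply Real.sqrt_le_sqrt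
        have h4 : (3:ℝ)/(N:ℝ)^2 = 1/(N:ℝ)^2 + 1/(N:ℝ)^2 + 1/(N:ℝ)^2 := by ring
        rw [h4]
        exact add_le_add (add_le_add h1 h2) h3
    _ = Real.sqrt 3 / N := by
        rw [show (3 / (N:ℝ)^2) = 3 / (N:ℝ)^2 from rfl, Real.sqrt_div (by norm_num),
          Real.sqrt_sq hN0.le]

end MoranModel
namespace MoranModel

variable {N : ℕ} {s : ℝ} {Ω : Type} [MeasurableSpace Ω] (M : MoranModel N s Ω)

/-- The indicator of membership in `Y n`. -/
def chi (n : ℕ) (ω : Ω) (x : Fin N) : ℝ := if x ∈ M.Y n ω then 1 else 0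

/-- The selection probability weight of individual `k` at time `n` (up to the `1/N²` factor). -/
noncomputable def wk (n : ℕ) (k : Fin N) (ω : Ω) : ℝ :=
  (1 + s * (if k ∈ M.Y n ω then 0 else 1)) /
    (((M.Y n ω).card : ℝ) + (1 + s) * ((N : ℝ) - ((M.Y n ω).card : ℝ)))

/-- The one-step increment of `Z` given mother `i`, father `j`, killed `k`. -/
noncomputable def hfun (n : ℕ) (i j k : Fin N) (ω : Ω) : ℝ × ℝ × ℝ :=
  ((((M.Yn n i k ω).card : ℝ) - ((M.Y n ω).card : ℝ)) / N,
   (M.Un n i j k ω - M.U n ω) / N, (M.Vn n i j k ω - M.V n ω) / N)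

/-- The conditional expectation of the increment of `Z`. -/
noncomputable def Gfun (n : ℕ) (ω : Ω) : ℝ × ℝ × ℝ :=
  ∑ i, ∑ j, ∑ k, ((1 / (N : ℝ) ^ 2) * M.wk n k ω) • M.hfun n i j k ω

lemma Zdiff_eq (n : ℕ) (ω : Ω) :
    M.Z (n + 1) ω - M.Z n ω = M.hfun n (M.mo n ω) (M.fa n ω) (M.ka n ω) ω := by
  rw [M.Z_diff, hfun, M.Y_succ, M.U_succ, M.V_succ]

lemma hfun_eq (n : ℕ) (i j k : Fin N) (ω : Ω) :
    M.hfun n i j k ω =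
      ((M.chi n ω i * (1 - M.chi n ω k) - (1 - M.chi n ω i) * M.chi n ω k) / N,
       (M.chi n ω i * (M.Rw n ω i + M.Rw n ω j) / 2 - M.chi n ω k * M.Rw n ω k) / N,
       ((1 - M.chi n ω i) * (M.Rw n ω i + M.Rw n ω j) / 2
         - (1 - M.chi n ω k) * M.Rw n ω k) / N) := by
  rw [hfun, M.card_Yn, M.Un_sub, M.Vn_sub]
  unfold chi
  split_ifs <;> norm_num

lemma wk_eq (n : ℕ) (k : Fin N) (ω : Ω) :
    M.wk n k ω = (1 + s * (1 - M.chi n ω k)) /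
      (((M.Y n ω).card : ℝ) + (1 + s) * ((N : ℝ) - ((M.Y n ω).card : ℝ))) := by
  unfold wk chi
  split_ifs <;> norm_num

lemma card_le (n : ℕ) (ω : Ω) : (((M.Y n ω).card : ℝ)) ≤ N := by
  have := Finset.card_le_univ (M.Y n ω)
  simp only [Finset.card_univ, Fintype.card_fin] at this
  exact_mod_cast this

lemma denom_pos (hN : 2 ≤ N) (hs : 0 < s) (n : ℕ) (ω : Ω) :
    0 < ((M.Y n ω).card : ℝ) + (1 + s) * ((N : ℝ) - ((M.Y n ω).card : ℝ)) := by
  have h1 : (0:ℝ) ≤ ((M.Y n ω).card : ℝ) := Nat.cast_nonneg _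
  have h2 := M.card_le n ω
  have h3 : (2:ℝ) ≤ (N : ℝ) := by exact_mod_cast hN
  nlinarith [mul_nonneg hs.le (sub_nonneg.2 h2)]

lemma wk_nonneg (hN : 2 ≤ N) (hs : 0 < s) (n : ℕ) (k : Fin N) (ω : Ω) :
    0 ≤ M.wk n k ω := by
  unfold wk
  apply div_nonneg _ (M.denom_pos hN hs n ω).le
  split_ifs <;> nlinarith

lemma wk_le (hN : 2 ≤ N) (hs : 0 < s) (n : ℕ) (k : Fin N) (ω : Ω) :
    M.wk n k ω ≤ 1 + s := by
  unfold wk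
  rw [div_le_iff₀ (M.denom_pos hN hs n ω)]
  have h1 : (0:ℝ) ≤ ((M.Y n ω).card : ℝ) := Nat.cast_nonneg _
  have h2 := M.card_le n ω
  have h3 : (2:ℝ) ≤ (N : ℝ) := by exact_mod_cast hN
  split_ifs <;> nlinarith [mul_nonneg hs.le (sub_nonneg.2 h2)]

lemma hfun_norm_le (n : ℕ) (i j k : Fin N) (ω : Ω) : ‖M.hfun n i j k ω‖ ≤ 1 := by
  have key : ∀ x : ℝ, |x| ≤ 1 → ‖x / (N:ℝ)‖ ≤ 1 := by
    intro x hx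
    rw [Real.norm_eq_abs, abs_div, abs_of_nonneg (Nat.cast_nonneg (α := ℝ) N)]
    rcases Nat.eq_zero_or_pos N with h | h
    · simp [h]
    · have hN1 : (1:ℝ) ≤ (N:ℝ) := by exact_mod_cast h
      rw [div_le_one (by linarith)]
      linarith [hx]
  have b1 : |(((M.Yn n i k ω).card : ℝ) - ((M.Y n ω).card : ℝ))| ≤ 1 := by
    rw [M.card_Yn]; split_ifs <;> norm_num
  have b2 : |M.Un n i j k ω - M.U n ω| ≤ 1 := by
    rw [M.Un_sub]
    have h1 := M.Rw_nonneg n ω i; have h2 := M.Rw_le_one n ω i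
    have h3 := M.Rw_nonneg n ω j; have h4 := M.Rw_le_one n ω j
    have h5 := M.Rw_nonneg n ω k; have h6 := M.Rw_le_one n ω k
    rw [abs_le]; constructor <;> (split_ifs <;> linarith)
  have b3 : |M.Vn n i j k ω - M.V n ω| ≤ 1 := by
    rw [M.Vn_sub]
    have h1 := M.Rw_nonneg n ω i; have h2 := M.Rw_le_one n ω i
    have h3 := M.Rw_nonneg n ω j; have h4 := M.Rw_le_one n ω j
    have h5 := M.Rw_nonneg n ω k; have h6 := M.Rw_le_one n ω k
    rw [abs_le]; constructor <;> (split_ifs <;> linarith)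
  rw [hfun, Prod.norm_def, Prod.norm_def]
  exact max_le (key _ b1) (max_le (key _ b2) (key _ b3))

/-! ### Measurability -/

lemma F_le (n : ℕ) : M.F n ≤ ‹MeasurableSpace Ω› := by
  refine iSup₂_le fun k _ => sup_le ?_ ?_
  · exact (M.meas_W k).comap_le
  · rintro S ⟨A, -, rfl⟩
    exact M.meas_Y k A

lemma measF_W {n k : ℕ} (hk : k ≤ n) : Measurable[M.F n] (M.W k) := by
  rw [measurable_iff_comap_le]
  exact le_trans le_sup_left (le_iSup₂ (f := fun k (_ : k ∈ Set.Iic n) =>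
    (MeasurableSpace.comap (M.W k) inferInstance ⊔ MeasurableSpace.comap (M.Y k) ⊤)) k hk)

lemma measF_comp_Y {n k : ℕ} (hk : k ≤ n) {α : Type*} [MeasurableSpace α]
    (φ : Finset (Fin N) → α) : Measurable[M.F n] (fun ω => φ (M.Y k ω)) := by
  intro B _
  have h1 : (fun ω => φ (M.Y k ω)) ⁻¹' B = M.Y k ⁻¹' (φ ⁻¹' B) := rfl
  rw [h1]
  have h2 : MeasurableSet[MeasurableSpace.comap (M.Y k) ⊤] (M.Y k ⁻¹' (φ ⁻¹' B)) :=
    ⟨φ ⁻¹' B, trivial, rfl⟩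
  have h3 : (MeasurableSpace.comap (M.Y k) ⊤ : MeasurableSpace Ω) ≤ M.F n :=
    le_trans le_sup_right (le_iSup₂ (f := fun k (_ : k ∈ Set.Iic n) =>
      (MeasurableSpace.comap (M.W k) inferInstance ⊔ MeasurableSpace.comap (M.Y k) ⊤)) k hk)
  exact h3 _ h2

end MoranModel
namespace MoranModel

variable {N : ℕ} {s : ℝ} {Ω : Type} [MeasurableSpace Ω] (M : MoranModel N s Ω)

lemma measF_Wentry (n : ℕ) (l l' : Fin N) :
    Measurable[M.F n] (fun ω => M.W n ω l l') := by
  have h : Measurable (fun g : Fin N → Fin N → ℝ => g l l') :=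
    (measurable_pi_apply l').comp (measurable_pi_apply l)
  exact h.comp (M.measF_W le_rfl)

lemma measF_memY {n k : ℕ} (hk : k ≤ n) (x : Fin N) :
    MeasurableSet[M.F n] {ω | x ∈ M.Y k ω} := by
  have h := M.measF_comp_Y (n := n) hk (fun S => if x ∈ S then (1:ℝ) else 0)
  have h2 : {ω | x ∈ M.Y k ω}
      = (fun ω => if x ∈ M.Y k ω then (1:ℝ) else 0) ⁻¹' {1} := by
    ext ω; by_cases hx : x ∈ M.Y k ω <;> simp [hx]
  rw [h2]
  exact h (measurableSet_singleton 1)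

lemma measF_Rw (n : ℕ) (l : Fin N) : Measurable[M.F n] (fun ω => M.Rw n ω l) := by
  have h : (fun ω => M.Rw n ω l)
      = fun ω => ∑ l', if l' ∈ M.Y 0 ω then M.W n ω l l' else 0 := by
    funext ω
    rw [Finset.sum_ite_mem, Finset.univ_inter]
    rfl
  rw [h]
  exact Finset.measurable_sum _ fun l' _ =>
    Measurable.ite (M.measF_memY (Nat.zero_le n) l') (M.measF_Wentry n l l') measurable_const

lemma measF_chi (n : ℕ) (x : Fin N) : Measurable[M.F n] (fun ω => M.chi n ω x) :=
  Measurable.ite (M.measF_memY le_rfl x) measurable_const measurable_const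

lemma measF_card (n : ℕ) : Measurable[M.F n] (fun ω => ((M.Y n ω).card : ℝ)) :=
  M.measF_comp_Y le_rfl (fun S => (S.card : ℝ))

lemma measF_wk (n : ℕ) (k : Fin N) : Measurable[M.F n] (M.wk n k) :=
  M.measF_comp_Y le_rfl (fun S => (1 + s * (if k ∈ S then 0 else 1)) /
    ((S.card : ℝ) + (1 + s) * ((N : ℝ) - (S.card : ℝ))))

lemma smF_hfun (n : ℕ) (i j k : Fin N) : StronglyMeasurable[M.F n] (M.hfun n i j k) := by
  have h := funext (M.hfun_eq n i j k)
  rw [h]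
  have hchi_i := M.measF_chi n i
  have hchi_k := M.measF_chi n k
  have hRi := M.measF_Rw n i
  have hRj := M.measF_Rw n j
  have hRk := M.measF_Rw n k
  apply Measurable.stronglyMeasurable
  exact Measurable.prod (by fun_prop) (Measurable.prod (by fun_prop) (by fun_prop))

lemma smF_Gfun (n : ℕ) : StronglyMeasurable[M.F n] (M.Gfun n) := by
  unfold Gfun
  apply Finset.stronglyMeasurable_fun_sum
  intro i _
  apply Finset.stronglyMeasurable_fun_sum
  intro j _
  apply Finset.stronglyMeasurable_fun_sum
  intro k _
  exact StronglyMeasurable.smul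
    ((measurable_const.mul (M.measF_wk n k)).stronglyMeasurable) (M.smF_hfun n i j k)

lemma measurableSet_E (n : ℕ) (i j k : Fin N) :
    MeasurableSet {ω | M.mo n ω = i ∧ M.fa n ω = j ∧ M.ka n ω = k} := by
  have : {ω | M.mo n ω = i ∧ M.fa n ω = j ∧ M.ka n ω = k}
      = M.mo n ⁻¹' {i} ∩ (M.fa n ⁻¹' {j} ∩ M.ka n ⁻¹' {k}) := rfl
  rw [this]
  exact (M.meas_mo n (measurableSet_singleton i)).inter
    ((M.meas_fa n (measurableSet_singleton j)).inter (M.meas_ka n (measurableSet_singleton k)))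

end MoranModel
namespace MoranModel

variable {N : ℕ} {s : ℝ} {Ω : Type} [MeasurableSpace Ω] (M : MoranModel N s Ω)

lemma meas_wk (n : ℕ) (k : Fin N) : Measurable (M.wk n k) :=
  (M.measF_wk n k).mono (M.F_le n) le_rfl

lemma law_measure (hN : 2 ≤ N) (hs : 0 < s) (n : ℕ) (i j k : Fin N) {A : Set Ω}
    (hA : MeasurableSet[M.F n] A) :
    M.P (A ∩ {ω | M.mo n ω = i ∧ M.fa n ω = j ∧ M.ka n ω = k})
      = ∫⁻ ω in A, ENNReal.ofReal ((1 / (N : ℝ) ^ 2) * M.wk n k ω) ∂M.P := by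
  haveI := M.isProb
  have hlaw := M.law n A hA i j k
  have hc : (0:ℝ) ≤ 1 / (N : ℝ) ^ 2 := by positivity
  have hw_meas : Measurable (fun ω => (1 / (N : ℝ) ^ 2) * M.wk n k ω) :=
    measurable_const.mul (M.meas_wk n k)
  have hw_nonneg : ∀ ω, 0 ≤ (1 / (N : ℝ) ^ 2) * M.wk n k ω :=
    fun ω => mul_nonneg hc (M.wk_nonneg hN hs n k ω)
  have hw_int : Integrable (fun ω => (1 / (N : ℝ) ^ 2) * M.wk n k ω) (M.P.restrict A) := by
    refine ⟨hw_meas.aestronglyMeasurable, ?_⟩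
    apply HasFiniteIntegral.of_bounded (C := (1 / (N : ℝ) ^ 2) * (1 + s))
    apply ae_of_all
    intro ω
    rw [Real.norm_eq_abs, abs_of_nonneg (hw_nonneg ω)]
    exact mul_le_mul_of_nonneg_left (M.wk_le hN hs n k ω) hc
  have key : (1 / (N : ℝ) ^ 2) * ∫ ω in A, M.wk n k ω ∂M.P
      = ∫ ω in A, (1 / (N : ℝ) ^ 2) * M.wk n k ω ∂M.P := (integral_const_mul _ _).symm
  rw [← ENNReal.ofReal_toReal
    (measure_ne_top M.P (A ∩ {ω | M.mo n ω = i ∧ M.fa n ω = j ∧ M.ka n ω = k})),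
    hlaw]
  have hwk_eq : M.wk n k = fun ω => (1 + s * (if k ∈ M.Y n ω then 0 else 1)) /
      (((M.Y n ω).card : ℝ) + (1 + s) * ((N : ℝ) - ((M.Y n ω).card : ℝ))) := rfl
  rw [show ((1:ℝ) / (N : ℝ) ^ 2) = 1 / (N:ℝ)^2 from rfl]
  calc ENNReal.ofReal ((1 / (N:ℝ)^2) * ∫ ω in A, (1 + s * (if k ∈ M.Y n ω then 0 else 1)) /
          (((M.Y n ω).card : ℝ) + (1 + s) * ((N : ℝ) - ((M.Y n ω).card : ℝ))) ∂M.P)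
      = ENNReal.ofReal (∫ ω in A, (1 / (N : ℝ) ^ 2) * M.wk n k ω ∂M.P) := by
        rw [← key]; rfl
    _ = ∫⁻ ω in A, ENNReal.ofReal ((1 / (N : ℝ) ^ 2) * M.wk n k ω) ∂M.P :=
        ofReal_integral_eq_lintegral_ofReal hw_int (ae_of_all _ hw_nonneg)

lemma law_integral (hN : 2 ≤ N) (hs : 0 < s) (n : ℕ) (i j k : Fin N) (h : Ω → ℝ × ℝ × ℝ)
    (hmeas : StronglyMeasurable[M.F n] h) :
    ∫ ω in {ω | M.mo n ω = i ∧ M.fa n ω = j ∧ M.ka n ω = k}, h ω ∂M.P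
      = ∫ ω, ((1 / (N : ℝ) ^ 2) * M.wk n k ω) • h ω ∂M.P := by
  have hm := M.F_le n
  set dens : Ω → NNReal := fun ω => ((1 / (N : ℝ) ^ 2) * M.wk n k ω).toNNReal with hdens
  have hdens_meas : Measurable dens :=
    (measurable_const.mul (M.meas_wk n k)).real_toNNReal
  set ρ : Measure Ω := M.P.withDensity (fun ω => (dens ω : ENNReal)) with hρ
  have htrim : ((M.P.restrict {ω | M.mo n ω = i ∧ M.fa n ω = j ∧ M.ka n ω = k}).trim hm)
      = ρ.trim hm := by
    refine @MeasureTheory.Measure.ext Ω (M.F n) _ _ (fun A hA => ?_)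
    rw [trim_measurableSet_eq hm hA, trim_measurableSet_eq hm hA,
      Measure.restrict_apply (hm _ hA), withDensity_apply _ (hm _ hA)]
    rw [M.law_measure hN hs n i j k hA]
    apply lintegral_congr
    intro ω
    rw [ENNReal.ofReal_eq_coe_nnreal (mul_nonneg (by positivity) (M.wk_nonneg hN hs n k ω)),
      hdens]
    congr 1
    exact (Real.toNNReal_of_nonneg _).symm
  calc ∫ ω in {ω | M.mo n ω = i ∧ M.fa n ω = j ∧ M.ka n ω = k}, h ω ∂M.P
      = ∫ ω, h ω ∂((M.P.restrict {ω | M.mo n ω = i ∧ M.fa n ω = j ∧ M.ka n ω = k}).trim hm) :=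
        integral_trim hm hmeas
    _ = ∫ ω, h ω ∂(ρ.trim hm) := by rw [htrim]
    _ = ∫ ω, h ω ∂ρ := (integral_trim hm hmeas).symm
    _ = ∫ ω, dens ω • h ω ∂M.P := integral_withDensity_eq_integral_smul hdens_meas h
    _ = ∫ ω, ((1 / (N : ℝ) ^ 2) * M.wk n k ω) • h ω ∂M.P := by
        congr 1
        funext ω
        rw [NNReal.smul_def, Real.coe_toNNReal _
          (mul_nonneg (by positivity) (M.wk_nonneg hN hs n k ω))]

end MoranModel
namespace MoranModel

variable {N : ℕ} {s : ℝ} {Ω : Type} [MeasurableSpace Ω] (M : MoranModel N s Ω)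

set_option maxHeartbeats 2000000 in
lemma Gfun_eq (hN : 2 ≤ N) (hs : 0 < s) (n : ℕ) (ω : Ω) :
    M.Gfun n ω = (1 / (N : ℝ)) • gdrift s (M.Z n ω) := by
  have hNpos : (0:ℝ) < (N:ℝ) := by
    have : (0:ℕ) < N := lt_of_lt_of_le two_pos hN
    exact_mod_cast this
  have hN0 : ((N:ℝ)) ≠ 0 := hNpos.ne'
  have hD0' := (M.denom_pos hN hs n ω).ne'
  set y : ℝ := ((M.Y n ω).card : ℝ) with hy
  set D : ℝ := y + (1 + s) * ((N : ℝ) - y) with hDdef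
  have hD0 : D ≠ 0 := hD0'
  set U' : ℝ := M.U n ω with hU
  set V' : ℝ := M.V n ω with hV
  -- basic sums
  have hchi_sq : ∀ x, M.chi n ω x * M.chi n ω x = M.chi n ω x := by
    intro x; unfold chi; split_ifs <;> norm_num
  have hsum_chi : ∑ x, M.chi n ω x = y := by
    unfold chi
    rw [Finset.sum_ite_mem, Finset.univ_inter, Finset.sum_const, nsmul_eq_mul, mul_one]
  have hsum_chiR : ∑ x, M.chi n ω x * M.Rw n ω x = U' := by
    have hterm : ∀ x : Fin N, M.chi n ω x * M.Rw n ω x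
        = if x ∈ M.Y n ω then M.Rw n ω x else 0 := by
      intro x; unfold chi; split_ifs <;> ring
    rw [Finset.sum_congr rfl (fun x _ => hterm x), Finset.sum_ite_mem, Finset.univ_inter,
      hU, M.U_eq]
  have hsum_R : ∑ x, M.Rw n ω x = U' + V' := by
    rw [← Finset.sum_add_sum_compl (M.Y n ω) (M.Rw n ω), hU, hV, M.U_eq, M.V_eq]
  have sum_constN : ∀ r : ℝ, (∑ _x : Fin N, r) = (N:ℝ) * r := by
    intro r
    rw [Finset.sum_const, Finset.card_univ, Fintype.card_fin, nsmul_eq_mul]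
  have hgen : ∀ A B C E : ℝ,
      (∑ x, (A * M.chi n ω x + B * M.Rw n ω x + C * (M.chi n ω x * M.Rw n ω x) + E))
        = A * y + B * (U' + V') + C * U' + (N:ℝ) * E := by
    intro A B C E
    rw [Finset.sum_add_distrib, Finset.sum_add_distrib, Finset.sum_add_distrib,
      ← Finset.mul_sum, ← Finset.mul_sum, ← Finset.mul_sum,
      hsum_chi, hsum_R, hsum_chiR, sum_constN]
  -- sums involving the selection weights
  have hwk : ∀ k, M.wk n k ω = (1 + s * (1 - M.chi n ω k)) / D := by
    intro k
    rw [M.wk_eq n k ω, ← hy, ← hDdef]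
  have hsum_wk : ∑ k, M.wk n k ω = 1 := by
    rw [Finset.sum_congr rfl (fun k _ => hwk k), ← Finset.sum_div,
      div_eq_one_iff_eq hD0]
    have hterm : ∀ k : Fin N, 1 + s * (1 - M.chi n ω k)
        = (-s) * M.chi n ω k + 0 * M.Rw n ω k + 0 * (M.chi n ω k * M.Rw n ω k) + (1 + s) := by
      intro k; ring
    rw [Finset.sum_congr rfl (fun k _ => hterm k), hgen, hDdef]
    ring
  have hsum_chiwk : ∑ k, M.chi n ω k * M.wk n k ω = y / D := by
    have hterm : ∀ k : Fin N, M.chi n ω k * M.wk n k ω = M.chi n ω k / D := by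
      intro k
      rw [hwk k, ← mul_div_assoc]
      congr 1
      linear_combination (-s : ℝ) * hchi_sq k
    rw [Finset.sum_congr rfl (fun k _ => hterm k), ← Finset.sum_div, hsum_chi]
  have hsum_chiRwk : ∑ k, (M.chi n ω k * M.Rw n ω k) * M.wk n k ω = U' / D := by
    have hterm : ∀ k : Fin N, (M.chi n ω k * M.Rw n ω k) * M.wk n k ω
        = (M.chi n ω k * M.Rw n ω k) / D := by
      intro k
      rw [hwk k, ← mul_div_assoc]
      congr 1
      linear_combination (-s * M.Rw n ω k) * hchi_sq k
    rw [Finset.sum_congr rfl (fun k _ => hterm k), ← Finset.sum_div, hsum_chiR]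
  have hsum_Rwk : ∑ k, M.Rw n ω k * M.wk n k ω = (U' + (1+s) * V') / D := by
    have hterm : ∀ k : Fin N, M.Rw n ω k * M.wk n k ω
        = ((1+s) * M.Rw n ω k - s * (M.chi n ω k * M.Rw n ω k)) / D := by
      intro k
      rw [hwk k, ← mul_div_assoc]
      congr 1
      ring
    rw [Finset.sum_congr rfl (fun k _ => hterm k), ← Finset.sum_div, Finset.sum_sub_distrib,
      ← Finset.mul_sum, ← Finset.mul_sum, hsum_R, hsum_chiR]
    congr 1
    ring
  have hgenk : ∀ A B C E : ℝ,
      (∑ k, (A * M.chi n ω k + B * M.Rw n ω k + C * (M.chi n ω k * M.Rw n ω k) + E)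
        * M.wk n k ω)
        = A * (y/D) + B * ((U' + (1+s) * V')/D) + C * (U'/D) + E := by
    intro A B C E
    have hterm : ∀ k : Fin N,
        (A * M.chi n ω k + B * M.Rw n ω k + C * (M.chi n ω k * M.Rw n ω k) + E) * M.wk n k ω
          = A * (M.chi n ω k * M.wk n k ω) + B * (M.Rw n ω k * M.wk n k ω)
            + C * ((M.chi n ω k * M.Rw n ω k) * M.wk n k ω) + E * M.wk n k ω := by
      intro k; ring
    rw [Finset.sum_congr rfl (fun k _ => hterm k), Finset.sum_add_distrib,
      Finset.sum_add_distrib, Finset.sum_add_distrib,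
      ← Finset.mul_sum, ← Finset.mul_sum, ← Finset.mul_sum, ← Finset.mul_sum,
      hsum_chiwk, hsum_Rwk, hsum_chiRwk, hsum_wk, mul_one]
  -- decompose the sum of products into components
  have hps : ∀ (f g h : Fin N → ℝ),
      (∑ x, ((f x, g x, h x) : ℝ × ℝ × ℝ)) = (∑ x, f x, ∑ x, g x, ∑ x, h x) := by
    intro f g h
    simp [Prod.ext_iff, Prod.fst_sum, Prod.snd_sum]
  have hGc : M.Gfun n ω =
      (∑ i : Fin N, ∑ j : Fin N, ∑ k : Fin N, ((1 / (N : ℝ) ^ 2) * M.wk n k ω)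
          * ((M.chi n ω i * (1 - M.chi n ω k) - (1 - M.chi n ω i) * M.chi n ω k) / (N:ℝ)),
       ∑ i : Fin N, ∑ j : Fin N, ∑ k : Fin N, ((1 / (N : ℝ) ^ 2) * M.wk n k ω)
          * ((M.chi n ω i * (M.Rw n ω i + M.Rw n ω j) / 2
              - M.chi n ω k * M.Rw n ω k) / (N:ℝ)),
       ∑ i : Fin N, ∑ j : Fin N, ∑ k : Fin N, ((1 / (N : ℝ) ^ 2) * M.wk n k ω)
          * (((1 - M.chi n ω i) * (M.Rw n ω i + M.Rw n ω j) / 2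
              - (1 - M.chi n ω k) * M.Rw n ω k) / (N:ℝ))) := by
    unfold Gfun
    simp only [M.hfun_eq, Prod.smul_mk, smul_eq_mul, hps]
  -- component 1
  have s1k : ∀ i : Fin N,
      (∑ k : Fin N, ((1 / (N : ℝ) ^ 2) * M.wk n k ω)
          * ((M.chi n ω i * (1 - M.chi n ω k) - (1 - M.chi n ω i) * M.chi n ω k) / (N:ℝ)))
        = (1 / (N : ℝ) ^ 2) * (M.chi n ω i - y/D) / (N:ℝ) := by
    intro i
    have hterm : ∀ k : Fin N, ((1 / (N : ℝ) ^ 2) * M.wk n k ω)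
          * ((M.chi n ω i * (1 - M.chi n ω k) - (1 - M.chi n ω i) * M.chi n ω k) / (N:ℝ))
        = ((-(1 / (N : ℝ) ^ 2 / (N:ℝ))) * M.chi n ω k + 0 * M.Rw n ω k
            + 0 * (M.chi n ω k * M.Rw n ω k) + (1 / (N : ℝ) ^ 2 / (N:ℝ)) * M.chi n ω i)
            * M.wk n k ω := by
      intro k; ring
    rw [Finset.sum_congr rfl (fun k _ => hterm k), hgenk]
    ring
  have s1j : ∀ i : Fin N,
      (∑ j : Fin N, ∑ k, ((1 / (N : ℝ) ^ 2) * M.wk n k ω)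
          * ((M.chi n ω i * (1 - M.chi n ω k) - (1 - M.chi n ω i) * M.chi n ω k) / (N:ℝ)))
        = (N:ℝ) * ((1 / (N : ℝ) ^ 2) * (M.chi n ω i - y/D) / (N:ℝ)) := by
    intro i
    rw [Finset.sum_congr rfl (fun j _ => s1k i), sum_constN]
  have hS1 : (∑ i : Fin N, ∑ j : Fin N, ∑ k : Fin N, ((1 / (N : ℝ) ^ 2) * M.wk n k ω)
          * ((M.chi n ω i * (1 - M.chi n ω k) - (1 - M.chi n ω i) * M.chi n ω k) / (N:ℝ)))
        = s * y * ((N:ℝ) - y) / ((N:ℝ)^2 * D) := by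
    have hterm : ∀ i : Fin N, (N:ℝ) * ((1 / (N : ℝ) ^ 2) * (M.chi n ω i - y/D) / (N:ℝ))
        = ((N:ℝ) * (1 / (N : ℝ) ^ 2 / (N:ℝ))) * M.chi n ω i + 0 * M.Rw n ω i
            + 0 * (M.chi n ω i * M.Rw n ω i)
            + (-((N:ℝ) * (1 / (N : ℝ) ^ 2 / (N:ℝ))) * (y/D)) := by
      intro i; ring
    rw [Finset.sum_congr rfl (fun i _ => (s1j i).trans (hterm i)), hgen]
    field_simp
    rw [hDdef]
    ring
  -- component 2
  have s2k : ∀ i j : Fin N,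
      (∑ k : Fin N, ((1 / (N : ℝ) ^ 2) * M.wk n k ω)
          * ((M.chi n ω i * (M.Rw n ω i + M.Rw n ω j) / 2
              - M.chi n ω k * M.Rw n ω k) / (N:ℝ)))
        = (1 / (N : ℝ) ^ 2) * (M.chi n ω i * (M.Rw n ω i + M.Rw n ω j) / 2 - U'/D) / (N:ℝ) := by
    intro i j
    have hterm : ∀ k : Fin N, ((1 / (N : ℝ) ^ 2) * M.wk n k ω)
          * ((M.chi n ω i * (M.Rw n ω i + M.Rw n ω j) / 2
              - M.chi n ω k * M.Rw n ω k) / (N:ℝ))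
        = (0 * M.chi n ω k + 0 * M.Rw n ω k
            + (-(1 / (N : ℝ) ^ 2 / (N:ℝ))) * (M.chi n ω k * M.Rw n ω k)
            + (1 / (N : ℝ) ^ 2 / (N:ℝ)) * (M.chi n ω i * (M.Rw n ω i + M.Rw n ω j) / 2))
            * M.wk n k ω := by
      intro k; ring
    rw [Finset.sum_congr rfl (fun k _ => hterm k), hgenk]
    ring
  have s2j : ∀ i : Fin N,
      (∑ j : Fin N, ∑ k, ((1 / (N : ℝ) ^ 2) * M.wk n k ω)
          * ((M.chi n ω i * (M.Rw n ω i + M.Rw n ω j) / 2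
              - M.chi n ω k * M.Rw n ω k) / (N:ℝ)))
        = (1 / (N : ℝ) ^ 2) * (M.chi n ω i * (U' + V') / (2 * (N:ℝ))
            + M.chi n ω i * M.Rw n ω i / 2 - U'/D) := by
    intro i
    have hterm : ∀ j : Fin N,
        (1 / (N : ℝ) ^ 2) * (M.chi n ω i * (M.Rw n ω i + M.Rw n ω j) / 2 - U'/D) / (N:ℝ)
          = (0 * M.chi n ω j + ((1 / (N : ℝ) ^ 2) * M.chi n ω i / (2 * (N:ℝ))) * M.Rw n ω j
              + 0 * (M.chi n ω j * M.Rw n ω j)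
              + (1 / (N : ℝ) ^ 2) * (M.chi n ω i * M.Rw n ω i / 2 - U'/D) / (N:ℝ)) := by
      intro j; ring
    rw [Finset.sum_congr rfl (fun j _ => (s2k i j).trans (hterm j)), hgen]
    field_simp
    ring
  have hS2 : (∑ i : Fin N, ∑ j : Fin N, ∑ k : Fin N, ((1 / (N : ℝ) ^ 2) * M.wk n k ω)
          * ((M.chi n ω i * (M.Rw n ω i + M.Rw n ω j) / 2
              - M.chi n ω k * M.Rw n ω k) / (N:ℝ)))
        = (U' + V') * y / (2 * (N:ℝ)^3) + U' / (2 * (N:ℝ)^2) - U' / ((N:ℝ) * D) := by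
    have hterm : ∀ i : Fin N,
        (1 / (N : ℝ) ^ 2) * (M.chi n ω i * (U' + V') / (2 * (N:ℝ))
            + M.chi n ω i * M.Rw n ω i / 2 - U'/D)
          = ((1 / (N : ℝ) ^ 2) * (U' + V') / (2 * (N:ℝ))) * M.chi n ω i + 0 * M.Rw n ω i
              + ((1 / (N : ℝ) ^ 2) / 2) * (M.chi n ω i * M.Rw n ω i)
              + (-((1 / (N : ℝ) ^ 2) * (U'/D))) := by
      intro i; ring
    rw [Finset.sum_congr rfl (fun i _ => (s2j i).trans (hterm i)), hgen]
    field_simp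
    ring
  -- component 3
  have s3k : ∀ i j : Fin N,
      (∑ k : Fin N, ((1 / (N : ℝ) ^ 2) * M.wk n k ω)
          * (((1 - M.chi n ω i) * (M.Rw n ω i + M.Rw n ω j) / 2
              - (1 - M.chi n ω k) * M.Rw n ω k) / (N:ℝ)))
        = (1 / (N : ℝ) ^ 2) * ((1 - M.chi n ω i) * (M.Rw n ω i + M.Rw n ω j) / 2
            - (1+s) * V'/D) / (N:ℝ) := by
    intro i j
    have hterm : ∀ k : Fin N, ((1 / (N : ℝ) ^ 2) * M.wk n k ω)
          * (((1 - M.chi n ω i) * (M.Rw n ω i + M.Rw n ω j) / 2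
              - (1 - M.chi n ω k) * M.Rw n ω k) / (N:ℝ))
        = (0 * M.chi n ω k + (-(1 / (N : ℝ) ^ 2 / (N:ℝ))) * M.Rw n ω k
            + (1 / (N : ℝ) ^ 2 / (N:ℝ)) * (M.chi n ω k * M.Rw n ω k)
            + (1 / (N : ℝ) ^ 2 / (N:ℝ))
                * ((1 - M.chi n ω i) * (M.Rw n ω i + M.Rw n ω j) / 2)) * M.wk n k ω := by
      intro k; ring
    rw [Finset.sum_congr rfl (fun k _ => hterm k), hgenk]
    field_simp
    ring
  have s3j : ∀ i : Fin N,
      (∑ j : Fin N, ∑ k, ((1 / (N : ℝ) ^ 2) * M.wk n k ω)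
          * (((1 - M.chi n ω i) * (M.Rw n ω i + M.Rw n ω j) / 2
              - (1 - M.chi n ω k) * M.Rw n ω k) / (N:ℝ)))
        = (1 / (N : ℝ) ^ 2) * ((1 - M.chi n ω i) * (U' + V') / (2 * (N:ℝ))
            + (1 - M.chi n ω i) * M.Rw n ω i / 2 - (1+s) * V'/D) := by
    intro i
    have hterm : ∀ j : Fin N,
        (1 / (N : ℝ) ^ 2) * ((1 - M.chi n ω i) * (M.Rw n ω i + M.Rw n ω j) / 2
            - (1+s) * V'/D) / (N:ℝ)
          = (0 * M.chi n ω j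
              + ((1 / (N : ℝ) ^ 2) * (1 - M.chi n ω i) / (2 * (N:ℝ))) * M.Rw n ω j
              + 0 * (M.chi n ω j * M.Rw n ω j)
              + (1 / (N : ℝ) ^ 2) * ((1 - M.chi n ω i) * M.Rw n ω i / 2
                  - (1+s) * V'/D) / (N:ℝ)) := by
      intro j; ring
    rw [Finset.sum_congr rfl (fun j _ => (s3k i j).trans (hterm j)), hgen]
    field_simp
    ring
  have hS3 : (∑ i : Fin N, ∑ j : Fin N, ∑ k : Fin N, ((1 / (N : ℝ) ^ 2) * M.wk n k ω)
          * (((1 - M.chi n ω i) * (M.Rw n ω i + M.Rw n ω j) / 2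
              - (1 - M.chi n ω k) * M.Rw n ω k) / (N:ℝ)))
        = (U' + V') * ((N:ℝ) - y) / (2 * (N:ℝ)^3) + V' / (2 * (N:ℝ)^2)
            - (1+s) * V' / ((N:ℝ) * D) := by
    have hterm : ∀ i : Fin N,
        (1 / (N : ℝ) ^ 2) * ((1 - M.chi n ω i) * (U' + V') / (2 * (N:ℝ))
            + (1 - M.chi n ω i) * M.Rw n ω i / 2 - (1+s) * V'/D)
          = (-((1 / (N : ℝ) ^ 2) * (U' + V') / (2 * (N:ℝ)))) * M.chi n ω i
              + ((1 / (N : ℝ) ^ 2) / 2) * M.Rw n ω i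
              + (-((1 / (N : ℝ) ^ 2) / 2)) * (M.chi n ω i * M.Rw n ω i)
              + ((1 / (N : ℝ) ^ 2) * ((U' + V') / (2 * (N:ℝ)) - (1+s) * V'/D)) := by
      intro i; ring
    rw [Finset.sum_congr rfl (fun i _ => (s3j i).trans (hterm i)), hgen]
    field_simp
    ring
  -- right-hand side
  have hRHS : (1 / (N : ℝ)) • gdrift s (M.Z n ω)
      = ((1/(N:ℝ)) * (s * (y/(N:ℝ)) * (1 - y/(N:ℝ)) / (y/(N:ℝ) + (1+s) * (1 - y/(N:ℝ)))),
         (1/(N:ℝ)) * ((U'/(N:ℝ))/2 + (U'/(N:ℝ) + V'/(N:ℝ)) * (y/(N:ℝ))/2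
            - (U'/(N:ℝ)) / (y/(N:ℝ) + (1+s) * (1 - y/(N:ℝ)))),
         (1/(N:ℝ)) * ((V'/(N:ℝ))/2 + (U'/(N:ℝ) + V'/(N:ℝ)) * (1 - y/(N:ℝ))/2
            - (1+s) * (V'/(N:ℝ)) / (y/(N:ℝ) + (1+s) * (1 - y/(N:ℝ))))) := rfl
  rw [hGc, hS1, hS2, hS3, hRHS]
  have hDN : y/(N:ℝ) + (1+s) * (1 - y/(N:ℝ)) = D / (N:ℝ) := by
    rw [hDdef]
    field_simp
  rw [Prod.mk.injEq, Prod.mk.injEq, hDN]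
  refine ⟨?_, ?_, ?_⟩
  · rw [div_div_eq_mul_div]
    field_simp
    try ring
    try tauto
  · rw [div_div_eq_mul_div]
    field_simp
    try ring
    try tauto
  · rw [div_div_eq_mul_div]
    field_simp
    try ring
    try tauto

end MoranModel
namespace MoranModel

variable {N : ℕ} {s : ℝ} {Ω : Type} [MeasurableSpace Ω] (M : MoranModel N s Ω)

lemma condexp_Zdiff (hN : 2 ≤ N) (hs : 0 < s) (n : ℕ) :
    MeasureTheory.condExp (M.F n) M.P (fun ω => M.Z (n + 1) ω - M.Z n ω)
      =ᵐ[M.P] fun ω => (1 / (N : ℝ)) • gdrift s (M.Z n ω) := by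
  haveI := M.isProb
  have hm := M.F_le n
  haveI : SigmaFinite (M.P.trim hm) := by infer_instance
  -- notation
  set E : Fin N × Fin N × Fin N → Set Ω :=
    fun p => {ω | M.mo n ω = p.1 ∧ M.fa n ω = p.2.1 ∧ M.ka n ω = p.2.2} with hE
  have hE_meas : ∀ p, MeasurableSet (E p) := fun p => M.measurableSet_E n p.1 p.2.1 p.2.2
  -- decomposition of the increment
  have hdecomp : (fun ω => M.Z (n + 1) ω - M.Z n ω)
      = fun ω => ∑ p : Fin N × Fin N × Fin N,
          (E p).indicator (M.hfun n p.1 p.2.1 p.2.2) ω := by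
    funext ω
    rw [M.Zdiff_eq n ω]
    simp only [hE, Set.indicator_apply, Set.mem_setOf_eq, Fintype.sum_prod_type, ite_and,
      Finset.sum_ite_irrel, Finset.sum_const_zero, Finset.sum_ite_eq, Finset.mem_univ,
      if_true]
  -- the conditional-expectation candidate, in single-sum form
  have hGsingle : M.Gfun n = fun ω => ∑ p : Fin N × Fin N × Fin N,
      ((1 / (N : ℝ) ^ 2) * M.wk n p.2.2 ω) • M.hfun n p.1 p.2.1 p.2.2 ω := by
    funext ω
    rw [Gfun]
    simp [Fintype.sum_prod_type]
  -- integrability of the increment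
  have hf_sm : StronglyMeasurable (fun ω => M.Z (n + 1) ω - M.Z n ω) := by
    rw [hdecomp]
    exact Finset.stronglyMeasurable_fun_sum _ fun p _ =>
      (((M.smF_hfun n p.1 p.2.1 p.2.2).mono hm).indicator (hE_meas p))
  have hf_int : Integrable (fun ω => M.Z (n + 1) ω - M.Z n ω) M.P := by
    refine ⟨hf_sm.aestronglyMeasurable, ?_⟩
    apply HasFiniteIntegral.of_bounded (C := (1:ℝ))
    apply ae_of_all
    intro ω
    rw [M.Zdiff_eq n ω]
    exact M.hfun_norm_le n _ _ _ ω
  -- integrability of the candidate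
  have hwk_smul_bound : ∀ (p : Fin N × Fin N × Fin N) (ω : Ω),
      ‖((1 / (N : ℝ) ^ 2) * M.wk n p.2.2 ω) • M.hfun n p.1 p.2.1 p.2.2 ω‖
        ≤ (1 / (N : ℝ) ^ 2) * (1 + s) := by
    intro p ω
    rw [norm_smul]
    have h1 : ‖(1 / (N : ℝ) ^ 2) * M.wk n p.2.2 ω‖ ≤ (1 / (N : ℝ) ^ 2) * (1 + s) := by
      rw [Real.norm_eq_abs,
        abs_of_nonneg (mul_nonneg (by positivity) (M.wk_nonneg hN hs n p.2.2 ω))]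
      exact mul_le_mul_of_nonneg_left (M.wk_le hN hs n p.2.2 ω) (by positivity)
    calc ‖(1 / (N : ℝ) ^ 2) * M.wk n p.2.2 ω‖ * ‖M.hfun n p.1 p.2.1 p.2.2 ω‖
        ≤ ((1 / (N : ℝ) ^ 2) * (1 + s)) * 1 := by
          apply mul_le_mul h1 (M.hfun_norm_le n _ _ _ ω) (norm_nonneg _)
          positivity
      _ = (1 / (N : ℝ) ^ 2) * (1 + s) := mul_one _
  have hG_int : Integrable (M.Gfun n) M.P := by
    refine ⟨((M.smF_Gfun n).mono hm).aestronglyMeasurable, ?_⟩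
    apply HasFiniteIntegral.of_bounded
      (C := ∑ _p : Fin N × Fin N × Fin N, (1 / (N : ℝ) ^ 2) * (1 + s))
    apply ae_of_all
    intro ω
    rw [hGsingle]
    exact le_trans (norm_sum_le _ _) (Finset.sum_le_sum fun p _ => hwk_smul_bound p ω)
  -- integrability of the indicator pieces
  have hpiece_int : ∀ p : Fin N × Fin N × Fin N,
      Integrable ((E p).indicator (M.hfun n p.1 p.2.1 p.2.2)) M.P := by
    intro p
    refine ⟨(((M.smF_hfun n p.1 p.2.1 p.2.2).mono hm).indicator (hE_meas p)).aestronglyMeasurable,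
      ?_⟩
    apply HasFiniteIntegral.of_bounded (C := (1:ℝ))
    apply ae_of_all
    intro ω
    exact le_trans (norm_indicator_le_norm_self _ _) (M.hfun_norm_le n _ _ _ ω)
  -- set integrals agree
  have hg_eq : ∀ A : Set Ω, MeasurableSet[M.F n] A → M.P A < ⊤ →
      ∫ ω in A, M.Gfun n ω ∂M.P = ∫ ω in A, (M.Z (n + 1) ω - M.Z n ω) ∂M.P := by
    intro A hA _
    have hA' : MeasurableSet A := hm _ hA
    have step1 : ∫ ω in A, (M.Z (n + 1) ω - M.Z n ω) ∂M.P
        = ∑ p : Fin N × Fin N × Fin N,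
            ∫ ω in A, (E p).indicator (M.hfun n p.1 p.2.1 p.2.2) ω ∂M.P := by
      rw [show (fun ω => M.Z (n + 1) ω - M.Z n ω) = fun ω => ∑ p : Fin N × Fin N × Fin N,
          (E p).indicator (M.hfun n p.1 p.2.1 p.2.2) ω from hdecomp]
      exact integral_finset_sum _ fun p _ => (hpiece_int p).restrict
    have step2 : ∀ p : Fin N × Fin N × Fin N,
        ∫ ω in A, (E p).indicator (M.hfun n p.1 p.2.1 p.2.2) ω ∂M.P
          = ∫ ω, ((1 / (N : ℝ) ^ 2) * M.wk n p.2.2 ω)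
              • (A.indicator (M.hfun n p.1 p.2.1 p.2.2)) ω ∂M.P := by
      intro p
      rw [setIntegral_indicator (hE_meas p), Set.inter_comm, ← setIntegral_indicator hA']
      exact M.law_integral hN hs n p.1 p.2.1 p.2.2 _
        ((M.smF_hfun n p.1 p.2.1 p.2.2).indicator hA)
    have step3 : ∑ p : Fin N × Fin N × Fin N,
        ∫ ω, ((1 / (N : ℝ) ^ 2) * M.wk n p.2.2 ω)
            • (A.indicator (M.hfun n p.1 p.2.1 p.2.2)) ω ∂M.P
          = ∫ ω, ∑ p : Fin N × Fin N × Fin N, ((1 / (N : ℝ) ^ 2) * M.wk n p.2.2 ω)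
              • (A.indicator (M.hfun n p.1 p.2.1 p.2.2)) ω ∂M.P := by
      refine (integral_finset_sum _ fun p _ => ?_).symm
      refine ⟨((measurable_const.mul (M.meas_wk n p.2.2)).stronglyMeasurable.smul
        (((M.smF_hfun n p.1 p.2.1 p.2.2).mono hm).indicator (hm _ hA))).aestronglyMeasurable, ?_⟩
      apply HasFiniteIntegral.of_bounded (C := (1 / (N : ℝ) ^ 2) * (1 + s))
      apply ae_of_all
      intro ω
      rw [norm_smul]
      by_cases hω : ω ∈ A
      · rw [Set.indicator_of_mem hω]
        rw [← norm_smul]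
        exact hwk_smul_bound p ω
      · rw [Set.indicator_of_notMem hω, norm_zero, mul_zero]
        positivity
    have step4 : (fun ω => ∑ p : Fin N × Fin N × Fin N, ((1 / (N : ℝ) ^ 2) * M.wk n p.2.2 ω)
          • (A.indicator (M.hfun n p.1 p.2.1 p.2.2)) ω)
        = A.indicator (M.Gfun n) := by
      funext ω
      by_cases hω : ω ∈ A
      · rw [Set.indicator_of_mem hω, hGsingle]
        exact Finset.sum_congr rfl fun p _ => by rw [Set.indicator_of_mem hω]
      · rw [Set.indicator_of_notMem hω]
        refine Finset.sum_eq_zero fun p _ => ?_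
        rw [Set.indicator_of_notMem hω, smul_zero]
    rw [step1, Finset.sum_congr rfl (fun p _ => step2 p), step3, step4,
      integral_indicator hA']
  have hkey := ae_eq_condExp_of_forall_setIntegral_eq hm hf_int
    (fun A _ _ => hG_int.integrableOn) hg_eq
    ((M.smF_Gfun n).aestronglyMeasurable)
  have h2 : (fun ω => (1 / (N : ℝ)) • gdrift s (M.Z n ω)) = M.Gfun n :=
    funext fun ω => (M.Gfun_eq hN hs n ω).symm
  rw [h2]
  exact hkey.symm

end MoranModel
/-- The rescaled triplet `Zₙ = (Yₙ/N, Uₙ/N, Vₙ/N)` satisfies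
`‖Z_{n+1} − Zₙ‖ ≤ √3/N` almost surely, and
`𝔼(Z_{n+1} − Zₙ | ℱₙ) = (1/N) g(Zₙ)` where `g` is the drift of the limiting
dynamical system. -/
theorem moran_rescaled_increments
    (N : ℕ) (hN : 2 ≤ N) (s : ℝ) (hs : 0 < s)
    (Ω : Type) [MeasurableSpace Ω] (M : MoranModel N s Ω) :
    (∀ᵐ ω ∂M.P, ∀ n : ℕ, norm3 (M.Z (n + 1) ω - M.Z n ω) ≤ Real.sqrt 3 / N) ∧
    (∀ n : ℕ,
      MeasureTheory.condExp (M.F n) M.P (fun ω => M.Z (n + 1) ω - M.Z n ω)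
        =ᵐ[M.P] fun ω => (1 / (N : ℝ)) • gdrift s (M.Z n ω)) := by
  constructor
  · exact MeasureTheory.ae_of_all _ fun ω n => M.norm3_bound hN n ω
  · exact fun n => M.condexp_Zdiff hN hs n
end

section
/- Let s > 0 and a ∈ (0,1). The differential system y' = s y(1−y)/(y+(1+s)(1−y)), u' = u/2 + (u+v)y/2 − u/(y+(1+s)(1−y)), v' = v/2 + (u+v)(1−y)/2 − (1+s)v/(y+(1+s)(1−y)) admits a unique solution (y_t, u_t, v_t)_{t≥0} with initial condition (a, a, 0), and this solution is given explicitly by: y_t = F^{-1}(a^{1+s}/(1−a) · e^{st}) where F(x) = x^{1+s}/(1−x) maps [0,1) onto [0,∞); u_t = y_t · a^{(1+s)/(2s)} (1−a)^{−1/(2s)} [ (1−y_t)^{1/(2s)} y_t^{−(1+s)/(2s)} + ∫_a^{y_t} (1−x)^{1/(2s)} x^{−(1+s)/(2s)} (1/2 + 1/(2s(1−x))) dx ]; v_t = (1−y_t) · a^{(1+s)/(2s)} (1−a)^{−1/(2s)} ∫_a^{y_t} (1−x)^{1/(2s)} x^{−(1+s)/(2s)} (1/2 + 1/(2s(1−x)))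 dx. -/
open MeasureTheory Filter Topology
/-- A solution of the dynamical system on `[0,∞)` with values in `[0,1]³` and
initial condition `(a, a, 0)`. -/
def IsSolSys (s a : ℝ) (z : ℝ → ℝ × ℝ × ℝ) : Prop :=
  z 0 = (a, a, 0) ∧ ∀ t ∈ Set.Ici (0 : ℝ),
    z t ∈ Set.Icc (0 : ℝ) 1 ×ˢ Set.Icc (0 : ℝ) 1 ×ˢ Set.Icc (0 : ℝ) 1 ∧
    HasDerivWithinAt z (gdrift s (z t)) (Set.Ici 0) t

/-- The integral `∫_a^y (1−x)^{1/(2s)} x^{−(1+s)/(2s)} (1/2 + 1/(2s(1−x))) dx`. -/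
noncomputable def intI (s a y : ℝ) : ℝ :=
  ∫ x in a..y, (1 - x) ^ (1 / (2 * s)) / x ^ ((1 + s) / (2 * s)) *
    (1 / 2 + 1 / (2 * s) * (1 / (1 - x)))

/-- `u` expressed as a function of `y`:
`u = y ⬝ a^{(1+s)/(2s)} (1−a)^{−1/(2s)} [(1−y)^{1/(2s)} y^{−(1+s)/(2s)} + ∫_a^y ⋯ dx]`. -/
noncomputable def uval (s a y : ℝ) : ℝ :=
  y * (a ^ ((1 + s) / (2 * s)) / (1 - a) ^ (1 / (2 * s))) *
    ((1 - y) ^ (1 / (2 * s)) / y ^ ((1 + s) / (2 * s)) + intI s a y)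

/-- `v` expressed as a function of `y`:
`v = (1−y) ⬝ a^{(1+s)/(2s)} (1−a)^{−1/(2s)} ∫_a^y ⋯ dx`. -/
noncomputable def vval (s a y : ℝ) : ℝ :=
  (1 - y) * (a ^ ((1 + s) / (2 * s)) / (1 - a) ^ (1 / (2 * s))) * intI s a y

noncomputable def Fb (s x : ℝ) : ℝ := x ^ (1 + s) / (1 - x)

lemma Fb_strictMonoOn {s : ℝ} (hs : 0 < s) : StrictMonoOn (Fb s) (Set.Ico 0 1) := by
  intro x hx y hy hxy
  unfold Fb
  have h1 : x ^ (1+s) < y ^ (1+s) := Real.rpow_lt_rpow hx.1 hxy (by linarith)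
  have h2 : (0:ℝ) < 1 - y := by linarith [hy.2]
  have h3 : (0:ℝ) ≤ y ^ (1+s) := Real.rpow_nonneg hy.1 _
  exact div_lt_div₀ h1 (by linarith) h3 h2

lemma Fb_contOn {s : ℝ} (hs : 0 < s) : ContinuousOn (Fb s) (Set.Ico 0 1) := by
  apply ContinuousOn.div
  · exact continuousOn_id.rpow_const (fun x _ => Or.inr (by linarith))
  · exact (continuousOn_const.sub continuousOn_id)
  · intro x hx
    have := hx.2
    simp only [Set.mem_Ico] at hx
    show (1:ℝ) - x ≠ 0
    nlinarith [hx.2]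

lemma Fb_zero {s : ℝ} (hs : 0 < s) : Fb s 0 = 0 := by
  simp [Fb, Real.zero_rpow (by linarith : (1:ℝ)+s ≠ 0)]

lemma Fb_pos {s x : ℝ} (hs : 0 < s) (hx : x ∈ Set.Ioo (0:ℝ) 1) : 0 < Fb s x := by
  apply div_pos (Real.rpow_pos_of_pos hx.1 _) (by linarith [hx.2])

lemma Fb_exists {s : ℝ} (hs : 0 < s) {c : ℝ} (hc : 0 ≤ c) :
    ∃ x ∈ Set.Ico (0:ℝ) 1, Fb s x = c := by
  set b : ℝ := max (1/2) (1 - (1/2 : ℝ) ^ (1+s) / (c+1)) with hb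
  have hhalf : (0:ℝ) < (1/2 : ℝ) ^ (1+s) := Real.rpow_pos_of_pos (by norm_num) _
  have hb2 : b < 1 := by
    apply max_lt (by norm_num)
    have : 0 < (1/2 : ℝ) ^ (1+s) / (c+1) := by positivity
    linarith
  have hb0 : (0:ℝ) ≤ b := le_trans (by norm_num) (le_max_left _ _)
  have hbig : c ≤ Fb s b := by
    have h1 : (1/2 : ℝ) ^ (1+s) ≤ b ^ (1+s) :=
      Real.rpow_le_rpow (by norm_num) (le_max_left _ _) (by linarith)
    have h2 : 1 - b ≤ (1/2 : ℝ) ^ (1+s) / (c+1) := by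
      have := le_max_right (1/2 : ℝ) (1 - (1/2 : ℝ) ^ (1+s) / (c+1)); linarith
    have h3 : 0 < 1 - b := by linarith
    rw [Fb, le_div_iff₀ h3]
    calc c * (1-b) ≤ c * ((1/2 : ℝ) ^ (1+s) / (c+1)) := by
          apply mul_le_mul_of_nonneg_left h2 hc
      _ ≤ (1/2 : ℝ) ^ (1+s) := by
          rw [mul_div_assoc']
          rw [div_le_iff₀ (by linarith)]
          nlinarith
      _ ≤ b ^ (1+s) := h1
  obtain ⟨x, hx, hfx⟩ : ∃ x ∈ Set.Icc (0:ℝ) b, Fb s x = c := by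
    have := intermediate_value_Icc hb0 ((Fb_contOn hs).mono (by
      intro x hx; exact ⟨hx.1, lt_of_le_of_lt hx.2 hb2⟩))
    exact this ⟨by rw [Fb_zero hs]; exact hc, hbig⟩
  exact ⟨x, ⟨hx.1, lt_of_le_of_lt hx.2 hb2⟩, hfx⟩

lemma Fb_existsUnique {s : ℝ} (hs : 0 < s) {c : ℝ} (hc : 0 ≤ c) :
    ∃! x, x ∈ Set.Ico (0:ℝ) 1 ∧ Fb s x = c := by
  obtain ⟨x, hx, hfx⟩ := Fb_exists hs hc
  refine ⟨x, ⟨hx, hfx⟩, ?_⟩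
  rintro y ⟨hy, hfy⟩
  rcases lt_trichotomy y x with h | h | h
  · exact absurd (hfy.trans hfx.symm) (ne_of_lt (Fb_strictMonoOn hs hy hx h))
  · exact h
  · exact absurd (hfx.trans hfy.symm) (ne_of_lt (Fb_strictMonoOn hs hx hy h))

open Classical in
/-- inverse of `Fb s` : for `c ≥ 0` gives the unique `x ∈ [0,1)` with `Fb s x = c`. -/
noncomputable def Finv (s c : ℝ) : ℝ :=
  if h : ∃ x ∈ Set.Ico (0:ℝ) 1, Fb s x = c then h.choose else 0

lemma Finv_spec {s c : ℝ} (hs : 0 < s) (hc : 0 ≤ c) :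
    Finv s c ∈ Set.Ico (0:ℝ) 1 ∧ Fb s (Finv s c) = c := by
  have h := Fb_exists hs hc
  rw [Finv, dif_pos h]
  exact h.choose_spec

lemma Finv_eq {s c x : ℝ} (hs : 0 < s) (hc : 0 ≤ c) (hx : x ∈ Set.Ico (0:ℝ) 1)
    (hfx : Fb s x = c) : Finv s c = x := by
  obtain ⟨w, hw, huniq⟩ := Fb_existsUnique hs hc
  rw [huniq _ ⟨(Finv_spec hs hc).1, (Finv_spec hs hc).2⟩, huniq _ ⟨hx, hfx⟩]

/-- the solution `y` component. -/
noncomputable def yfun (s a t : ℝ) : ℝ := Finv s (Fb s a * Real.exp (s * t))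

lemma yfun_spec {s a : ℝ} (hs : 0 < s) (ha : a ∈ Set.Ioo (0:ℝ) 1) (t : ℝ) :
    yfun s a t ∈ Set.Ioo (0:ℝ) 1 ∧ Fb s (yfun s a t) = Fb s a * Real.exp (s * t) := by
  have hc : 0 < Fb s a * Real.exp (s * t) :=
    mul_pos (Fb_pos hs ha) (Real.exp_pos _)
  obtain ⟨hmem, heq⟩ := Finv_spec hs (le_of_lt hc) (c := Fb s a * Real.exp (s * t))
  refine ⟨⟨?_, hmem.2⟩, heq⟩
  rcases eq_or_lt_of_le hmem.1 with h | h
  · exfalso; rw [← h, Fb_zero hs] at heq; linarith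
  · exact h

lemma yfun_zero {s a : ℝ} (hs : 0 < s) (ha : a ∈ Set.Ioo (0:ℝ) 1) : yfun s a 0 = a := by
  apply Finv_eq hs (le_of_lt (mul_pos (Fb_pos hs ha) (Real.exp_pos _)))
    ⟨le_of_lt ha.1, ha.2⟩
  simp

lemma yfun_strictMono {s a : ℝ} (hs : 0 < s) (ha : a ∈ Set.Ioo (0:ℝ) 1) :
    StrictMono (yfun s a) := by
  intro t₁ t₂ h
  obtain ⟨h1m, h1e⟩ := yfun_spec hs ha t₁
  obtain ⟨h2m, h2e⟩ := yfun_spec hs ha t₂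
  by_contra hle
  push_neg at hle
  have : Fb s (yfun s a t₂) ≤ Fb s (yfun s a t₁) := by
    rcases eq_or_lt_of_le hle with h' | h'
    · rw [h']
    · exact le_of_lt <| Fb_strictMonoOn hs ⟨le_of_lt h2m.1, h2m.2⟩ ⟨le_of_lt h1m.1, h1m.2⟩ h'
  rw [h1e, h2e] at this
  have he : Real.exp (s * t₁) < Real.exp (s * t₂) :=
    Real.exp_lt_exp.2 (by nlinarith)
  nlinarith [Fb_pos hs ha]

lemma yfun_surj {s a : ℝ} (hs : 0 < s) (ha : a ∈ Set.Ioo (0:ℝ) 1) {x : ℝ}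
    (hx : x ∈ Set.Ioo (0:ℝ) 1) : ∃ t, yfun s a t = x := by
  refine ⟨(Real.log (Fb s x) - Real.log (Fb s a)) / s, ?_⟩
  have key : Fb s a * Real.exp (s * ((Real.log (Fb s x) - Real.log (Fb s a)) / s)) = Fb s x := by
    rw [mul_div_assoc', mul_comm s _, mul_div_assoc, div_self (ne_of_gt hs), mul_one,
      Real.exp_sub, Real.exp_log (Fb_pos hs hx), Real.exp_log (Fb_pos hs ha)]
    field_simp [ne_of_gt (Fb_pos hs ha)]
  apply Finv_eq hs (by rw [key]; exact le_of_lt (Fb_pos hs hx)) ⟨le_of_lt hx.1, hx.2⟩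
  exact key.symm

lemma yfun_continuousAt {s a : ℝ} (hs : 0 < s) (ha : a ∈ Set.Ioo (0:ℝ) 1) (t : ℝ) :
    ContinuousAt (yfun s a) t := by
  apply StrictMonoOn.continuousAt_of_image_mem_nhds
    ((yfun_strictMono hs ha).strictMonoOn Set.univ) Filter.univ_mem
  have himg : yfun s a '' Set.univ = Set.Ioo 0 1 := by
    apply Set.Subset.antisymm
    · rintro _ ⟨t', -, rfl⟩; exact (yfun_spec hs ha t').1
    · intro x hx
      obtain ⟨t', ht'⟩ := yfun_surj hs ha hx
      exact ⟨t', trivial, ht'⟩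
  rw [himg]
  exact Ioo_mem_nhds (yfun_spec hs ha t).1.1 (yfun_spec hs ha t).1.2

lemma hasDerivAt_Fb {s x : ℝ} (hs : 0 < s) (hx : x ∈ Set.Ioo (0:ℝ) 1) :
    HasDerivAt (Fb s) (x ^ s * (1 + s * (1 - x)) / (1 - x) ^ 2) x := by
  have hx0 : x ≠ 0 := ne_of_gt hx.1
  have hx1 : (1:ℝ) - x ≠ 0 := by have := hx.2; intro h; linarith [(sub_eq_zero.1 h)]
  have h1 : HasDerivAt (fun x : ℝ => x ^ (1+s)) ((1+s) * x ^ s) x := by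
    have := Real.hasDerivAt_rpow_const (p := 1+s) (Or.inl hx0)
    convert this using 2
    norm_num
  have h2 : HasDerivAt (fun x : ℝ => 1 - x) (-1) x := by
    simpa using (hasDerivAt_id x).const_sub 1
  have := h1.div h2 hx1
  refine this.congr_deriv ?_
  rw [Real.rpow_add hx.1 1 s, Real.rpow_one]
  field_simp
  ring

lemma yfun_hasDerivAt {s a : ℝ} (hs : 0 < s) (ha : a ∈ Set.Ioo (0:ℝ) 1) (t : ℝ) :
    HasDerivAt (yfun s a)
      (s * yfun s a t * (1 - yfun s a t) /
        (yfun s a t + (1 + s) * (1 - yfun s a t))) t := by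
  set y := yfun s a t with hy
  obtain ⟨hymem, hyeq⟩ := yfun_spec hs ha t
  have hy0 : (0:ℝ) < y := hymem.1
  have hy1 : y < 1 := hymem.2
  have hFy : 0 < Fb s y := Fb_pos hs hymem
  have hFa : 0 < Fb s a := Fb_pos hs ha
  have hD : 0 < 1 + s * (1 - y) := by nlinarith
  have hF' : HasDerivAt (Fb s) (y ^ s * (1 + s * (1 - y)) / (1 - y) ^ 2) y :=
    hasDerivAt_Fb hs hymem
  set τ : ℝ → ℝ := fun x => (Real.log (Fb s x) - Real.log (Fb s a)) / s with hτ
  have hτderiv : HasDerivAt τ ((y ^ s * (1 + s * (1 - y)) / (1 - y) ^ 2) / Fb s y / s) y :=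
    ((hF'.log (ne_of_gt hFy)).sub_const _).div_const s
  have hτy : ∀ t' : ℝ, τ (yfun s a t') = t' := by
    intro t'
    rw [hτ]
    simp only
    rw [(yfun_spec hs ha t').2, Real.log_mul (ne_of_gt hFa) (ne_of_gt (Real.exp_pos _)),
      Real.log_exp]
    field_simp
    ring
  have h1y : (0:ℝ) < 1 - y := by linarith
  have hne : (y ^ s * (1 + s * (1 - y)) / (1 - y) ^ 2) / Fb s y / s ≠ 0 := by
    have hys : (0:ℝ) < y ^ s := Real.rpow_pos_of_pos hy0 _
    positivity
  have := HasDerivAt.of_local_left_inverse (yfun_continuousAt hs ha t)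
    (hτderiv : HasDerivAt τ _ (yfun s a t)) hne
    (Filter.Eventually.of_forall hτy)
  refine this.congr_deriv ?_
  rw [Fb]
  have hys : (0:ℝ) < y ^ s := Real.rpow_pos_of_pos hy0 _
  have h1y : (0:ℝ) < 1 - y := by linarith
  have hyy : y ^ (1+s) = y * y ^ s := by
    rw [Real.rpow_add hy0 1 s, Real.rpow_one]
  rw [hyy]
  clear hyy
  have hD2 : y + (1 + s) * (1 - y) = 1 + s * (1-y) := by ring
  rw [hD2]
  field_simp

/-- the integrand of `intI`. -/
noncomputable def igr (s x : ℝ) : ℝ :=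
  (1 - x) ^ (1 / (2 * s)) / x ^ ((1 + s) / (2 * s)) * (1 / 2 + 1 / (2 * s) * (1 / (1 - x)))

lemma intI_eq (s a y : ℝ) : intI s a y = ∫ x in a..y, igr s x := rfl

lemma igr_contAt {s x : ℝ} (hs : 0 < s) (hx : x ∈ Set.Ioo (0:ℝ) 1) :
    ContinuousAt (igr s) x := by
  have hx0 : x ≠ 0 := ne_of_gt hx.1
  have hx1 : (1:ℝ) - x ≠ 0 := by have := hx.2; intro h; nlinarith
  have h1 : ContinuousAt (fun x : ℝ => (1 - x) ^ (1 / (2*s))) x :=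
    ((continuous_const.sub continuous_id).continuousAt).rpow_const (Or.inl hx1)
  have h2 : ContinuousAt (fun x : ℝ => x ^ ((1+s) / (2*s))) x :=
    continuousAt_id.rpow_const (Or.inl hx0)
  have h2' : x ^ ((1+s)/(2*s)) ≠ 0 := ne_of_gt (Real.rpow_pos_of_pos hx.1 _)
  exact (h1.div h2 h2').mul
    (continuousAt_const.add (continuousAt_const.mul
      (continuousAt_const.div ((continuous_const.sub continuous_id).continuousAt) hx1)))

lemma igr_nonneg {s x : ℝ} (hs : 0 < s) (hx0 : 0 ≤ x) (hx1 : x ≤ 1) : 0 ≤ igr s x := by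
  rcases eq_or_lt_of_le hx1 with h | h
  · subst h
    simp [igr, Real.zero_rpow (by positivity : 1 / (2*s) ≠ 0)]
    positivity
  · have h1 : (0:ℝ) < 1 - x := by linarith
    have hB : (0:ℝ) ≤ (1 - x) ^ (1 / (2*s)) := Real.rpow_nonneg (by linarith) _
    have hA : (0:ℝ) ≤ x ^ ((1+s) / (2*s)) := Real.rpow_nonneg hx0 _
    have hC : (0:ℝ) ≤ 1/2 + 1/(2*s) * (1/(1-x)) := by positivity
    have := div_nonneg hB hA
    unfold igr
    positivity

lemma intI_hasDerivAt {s a y : ℝ} (hs : 0 < s) (ha : a ∈ Set.Ioo (0:ℝ) 1)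
    (hy : y ∈ Set.Ioo (0:ℝ) 1) : HasDerivAt (fun y => intI s a y) (igr s y) y := by
  have hsub : Set.uIcc a y ⊆ Set.Ioo (0:ℝ) 1 :=
    Set.OrdConnected.uIcc_subset Set.ordConnected_Ioo ha hy
  have hint : IntervalIntegrable (igr s) volume a y := by
    apply ContinuousOn.intervalIntegrable
    exact fun x hx => ((igr_contAt hs (hsub hx)).continuousWithinAt)
  have hmeas : StronglyMeasurableAtFilter (igr s) (𝓝 y) volume :=
    ContinuousAt.stronglyMeasurableAtFilter isOpen_Ioo
      (fun x hx => igr_contAt hs hx) y hy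
  simpa only [intI_eq] using
    intervalIntegral.integral_hasDerivAt_right hint hmeas (igr_contAt hs hy)

/-- the constant `c = a^{(1+s)/(2s)} / (1-a)^{1/(2s)}`. -/
noncomputable def cc (s a : ℝ) : ℝ := a ^ ((1 + s) / (2 * s)) / (1 - a) ^ (1 / (2 * s))

lemma uval_eq (s a y : ℝ) :
    uval s a y = y * cc s a * ((1 - y) ^ (1 / (2*s)) / y ^ ((1+s) / (2*s)) + intI s a y) := rfl

lemma vval_eq (s a y : ℝ) : vval s a y = (1 - y) * cc s a * intI s a y := rfl

lemma hasDerivAt_phipart {s y : ℝ} (hs : 0 < s) (hy : y ∈ Set.Ioo (0:ℝ) 1) :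
    HasDerivAt (fun y : ℝ => (1 - y) ^ (1 / (2*s)) / y ^ ((1+s) / (2*s)))
      ((1 / (2*s) * (1 - y) ^ (1 / (2*s) - 1) * (-1) * y ^ ((1+s)/(2*s))
        - (1 - y) ^ (1 / (2*s)) * ((1+s)/(2*s) * y ^ ((1+s)/(2*s) - 1)))
        / (y ^ ((1+s)/(2*s))) ^ 2) y := by
  have hy0 : y ≠ 0 := ne_of_gt hy.1
  have h1y : (1:ℝ) - y ≠ 0 := by have := hy.2; intro h; nlinarith
  have hnum : HasDerivAt (fun y : ℝ => (1 - y) ^ (1 / (2*s)))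
      (1 / (2*s) * (1 - y) ^ (1 / (2*s) - 1) * (-1)) y := by
    have hin : HasDerivAt (fun y : ℝ => 1 - y) (-1) y := by
      simpa using (hasDerivAt_id y).const_sub 1
    exact (Real.hasDerivAt_rpow_const (p := 1/(2*s)) (Or.inl h1y)).comp y hin
  have hden : HasDerivAt (fun y : ℝ => y ^ ((1+s)/(2*s)))
      ((1+s)/(2*s) * y ^ ((1+s)/(2*s) - 1)) y :=
    Real.hasDerivAt_rpow_const (Or.inl hy0)
  exact hnum.div hden (ne_of_gt (Real.rpow_pos_of_pos hy.1 _))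

lemma uval_hasDerivAt {s a y : ℝ} (hs : 0 < s) (ha : a ∈ Set.Ioo (0:ℝ) 1)
    (hy : y ∈ Set.Ioo (0:ℝ) 1) :
    HasDerivAt (uval s a)
      (1 * cc s a * ((1 - y) ^ (1 / (2*s)) / y ^ ((1+s) / (2*s)) + intI s a y)
       + y * cc s a *
        (((1 / (2*s) * (1 - y) ^ (1 / (2*s) - 1) * (-1) * y ^ ((1+s)/(2*s))
          - (1 - y) ^ (1 / (2*s)) * ((1+s)/(2*s) * y ^ ((1+s)/(2*s) - 1)))
          / (y ^ ((1+s)/(2*s))) ^ 2) + igr s y)) y := by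
  have h := (((hasDerivAt_id y).mul_const (cc s a)).mul
    ((hasDerivAt_phipart hs hy).add (intI_hasDerivAt hs ha hy)))
  exact h

lemma vval_hasDerivAt {s a y : ℝ} (hs : 0 < s) (ha : a ∈ Set.Ioo (0:ℝ) 1)
    (hy : y ∈ Set.Ioo (0:ℝ) 1) :
    HasDerivAt (vval s a)
      ((-1) * cc s a * intI s a y + (1 - y) * cc s a * igr s y) y := by
  have hin : HasDerivAt (fun y : ℝ => 1 - y) (-1) y := by
    simpa using (hasDerivAt_id y).const_sub 1
  have h := ((hin.mul_const (cc s a)).mul (intI_hasDerivAt hs ha hy))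
  exact h

lemma keyU (s y A B I c : ℝ) (hs : 0 < s) (hy0 : 0 < y) (hy1 : y < 1) (hA : A ≠ 0) :
    (1 * c * (B / A + I)
     + y * c * ((1 / (2*s) * (B / (1-y)) * (-1) * A - B * ((1+s)/(2*s) * (A / y))) / A ^ 2
        + B / A * (1/2 + 1/(2*s) * (1/(1-y))))) * (s * y * (1 - y) / (y + (1+s) * (1-y)))
    = (y * c * (B / A + I)) / 2
      + ((y * c * (B / A + I)) + ((1-y) * c * I)) * y / 2
      - (y * c * (B / A + I)) / (y + (1+s) * (1-y)) := by
  have h1y : (1:ℝ) - y ≠ 0 := by intro h; nlinarith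
  have hD : y + (1+s) * (1-y) ≠ 0 := by nlinarith
  have hs' : s ≠ 0 := ne_of_gt hs
  have hy' : y ≠ 0 := ne_of_gt hy0
  obtain ⟨D, hDd⟩ : ∃ D, D = y + (1+s) * (1-y) := ⟨_, rfl⟩
  rw [← hDd] at hD ⊢
  field_simp
  subst hDd
  ring

lemma keyV (s y A B I c : ℝ) (hs : 0 < s) (hy0 : 0 < y) (hy1 : y < 1) (hA : A ≠ 0) :
    ((-1) * c * I + (1-y) * c * (B / A * (1/2 + 1/(2*s) * (1/(1-y)))))
      * (s * y * (1 - y) / (y + (1+s) * (1-y)))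
    = ((1-y) * c * I) / 2
      + ((y * c * (B / A + I)) + ((1-y) * c * I)) * (1-y) / 2
      - (1+s) * ((1-y) * c * I) / (y + (1+s) * (1-y)) := by
  have h1y : (1:ℝ) - y ≠ 0 := by intro h; nlinarith
  have hD : y + (1+s) * (1-y) ≠ 0 := by nlinarith
  have hs' : s ≠ 0 := ne_of_gt hs
  have hy' : y ≠ 0 := ne_of_gt hy0
  obtain ⟨D, hDd⟩ : ∃ D, D = y + (1+s) * (1-y) := ⟨_, rfl⟩
  rw [← hDd] at hD ⊢
  field_simp
  subst hDd
  ring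

/-- the candidate solution. -/
noncomputable def zsol (s a t : ℝ) : ℝ × ℝ × ℝ :=
  (yfun s a t, uval s a (yfun s a t), vval s a (yfun s a t))

lemma zsol_hasDerivAt {s a : ℝ} (hs : 0 < s) (ha : a ∈ Set.Ioo (0:ℝ) 1) (t : ℝ) :
    HasDerivAt (zsol s a) (gdrift s (zsol s a t)) t := by
  set y := yfun s a t with hydef
  obtain ⟨hy, -⟩ := yfun_spec hs ha t
  have hy0 : y ≠ 0 := ne_of_gt hy.1
  have h1y : (1:ℝ) - y ≠ 0 := by have := hy.2; intro h; nlinarith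
  have hA : y ^ ((1+s)/(2*s)) ≠ 0 := ne_of_gt (Real.rpow_pos_of_pos hy.1 _)
  have hyd := yfun_hasDerivAt hs ha t
  have hu : HasDerivAt (fun t => uval s a (yfun s a t))
      (uval s a y / 2 + (uval s a y + vval s a y) * y / 2
        - uval s a y / (y + (1+s) * (1-y))) t := by
    have h := HasDerivAt.comp t (uval_hasDerivAt hs ha hy) hyd
    refine h.congr_deriv ?_
    rw [← hydef]
    simp only [igr, uval_eq, vval_eq]
    rw [Real.rpow_sub_one h1y, Real.rpow_sub_one hy0]
    exact (keyU s y _ _ _ _ hs hy.1 hy.2 hA)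
  have hv : HasDerivAt (fun t => vval s a (yfun s a t))
      (vval s a y / 2 + (uval s a y + vval s a y) * (1-y) / 2
        - (1+s) * vval s a y / (y + (1+s) * (1-y))) t := by
    have h := HasDerivAt.comp t (vval_hasDerivAt hs ha hy) hyd
    refine h.congr_deriv ?_
    rw [← hydef]
    simp only [igr, uval_eq, vval_eq]
    exact (keyV s y _ _ _ _ hs hy.1 hy.2 hA)
  have := hyd.prodMk (hu.prodMk hv)
  exact this

lemma cc_pos {s a : ℝ} (hs : 0 < s) (ha : a ∈ Set.Ioo (0:ℝ) 1) : 0 < cc s a := by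
  have h1 : (0:ℝ) < a ^ ((1+s)/(2*s)) := Real.rpow_pos_of_pos ha.1 _
  have h2 : (0:ℝ) < (1-a) ^ (1/(2*s)) := Real.rpow_pos_of_pos (by linarith [ha.2]) _
  exact div_pos h1 h2

lemma cc_phi_a {s a : ℝ} (hs : 0 < s) (ha : a ∈ Set.Ioo (0:ℝ) 1) :
    cc s a * ((1 - a) ^ (1 / (2*s)) / a ^ ((1+s) / (2*s))) = 1 := by
  have h1 : (0:ℝ) < a ^ ((1+s)/(2*s)) := Real.rpow_pos_of_pos ha.1 _
  have h2 : (0:ℝ) < (1-a) ^ (1/(2*s)) := Real.rpow_pos_of_pos (by linarith [ha.2]) _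
  rw [cc]
  field_simp
  exact div_self (ne_of_gt (mul_pos (Real.rpow_pos_of_pos ha.1 _) (Real.rpow_pos_of_pos (by linarith [ha.2]) _)))

lemma intI_self (s a : ℝ) : intI s a a = 0 := intervalIntegral.integral_same

lemma uval_a {s a : ℝ} (hs : 0 < s) (ha : a ∈ Set.Ioo (0:ℝ) 1) : uval s a a = a := by
  rw [uval_eq, intI_self, add_zero, mul_assoc, cc_phi_a hs ha, mul_one]

lemma vval_a {s a : ℝ} (hs : 0 < s) (ha : a ∈ Set.Ioo (0:ℝ) 1) : vval s a a = 0 := by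
  rw [vval_eq, intI_self, mul_zero]

lemma intI_nonneg {s a y : ℝ} (hs : 0 < s) (ha : a ∈ Set.Ioo (0:ℝ) 1)
    (hay : a ≤ y) (hy1 : y ≤ 1) : 0 ≤ intI s a y := by
  rw [intI_eq]
  apply intervalIntegral.integral_nonneg hay
  intro x hx
  exact igr_nonneg hs (le_trans (le_of_lt ha.1) hx.1) (le_trans hx.2 hy1)

/-- `p = u/y` as a function of `y`. -/
noncomputable def pfun (s a y : ℝ) : ℝ :=
  cc s a * ((1 - y) ^ (1 / (2*s)) / y ^ ((1+s) / (2*s)) + intI s a y)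

lemma keyP (s y A B : ℝ) (hs : 0 < s) (hy0 : 0 < y) (hy1 : y < 1) (hA : A ≠ 0) :
    (1 / (2*s) * (B / (1-y)) * (-1) * A - B * ((1+s)/(2*s) * (A / y))) / A ^ 2
      + B / A * (1/2 + 1/(2*s) * (1/(1-y)))
    = B / A * (1/2 - (1+s)/(2*s*y)) := by
  have h1y : (1:ℝ) - y ≠ 0 := by intro h; nlinarith
  have hs' : s ≠ 0 := ne_of_gt hs
  have hy' : y ≠ 0 := ne_of_gt hy0
  field_simp
  ring

lemma pfun_hasDerivAt {s a y : ℝ} (hs : 0 < s) (ha : a ∈ Set.Ioo (0:ℝ) 1)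
    (hy : y ∈ Set.Ioo (0:ℝ) 1) :
    HasDerivAt (pfun s a)
      (cc s a * ((1 - y) ^ (1 / (2*s)) / y ^ ((1+s) / (2*s)) * (1/2 - (1+s)/(2*s*y)))) y := by
  have hy0 : y ≠ 0 := ne_of_gt hy.1
  have h1y : (1:ℝ) - y ≠ 0 := by have := hy.2; intro h; nlinarith
  have hA : y ^ ((1+s)/(2*s)) ≠ 0 := ne_of_gt (Real.rpow_pos_of_pos hy.1 _)
  have h := ((hasDerivAt_phipart hs hy).add (intI_hasDerivAt hs ha hy)).const_mul (cc s a)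
  refine h.congr_deriv ?_
  simp only [igr]
  rw [Real.rpow_sub_one h1y, Real.rpow_sub_one hy0]
  rw [keyP s y _ _ hs hy.1 hy.2 hA]

lemma pfun_a {s a : ℝ} (hs : 0 < s) (ha : a ∈ Set.Ioo (0:ℝ) 1) : pfun s a a = 1 := by
  rw [pfun, intI_self, add_zero, cc_phi_a hs ha]

lemma pfun_nonneg {s a y : ℝ} (hs : 0 < s) (ha : a ∈ Set.Ioo (0:ℝ) 1)
    (hy : y ∈ Set.Ico a 1) : 0 ≤ pfun s a y := by
  have hy0 : (0:ℝ) < y := lt_of_lt_of_le ha.1 hy.1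
  have hB : (0:ℝ) ≤ (1-y) ^ (1/(2*s)) := Real.rpow_nonneg (by linarith [hy.2]) _
  have hA : (0:ℝ) < y ^ ((1+s)/(2*s)) := Real.rpow_pos_of_pos hy0 _
  have hI : 0 ≤ intI s a y := intI_nonneg hs ha hy.1 (le_of_lt hy.2)
  have := cc_pos hs ha
  have := div_nonneg hB (le_of_lt hA)
  rw [pfun]; positivity

lemma pfun_le_one {s a y : ℝ} (hs : 0 < s) (ha : a ∈ Set.Ioo (0:ℝ) 1)
    (hy : y ∈ Set.Ico a 1) : pfun s a y ≤ 1 := by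
  have hsub : Set.Ico a 1 ⊆ Set.Ioo (0:ℝ) 1 := fun x hx =>
    ⟨lt_of_lt_of_le ha.1 hx.1, hx.2⟩
  have hanti : AntitoneOn (pfun s a) (Set.Ico a 1) := by
    apply antitoneOn_of_deriv_nonpos (convex_Ico a 1)
    · intro x hx
      exact (pfun_hasDerivAt hs ha (hsub hx)).differentiableAt.continuousAt.continuousWithinAt
    · intro x hx
      rw [interior_Ico] at hx
      exact (pfun_hasDerivAt hs ha (hsub ⟨le_of_lt hx.1, hx.2⟩)).differentiableAt.differentiableWithinAt
    · intro x hx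
      rw [interior_Ico] at hx
      have hxm := hsub ⟨le_of_lt hx.1, hx.2⟩
      rw [(pfun_hasDerivAt hs ha hxm).deriv]
      have hB : (0:ℝ) ≤ (1-x) ^ (1/(2*s)) := Real.rpow_nonneg (by linarith [hxm.2]) _
      have hA : (0:ℝ) < x ^ ((1+s)/(2*s)) := Real.rpow_pos_of_pos hxm.1 _
      have hneg : 1/2 - (1+s)/(2*s*x) ≤ 0 := by
        rw [sub_nonpos, div_le_div_iff₀ (by norm_num) (by nlinarith [mul_pos hs hxm.1] : (0:ℝ) < 2*s*x)]
        nlinarith [hxm.1, hxm.2]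
      have hcc := cc_pos hs ha
      have hBA : (0:ℝ) ≤ (1-x) ^ (1/(2*s)) / x ^ ((1+s)/(2*s)) := div_nonneg hB (le_of_lt hA)
      have := mul_nonpos_of_nonneg_of_nonpos hBA hneg
      exact mul_nonpos_of_nonneg_of_nonpos (le_of_lt hcc) this
  calc pfun s a y ≤ pfun s a a := hanti ⟨le_refl a, ha.2⟩ hy hy.1
    _ = 1 := pfun_a hs ha

lemma uval_mem {s a y : ℝ} (hs : 0 < s) (ha : a ∈ Set.Ioo (0:ℝ) 1)
    (hy : y ∈ Set.Ico a 1) : uval s a y ∈ Set.Icc (0:ℝ) 1 := by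
  have hy0 : (0:ℝ) < y := lt_of_lt_of_le ha.1 hy.1
  have hp0 := pfun_nonneg hs ha hy
  have hp1 := pfun_le_one hs ha hy
  have huv : uval s a y = y * pfun s a y := by rw [uval_eq, pfun]; ring
  rw [huv]
  constructor
  · positivity
  · calc y * pfun s a y ≤ 1 * 1 :=
        mul_le_mul (le_of_lt hy.2) hp1 hp0 (by norm_num)
    _ = 1 := by norm_num

lemma vval_mem {s a y : ℝ} (hs : 0 < s) (ha : a ∈ Set.Ioo (0:ℝ) 1)
    (hy : y ∈ Set.Ico a 1) : vval s a y ∈ Set.Icc (0:ℝ) 1 := by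
  have hy0 : (0:ℝ) < y := lt_of_lt_of_le ha.1 hy.1
  have h1y : (0:ℝ) < 1 - y := by linarith [hy.2]
  have hI : 0 ≤ intI s a y := intI_nonneg hs ha hy.1 (le_of_lt hy.2)
  have hcc := cc_pos hs ha
  constructor
  · rw [vval_eq]; positivity
  · have hB : (0:ℝ) ≤ (1-y) ^ (1/(2*s)) := Real.rpow_nonneg (by linarith) _
    have hA : (0:ℝ) < y ^ ((1+s)/(2*s)) := Real.rpow_pos_of_pos hy0 _
    have hqp : cc s a * intI s a y ≤ pfun s a y := by
      rw [pfun]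
      have : 0 ≤ cc s a * ((1-y) ^ (1/(2*s)) / y ^ ((1+s)/(2*s))) := by positivity
      nlinarith
    have hp1 := pfun_le_one hs ha hy
    have hvv : vval s a y = (1-y) * (cc s a * intI s a y) := by rw [vval_eq]; ring
    rw [hvv]
    calc (1-y) * (cc s a * intI s a y) ≤ 1 * 1 := by
          apply mul_le_mul (by linarith) (le_trans hqp hp1) (by positivity) (by norm_num)
    _ = 1 := by norm_num

lemma zsol_isSol {s a : ℝ} (hs : 0 < s) (ha : a ∈ Set.Ioo (0:ℝ) 1) :
    IsSolSys s a (zsol s a) := by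
  constructor
  · rw [zsol, yfun_zero hs ha, uval_a hs ha, vval_a hs ha]
  · intro t ht
    have hy := (yfun_spec hs ha t).1
    have hya : a ≤ yfun s a t := by
      calc a = yfun s a 0 := (yfun_zero hs ha).symm
        _ ≤ yfun s a t := (yfun_strictMono hs ha).monotone ht
    have hyIco : yfun s a t ∈ Set.Ico a 1 := ⟨hya, hy.2⟩
    refine ⟨⟨⟨le_of_lt hy.1, le_of_lt hy.2⟩, uval_mem hs ha hyIco, vval_mem hs ha hyIco⟩, ?_⟩
    exact (zsol_hasDerivAt hs ha t).hasDerivWithinAt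

lemma gdrift_lipschitz {s : ℝ} (hs : 0 < s) :
    ∃ K : NNReal, LipschitzOnWith K (gdrift s)
      (Set.Icc (0:ℝ) 1 ×ˢ Set.Icc (0:ℝ) 1 ×ˢ Set.Icc (0:ℝ) 1) := by
  set cube : Set (ℝ × ℝ × ℝ) := Set.Icc (0:ℝ) 1 ×ˢ Set.Icc (0:ℝ) 1 ×ˢ Set.Icc (0:ℝ) 1
    with hcube
  set U : Set (ℝ × ℝ × ℝ) := {p | 0 < p.1 + (1+s) * (1 - p.1)} with hU
  have hUopen : IsOpen U := by
    have : Continuous (fun p : ℝ × ℝ × ℝ => p.1 + (1+s) * (1 - p.1)) := by continuity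
    exact isOpen_lt continuous_const this
  have hsub : cube ⊆ U := by
    rintro ⟨y, u, v⟩ ⟨hy, -, -⟩
    simp only [hU, Set.mem_setOf_eq]
    have h1 : y + (1+s) * (1 - y) = 1 + s * (1 - y) := by ring
    rw [h1]
    nlinarith [hy.1, hy.2]
  have hden : ContDiff ℝ 1 (fun p : ℝ × ℝ × ℝ => p.1 + (1+s) * (1 - p.1)) :=
    contDiff_fst.add (contDiff_const.mul (contDiff_const.sub contDiff_fst))
  have hdne : ∀ p ∈ U, p.1 + (1+s) * (1 - p.1) ≠ 0 := fun p hp => ne_of_gt hp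
  have hp21 : ContDiff ℝ 1 (fun p : ℝ × ℝ × ℝ => p.2.1) := contDiff_fst.comp contDiff_snd
  have hp22 : ContDiff ℝ 1 (fun p : ℝ × ℝ × ℝ => p.2.2) := contDiff_snd.comp contDiff_snd
  have hcd : ContDiffOn ℝ 1 (gdrift s) U := by
    apply ContDiffOn.prodMk
    · exact (((contDiff_const.mul contDiff_fst).mul
        (contDiff_const.sub contDiff_fst)).contDiffOn).div hden.contDiffOn hdne
    apply ContDiffOn.prodMk
    · apply ContDiffOn.sub
      · exact ((hp21.div_const 2).add (((hp21.add hp22).mul contDiff_fst).div_const 2)).contDiffOn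
      · exact (hp21.contDiffOn).div hden.contDiffOn hdne
    · apply ContDiffOn.sub
      · exact ((hp22.div_const 2).add (((hp21.add hp22).mul
          (contDiff_const.sub contDiff_fst)).div_const 2)).contDiffOn
      · exact ((contDiff_const.mul hp22).contDiffOn).div hden.contDiffOn hdne
  have hdiff : ∀ p ∈ cube, DifferentiableAt ℝ (gdrift s) p := by
    intro p hp
    exact (hcd.contDiffAt (hUopen.mem_nhds (hsub hp))).differentiableAt one_ne_zero
  have hfc : ContinuousOn (fderiv ℝ (gdrift s)) cube :=
    (hcd.continuousOn_fderiv_of_isOpen hUopen le_rfl).mono hsub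
  have hcomp : IsCompact cube :=
    (isCompact_Icc.prod (isCompact_Icc.prod isCompact_Icc))
  obtain ⟨C, hC⟩ := hcomp.exists_bound_of_continuousOn hfc
  refine ⟨C.toNNReal, ?_⟩
  apply Convex.lipschitzOnWith_of_nnnorm_fderiv_le hdiff
  · intro p hp
    have := hC p hp
    rw [← NNReal.coe_le_coe, coe_nnnorm, Real.coe_toNNReal]
    · exact this
    · exact le_trans (norm_nonneg _) this
  · exact (convex_Icc _ _).prod ((convex_Icc _ _).prod (convex_Icc _ _))

lemma sol_unique {s a : ℝ} (hs : 0 < s) (ha : a ∈ Set.Ioo (0:ℝ) 1)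
    (z₁ z₂ : ℝ → ℝ × ℝ × ℝ) (h1 : IsSolSys s a z₁) (h2 : IsSolSys s a z₂) :
    Set.EqOn z₁ z₂ (Set.Ici 0) := by
  obtain ⟨K, hK⟩ := gdrift_lipschitz hs
  intro t ht
  simp only [Set.mem_Ici] at ht
  set cube : Set (ℝ × ℝ × ℝ) := Set.Icc (0:ℝ) 1 ×ˢ Set.Icc (0:ℝ) 1 ×ˢ Set.Icc (0:ℝ) 1
  have key : ∀ z : ℝ → ℝ × ℝ × ℝ, IsSolSys s a z →
      (ContinuousOn z (Set.Icc 0 t) ∧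
        (∀ t' ∈ Set.Ico (0:ℝ) t, HasDerivWithinAt z (gdrift s (z t')) (Set.Ici t') t') ∧
        (∀ t' ∈ Set.Ico (0:ℝ) t, z t' ∈ cube)) := by
    intro z hz
    refine ⟨?_, ?_, ?_⟩
    · intro t' ht'
      exact (((hz.2 t' ht'.1).2).continuousWithinAt).mono
        (fun x hx => hx.1)
    · intro t' ht'
      exact ((hz.2 t' ht'.1).2).mono (Set.Ici_subset_Ici.2 ht'.1)
    · intro t' ht'
      exact (hz.2 t' ht'.1).1
  obtain ⟨h1c, h1d, h1s⟩ := key z₁ h1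
  obtain ⟨h2c, h2d, h2s⟩ := key z₂ h2
  exact ODE_solution_unique_of_mem_Icc_right (v := fun _ p => gdrift s p)
    (s := fun _ => cube) (fun _ _ => hK) h1c h1d h1s h2c h2d h2s
    (by rw [h1.1, h2.1]) (Set.mem_Icc.2 ⟨ht, le_refl t⟩)

/-- The dynamical system `z' = g(z)` admits a unique solution on `[0,∞)` with initial
condition `(a, a, 0)`, and this solution is given explicitly by:
`y_t = F⁻¹(a^{1+s}/(1−a) eˢᵗ)` where `F : x ↦ x^{1+s}/(1−x)` maps `[0,1)` onto `[0,∞)`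
(characterized by `y_t ∈ [0,1)` and `F(y_t) = a^{1+s}/(1−a) eˢᵗ`), and `u_t, v_t` are the
explicit functions `uval`, `vval` of `y_t`. -/
theorem dynamical_system_unique_solution
    (s a : ℝ) (hs : 0 < s) (ha : a ∈ Set.Ioo (0 : ℝ) 1) :
    (∃ z : ℝ → ℝ × ℝ × ℝ, IsSolSys s a z) ∧
    (∀ z₁ z₂ : ℝ → ℝ × ℝ × ℝ, IsSolSys s a z₁ → IsSolSys s a z₂ →
      Set.EqOn z₁ z₂ (Set.Ici 0)) ∧
    (∀ z : ℝ → ℝ × ℝ × ℝ, IsSolSys s a z → ∀ t ∈ Set.Ici (0 : ℝ),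
      ((z t).1 ∈ Set.Ico (0 : ℝ) 1 ∧
        (z t).1 ^ (1 + s) / (1 - (z t).1) = a ^ (1 + s) / (1 - a) * Real.exp (s * t)) ∧
      (z t).2.1 = uval s a (z t).1 ∧
      (z t).2.2 = vval s a (z t).1) := by
  refine ⟨⟨zsol s a, zsol_isSol hs ha⟩, sol_unique hs ha, ?_⟩
  intro z hz t ht
  have hzt : z t = zsol s a t :=
    sol_unique hs ha z (zsol s a) hz (zsol_isSol hs ha) ht
  rw [hzt]
  obtain ⟨hy, hF⟩ := yfun_spec hs ha t
  refine ⟨⟨⟨le_of_lt hy.1, hy.2⟩, ?_⟩, rfl, rfl⟩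
  exact hF
end

section
/- Let s > 0 and a ∈ (0,1). The ordinary differential equation y'(t) = s y(t)(1−y(t))/(1 + s(1−y(t))) with y(0) = a admits a unique solution (y_t)_{t≥0} with values in [0,1]; this solution satisfies y_t ∈ (0,1) for all t ≥ 0, satisfies y_t^{1+s}/(1−y_t) = (a^{1+s}/(1−a)) e^{st} for all t ≥ 0 (equivalently y_t = F^{-1}((a^{1+s}/(1−a)) e^{st}) where F(x) = x^{1+s}/(1−x)), is strictly increasing in t, and converges to 1 as t → ∞. -/
open Filter
open Set Topology

/-- A solution on `[0,∞)`, with values in `[0,1]`, of the ordinary differential equation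
`y' = s y (1−y) / (1 + s(1−y))` with initial condition `y(0) = a`. -/
def IsSolY (s a : ℝ) (y : ℝ → ℝ) : Prop :=
  y 0 = a ∧ ∀ t ∈ Set.Ici (0 : ℝ),
    y t ∈ Set.Icc (0 : ℝ) 1 ∧
    HasDerivWithinAt y (s * y t * (1 - y t) / (1 + s * (1 - y t))) (Set.Ici 0) t

private lemma Tfun_hasDerivAt (s c : ℝ) (hs : 0 < s) {x : ℝ} (hx : x ∈ Set.Ioo (0:ℝ) 1) :
    HasDerivAt (fun x => ((1+s)*Real.log x - Real.log (1-x) - c)/s)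
      ((1 + s*(1-x))/(s*x*(1-x))) x := by
  obtain ⟨hx0, hx1⟩ := hx
  have h1x : (0:ℝ) < 1 - x := by linarith
  have h1 : HasDerivAt (fun x : ℝ => Real.log (1-x)) ((1-x)⁻¹ * (-1)) x :=
    (Real.hasDerivAt_log h1x.ne').comp x (((hasDerivAt_id x).const_sub 1))
  have h2 : HasDerivAt (fun x => ((1+s)*Real.log x - Real.log (1-x) - c)/s)
      (((1+s) * x⁻¹ - (1-x)⁻¹ * (-1))/s) x :=
    ((((Real.hasDerivAt_log hx0.ne').const_mul (1+s)).sub h1).sub_const c).div_const s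
  convert h2 using 1
  field_simp
  ring

private lemma Tfun_strictMono (s c : ℝ) (hs : 0 < s) :
    StrictMonoOn (fun x => ((1+s)*Real.log x - Real.log (1-x) - c)/s) (Set.Ioo (0:ℝ) 1) := by
  apply strictMonoOn_of_deriv_pos (convex_Ioo _ _)
  · exact fun x hx => (Tfun_hasDerivAt s c hs hx).continuousAt.continuousWithinAt
  · intro x hx
    rw [interior_Ioo] at hx
    rw [(Tfun_hasDerivAt s c hs hx).deriv]
    obtain ⟨hx0, hx1⟩ := hx
    have h1 : (0:ℝ) < 1 - x := by linarith
    have h2 : (0:ℝ) < 1 + s*(1-x) := by nlinarith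
    exact div_pos h2 (by positivity)

private lemma Tfun_surj (s c : ℝ) (hs : 0 < s) (t : ℝ) :
    ∃ x ∈ Set.Ioo (0:ℝ) 1, ((1+s)*Real.log x - Real.log (1-x) - c)/s = t := by
  set T : ℝ → ℝ := fun x => ((1+s)*Real.log x - Real.log (1-x) - c)/s with hT
  have hcont : ∀ x ∈ Set.Ioo (0:ℝ) 1, ContinuousAt T x := fun x hx =>
    (Tfun_hasDerivAt s c hs hx).continuousAt
  -- T → -∞ as x → 0+
  have hbot : Tendsto T (𝓝[>] (0:ℝ)) atBot := by
    have h1 : Tendsto (fun x : ℝ => (1+s) * Real.log x) (𝓝[>] (0:ℝ)) atBot :=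
      Real.tendsto_log_nhdsGT_zero.const_mul_atBot (by linarith)
    have hsub : Tendsto (fun x : ℝ => 1-x) (𝓝[>] (0:ℝ)) (𝓝 1) := by
      have : Tendsto (fun x : ℝ => 1-x) (𝓝 (0:ℝ)) (𝓝 (1-0)) :=
        (continuousAt_const.sub continuousAt_id)
      simpa using this.mono_left nhdsWithin_le_nhds
    have h2 : Tendsto (fun x : ℝ => -Real.log (1-x) - c) (𝓝[>] (0:ℝ))
        (𝓝 (-Real.log 1 - c)) :=
      (((Real.continuousAt_log one_ne_zero).tendsto.comp hsub).neg).sub tendsto_const_nhds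
    have := (h1.atBot_add h2).atBot_div_const hs
    apply this.congr
    intro x; simp only [hT]; ring
  -- T → ∞ as x → 1-
  have htop : Tendsto T (𝓝[<] (1:ℝ)) atTop := by
    have hmap : Tendsto (fun x : ℝ => 1 - x) (𝓝[<] (1:ℝ)) (𝓝[>] (0:ℝ)) := by
      apply tendsto_nhdsWithin_of_tendsto_nhds_of_eventually_within
      · have : Tendsto (fun x : ℝ => 1 - x) (𝓝 (1:ℝ)) (𝓝 (1-1)) :=
          (continuousAt_const.sub continuousAt_id)
        simpa using this.mono_left nhdsWithin_le_nhds
      · filter_upwards [self_mem_nhdsWithin] with x hx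
        exact Set.mem_Ioi.2 (sub_pos.2 (Set.mem_Iio.mp hx))
    have h1 : Tendsto (fun x : ℝ => -Real.log (1-x)) (𝓝[<] (1:ℝ)) atTop := by
      have := tendsto_neg_atBot_atTop.comp (Real.tendsto_log_nhdsGT_zero.comp hmap)
      exact this
    have h2 : Tendsto (fun x : ℝ => (1+s) * Real.log x - c) (𝓝[<] (1:ℝ))
        (𝓝 ((1+s) * Real.log 1 - c)) := by
      apply Tendsto.mono_left _ nhdsWithin_le_nhds
      exact (((Real.continuousAt_log one_ne_zero).tendsto.const_mul _).sub tendsto_const_nhds)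
    have := (h1.atTop_add h2).atTop_div_const hs
    apply this.congr
    intro x; simp only [hT]; ring
  -- pick points
  obtain ⟨x₁, hx₁m, hx₁⟩ : ∃ x ∈ Set.Ioo (0:ℝ) 1, T x < t := by
    have := (hbot.eventually (eventually_lt_atBot t)).and
      (Ioo_mem_nhdsGT (by norm_num : (0:ℝ) < 1))
    rcases this.exists with ⟨x, h1, h2⟩
    exact ⟨x, h2, h1⟩
  obtain ⟨x₂, hx₂m, hx₂⟩ : ∃ x ∈ Set.Ioo (0:ℝ) 1, t < T x := by
    have := (htop.eventually (eventually_gt_atTop t)).and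
      (Ioo_mem_nhdsLT (by norm_num : (0:ℝ) < 1))
    rcases this.exists with ⟨x, h1, h2⟩
    exact ⟨x, h2, h1⟩
  have hx12 : x₁ ≤ x₂ := by
    by_contra h
    push_neg at h
    have := Tfun_strictMono s c hs hx₂m hx₁m h
    rw [← hT] at this
    linarith
  have hIcc : Set.Icc x₁ x₂ ⊆ Set.Ioo (0:ℝ) 1 := fun z hz =>
    ⟨lt_of_lt_of_le hx₁m.1 hz.1, lt_of_le_of_lt hz.2 hx₂m.2⟩
  have : t ∈ Set.Icc (T x₁) (T x₂) := ⟨hx₁.le, hx₂.le⟩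
  have := intermediate_value_Icc hx12 (fun z hz => (hcont z (hIcc hz)).continuousWithinAt) this
  obtain ⟨x, hxm, hxt⟩ := this
  exact ⟨x, hIcc hxm, hxt⟩

private lemma exists_isSolY (s a : ℝ) (hs : 0 < s) (ha : a ∈ Set.Ioo (0:ℝ) 1) :
    ∃ y : ℝ → ℝ, IsSolY s a y := by
  set c : ℝ := (1+s)*Real.log a - Real.log (1-a) with hc
  set T : ℝ → ℝ := fun x => ((1+s)*Real.log x - Real.log (1-x) - c)/s with hT
  set y : ℝ → ℝ := fun t => Function.invFunOn T (Set.Ioo 0 1) t with hy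
  have hsurj : ∀ t : ℝ, ∃ x ∈ Set.Ioo (0:ℝ) 1, T x = t := Tfun_surj s c hs
  have hmem : ∀ t, y t ∈ Set.Ioo (0:ℝ) 1 := fun t => Function.invFunOn_mem (hsurj t)
  have hTy : ∀ t, T (y t) = t := fun t => Function.invFunOn_eq (hsurj t)
  have hmono := Tfun_strictMono s c hs
  have hyT : ∀ x ∈ Set.Ioo (0:ℝ) 1, y (T x) = x := fun x hx =>
    hmono.injOn (hmem _) hx (hTy (T x))
  have hTa : T a = 0 := by
    rw [hT]; simp [hc]
  have y0 : y 0 = a := by rw [← hTa]; exact hyT a ha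
  have hymono : Monotone y := by
    intro t₁ t₂ h
    by_contra hcon
    push_neg at hcon
    have h2 := hmono (hmem t₂) (hmem t₁) hcon
    rw [← hT] at h2
    rw [hTy, hTy] at h2
    linarith
  have hycont : ∀ t, ContinuousAt y t := by
    intro t
    apply continuousAt_of_monotoneOn_of_image_mem_nhds
      (fun u _ v _ huv => hymono huv) univ_mem
    apply Filter.mem_of_superset ((isOpen_Ioo).mem_nhds (hmem t))
    rintro x hx
    exact ⟨T x, Set.mem_univ _, hyT x hx⟩
  have hyderiv : ∀ t, HasDerivAt y
      (s * y t * (1 - y t) / (1 + s * (1 - y t))) t := by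
    intro t
    obtain ⟨hx0, hx1⟩ := hmem t
    have h1x : (0:ℝ) < 1 - y t := by linarith
    have hD : (0:ℝ) < 1 + s*(1 - y t) := by nlinarith
    have hTd : HasDerivAt T ((1 + s*(1 - y t))/(s * y t * (1 - y t))) (y t) :=
      Tfun_hasDerivAt s c hs ⟨hx0, hx1⟩
    have hder := HasDerivAt.of_local_left_inverse (hycont t) hTd
      (ne_of_gt (div_pos hD (by positivity))) (Filter.Eventually.of_forall hTy)
    rwa [inv_div] at hder
  exact ⟨y, y0, fun t ht => ⟨Set.Ioo_subset_Icc_self (hmem t),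
    (hyderiv t).hasDerivWithinAt⟩⟩

private lemma sol_invariant (s a : ℝ) (hs : 0 < s) (ha : a ∈ Set.Ioo (0:ℝ) 1)
    {y : ℝ → ℝ} (hy : IsSolY s a y) :
    ∀ t ∈ Set.Ici (0:ℝ),
      y t ^ (1+s) * Real.exp (-(s*t)) = a^(1+s)/(1-a) * (1 - y t) := by
  obtain ⟨hy0, hyd⟩ := hy
  set K : ℝ := a^(1+s)/(1-a) with hK
  set H : ℝ → ℝ := fun t => y t ^ (1+s) * Real.exp (-(s*t)) - K * (1 - y t) with hH
  set v : ℝ → ℝ := fun t => s * y t * (1 - y t) / (1 + s * (1 - y t)) with hv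
  set Hd : ℝ → ℝ := fun t => ((1+s) * y t ^ ((1+s)-1) * v t) * Real.exp (-(s*t))
      + y t ^ (1+s) * (Real.exp (-(s*t)) * (-s)) - K * (-(v t)) with hHd
  have hderiv : ∀ t ∈ Set.Ici (0:ℝ), HasDerivWithinAt H (Hd t) (Set.Ici 0) t := by
    intro t ht
    have hd := (hyd t ht).2
    have hpow : HasDerivWithinAt (fun u => y u ^ (1+s))
        ((1+s) * y t ^ ((1+s)-1) * v t) (Set.Ici 0) t :=
      (Real.hasDerivAt_rpow_const (Or.inr (by linarith))).comp_hasDerivWithinAt t hd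
    have hexp : HasDerivWithinAt (fun u : ℝ => Real.exp (-(s*u)))
        (Real.exp (-(s*t)) * (-s)) (Set.Ici 0) t := by
      have hin : HasDerivAt (fun u : ℝ => -(s*u)) (-s) t := by
        have := ((hasDerivAt_id t).const_mul s).neg
        simp only [id, mul_one] at this
        exact this
      exact ((Real.hasDerivAt_exp _).comp t hin).hasDerivWithinAt
    have h1 : HasDerivWithinAt (fun u => 1 - y u) (-(v t)) (Set.Ici 0) t := hd.const_sub 1
    exact (hpow.mul hexp).sub (h1.const_mul K)
  have hbound : ∀ t ∈ Set.Ici (0:ℝ), Hd t = -(s * y t / (1 + s * (1 - y t))) * H t := by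
    intro t ht
    obtain ⟨hy0', hy1'⟩ := (hyd t ht).1
    have hD : (0:ℝ) < 1 + s * (1 - y t) := by nlinarith
    have hs1 : y t ^ ((1+s)-1) = y t ^ s := by norm_num
    have hsplit : y t ^ (1+s) = y t * y t ^ s := by
      rw [Real.rpow_add' hy0' (by positivity), Real.rpow_one]
    simp only [hHd, hH, hv]
    rw [hs1, hsplit]
    field_simp
    ring
  have hKpos : 0 < K := by
    rw [hK]
    have := ha.1; have := ha.2
    have : (0:ℝ) < a ^ (1+s) := Real.rpow_pos_of_pos ha.1 _
    have h1a : (0:ℝ) < 1 - a := by linarith [ha.2]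
    positivity
  have hH0 : H 0 = 0 := by
    have h1a : (1:ℝ) - a ≠ 0 := ne_of_gt (by linarith [ha.2])
    simp only [hH, hy0, mul_zero, neg_zero, Real.exp_zero, mul_one, hK]
    rw [div_mul_cancel₀ _ h1a, sub_self]
  intro t ht
  have key : H t = 0 := by
    have hcont : ContinuousOn H (Set.Icc 0 t) := fun u hu =>
      ((hderiv u hu.1).continuousWithinAt).mono (Set.Icc_subset_Ici_self.trans (by norm_num))
    have := norm_le_gronwallBound_of_norm_deriv_right_le (f := H) (f' := Hd)
      (δ := 0) (K := s) (ε := 0) (a := 0) (b := t) hcont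
      (fun u hu => (hderiv u hu.1).mono (Set.Ici_subset_Ici.2 hu.1))
      (by simp [hH0]) ?_ t ⟨ht, le_refl t⟩
    · rw [gronwallBound_ε0_δ0] at this
      simpa using this
    · intro u hu
      rw [hbound u hu.1]
      obtain ⟨hu0, hu1⟩ := (hyd u hu.1).1
      have hD : (1:ℝ) ≤ 1 + s * (1 - y u) := by nlinarith
      rw [norm_mul, norm_neg, add_zero]
      gcongr
      rw [Real.norm_eq_abs, abs_div, abs_of_nonneg (by positivity : (0:ℝ) ≤ s * y u),
        abs_of_pos (by linarith : (0:ℝ) < 1 + s * (1 - y u))]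
      calc s * y u / (1 + s * (1 - y u)) ≤ s * y u / 1 := by
            apply div_le_div_of_nonneg_left (by positivity) one_pos hD
          _ ≤ s := by nlinarith
  simp only [hH] at key
  linarith

/-- The ODE `y' = s y (1−y)/(1 + s(1−y))`, `y(0) = a ∈ (0,1)`, has a unique `[0,1]`-valued
solution on `[0,∞)`; every such solution takes values in `(0,1)`, satisfies
`y_t^{1+s}/(1−y_t) = a^{1+s}/(1−a) eˢᵗ` (i.e. `y_t = F⁻¹(a^{1+s}/(1−a) eˢᵗ)` with
`F(x) = x^{1+s}/(1−x)`), is strictly increasing on `[0,∞)`, and tends to `1` at `∞`. -/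
theorem logistic_type_ode_unique_solution
    (s a : ℝ) (hs : 0 < s) (ha : a ∈ Set.Ioo (0 : ℝ) 1) :
    (∃ y : ℝ → ℝ, IsSolY s a y) ∧
    (∀ y₁ y₂ : ℝ → ℝ, IsSolY s a y₁ → IsSolY s a y₂ → Set.EqOn y₁ y₂ (Set.Ici 0)) ∧
    (∀ y : ℝ → ℝ, IsSolY s a y →
      (∀ t ∈ Set.Ici (0 : ℝ), y t ∈ Set.Ioo (0 : ℝ) 1 ∧
        y t ^ (1 + s) / (1 - y t) = a ^ (1 + s) / (1 - a) * Real.exp (s * t)) ∧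
      StrictMonoOn y (Set.Ici 0) ∧
      Tendsto y atTop (nhds 1)) := by
  have ha0 := ha.1
  have ha1 := ha.2
  have h1a : (0:ℝ) < 1 - a := by linarith
  have hKpos : (0:ℝ) < a ^ (1+s) / (1-a) :=
    div_pos (Real.rpow_pos_of_pos ha0 _) h1a
  -- main structure lemma for any solution
  have main : ∀ y : ℝ → ℝ, IsSolY s a y → ∀ t ∈ Set.Ici (0:ℝ),
      y t ∈ Set.Ioo (0:ℝ) 1 ∧
      y t ^ (1+s) = a^(1+s)/(1-a) * (1 - y t) * Real.exp (s*t) := by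
    intro y hy t ht
    have hinv := sol_invariant s a hs ha hy t ht
    obtain ⟨h0, h1⟩ := (hy.2 t ht).1
    have hE : (0:ℝ) < Real.exp (-(s*t)) := Real.exp_pos _
    have hne1 : y t ≠ 1 := by
      intro h
      rw [h] at hinv
      rw [Real.one_rpow] at hinv
      simp only [sub_self, mul_zero, one_mul] at hinv
      linarith
    have hne0 : y t ≠ 0 := by
      intro h
      rw [h] at hinv
      rw [Real.zero_rpow (by positivity)] at hinv
      simp at hinv
      nlinarith
    refine ⟨⟨lt_of_le_of_ne h0 (Ne.symm hne0), lt_of_le_of_ne h1 hne1⟩, ?_⟩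
    have hmul : Real.exp (-(s*t)) * Real.exp (s*t) = 1 := by
      rw [← Real.exp_add]; simp
    calc y t ^ (1+s) = y t ^ (1+s) * (Real.exp (-(s*t)) * Real.exp (s*t)) := by
          rw [hmul, mul_one]
      _ = (y t ^ (1+s) * Real.exp (-(s*t))) * Real.exp (s*t) := by ring
      _ = a^(1+s)/(1-a) * (1 - y t) * Real.exp (s*t) := by rw [hinv]
  refine ⟨exists_isSolY s a hs ha, ?_, ?_⟩
  · -- uniqueness
    intro y₁ y₂ h₁ h₂ t ht
    obtain ⟨⟨h10, h11⟩, e₁⟩ := main y₁ h₁ t ht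
    obtain ⟨⟨h20, h21⟩, e₂⟩ := main y₂ h₂ t ht
    have hE : (0:ℝ) < Real.exp (s*t) := Real.exp_pos _
    rcases lt_trichotomy (y₁ t) (y₂ t) with hlt | heq | hgt
    · have hr := Real.rpow_lt_rpow (le_of_lt h10) hlt (by linarith : (0:ℝ) < 1+s)
      nlinarith [mul_pos (mul_pos hKpos hE) (sub_pos.2 hlt)]
    · exact heq
    · have hr := Real.rpow_lt_rpow (le_of_lt h20) hgt (by linarith : (0:ℝ) < 1+s)
      nlinarith [mul_pos (mul_pos hKpos hE) (sub_pos.2 hgt)]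
  · -- properties of any solution
    intro y hy
    refine ⟨?_, ?_, ?_⟩
    · intro t ht
      obtain ⟨hmem, heq⟩ := main y hy t ht
      refine ⟨hmem, ?_⟩
      have hne : (1:ℝ) - y t ≠ 0 := sub_ne_zero.2 (ne_of_gt hmem.2)
      rw [heq]
      field_simp
    · -- strict monotonicity
      apply strictMonoOn_of_deriv_pos (convex_Ici 0)
      · exact fun t ht => ((hy.2 t ht).2).continuousWithinAt
      · intro t ht
        rw [interior_Ici] at ht
        have hd := ((hy.2 t (Set.mem_Ici.2 (le_of_lt (Set.mem_Ioi.1 ht)))).2).hasDerivAt (Ici_mem_nhds ht)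
        rw [hd.deriv]
        obtain ⟨⟨hy0, hy1⟩, _⟩ := main y hy t (Set.mem_Ici.2 (le_of_lt (Set.mem_Ioi.1 ht)))
        have hD : (0:ℝ) < 1 + s * (1 - y t) := by nlinarith
        have hnum : (0:ℝ) < s * y t * (1 - y t) :=
          mul_pos (mul_pos hs hy0) (by linarith)
        exact div_pos hnum hD
    · -- convergence to 1
      have hsq : Tendsto (fun t => 1 - y t) atTop (𝓝 0) := by
        have hlim : Tendsto (fun t : ℝ => (1-a)/a^(1+s) * Real.exp (-(s*t)))
            atTop (𝓝 ((1-a)/a^(1+s) * 0)) := by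
          apply Tendsto.const_mul
          apply Real.tendsto_exp_atBot.comp
          have : Tendsto (fun t : ℝ => s * t) atTop atTop :=
            Tendsto.const_mul_atTop hs tendsto_id
          exact tendsto_neg_atTop_atBot.comp this
        rw [mul_zero] at hlim
        apply tendsto_of_tendsto_of_tendsto_of_le_of_le' tendsto_const_nhds hlim
        · filter_upwards [eventually_ge_atTop (0:ℝ)] with t ht
          have := ((hy.2 t ht).1).2
          simpa using this
        · filter_upwards [eventually_ge_atTop (0:ℝ)] with t ht
          have hinv := sol_invariant s a hs ha hy t ht
          obtain ⟨⟨hy0, hy1⟩, _⟩ := main y hy t ht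
          have hE : (0:ℝ) < Real.exp (-(s*t)) := Real.exp_pos _
          have hle : y t ^ (1+s) ≤ 1 :=
            Real.rpow_le_one (le_of_lt hy0) (le_of_lt hy1) (by linarith)
          -- K * (1 - y t) = y^(1+s) * E ≤ E  so  1 - y t ≤ K⁻¹ E
          have hKE : a^(1+s)/(1-a) * (1 - y t) ≤ Real.exp (-(s*t)) := by
            rw [← hinv]
            nlinarith
          have hCK : (1-a)/a^(1+s) * (a^(1+s)/(1-a)) = 1 := by
            field_simp
          have hC0 : (0:ℝ) ≤ (1-a)/a^(1+s) := le_of_lt (by positivity)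
          calc 1 - y t = (1-a)/a^(1+s) * (a^(1+s)/(1-a) * (1 - y t)) := by
                rw [← mul_assoc, hCK, one_mul]
            _ ≤ (1-a)/a^(1+s) * Real.exp (-(s*t)) :=
                mul_le_mul_of_nonneg_left hKE hC0
      have : Tendsto (fun t => 1 - (1 - y t)) atTop (𝓝 (1 - 0)) :=
        tendsto_const_nhds.sub hsq
      simpa using this
end

section
/- Let s > 0 and a ∈ (0,1), and let (y_t, u_t, v_t)_{t≥0} be the unique solution of the system y' = s y(1−y)/(y+(1+s)(1−y)), u' = u/2 + (u+v)y/2 − u/(y+(1+s)(1−y)), v' = v/2 + (u+v)(1−y)/2 − (1+s)v/(y+(1+s)(1−y)) with initial condition (a, a, 0). Then for all t ≥ 0, u_t/y_t − v_t/(1−y_t) = e^{−t/2}. -/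
open MeasureTheory Filter

/-- Along the solution of the dynamical system started from `(a, a, 0)` (whose first
component stays in `(0,1)`), the quantity `u_t/y_t − v_t/(1−y_t)` equals `e^{−t/2}`
for all `t ≥ 0`. -/
theorem dynamical_system_conserved_quantity
    (s a : ℝ) (hs : 0 < s) (ha : a ∈ Set.Ioo (0 : ℝ) 1)
    (z : ℝ → ℝ × ℝ × ℝ) (hz : IsSolSys s a z)
    (hy : ∀ t ∈ Set.Ici (0 : ℝ), (z t).1 ∈ Set.Ioo (0 : ℝ) 1) :
    ∀ t ∈ Set.Ici (0 : ℝ),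
      (z t).2.1 / (z t).1 - (z t).2.2 / (1 - (z t).1) = Real.exp (-t / 2) := by
  obtain ⟨hz0, hzd⟩ := hz
  set f : ℝ → ℝ := fun t =>
    ((z t).2.1 / (z t).1 - (z t).2.2 / (1 - (z t).1)) * Real.exp (t / 2) with hfdef
  have key : ∀ t ∈ Set.Ici (0 : ℝ), HasDerivWithinAt f 0 (Set.Ici 0) t := by
    intro t ht
    obtain ⟨hy0, hy1⟩ := hy t ht
    have hz' := (hzd t ht).2
    have hyne : (z t).1 ≠ 0 := ne_of_gt hy0
    have h1yne : (1 : ℝ) - (z t).1 ≠ 0 := by linarith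
    have hD : (z t).1 + (1 + s) * (1 - (z t).1) ≠ 0 := by nlinarith
    have hyd : HasDerivWithinAt (fun t => (z t).1) (gdrift s (z t)).1 (Set.Ici 0) t := hz'.fst
    have hud : HasDerivWithinAt (fun t => (z t).2.1) (gdrift s (z t)).2.1 (Set.Ici 0) t :=
      hz'.snd.fst
    have hvd : HasDerivWithinAt (fun t => (z t).2.2) (gdrift s (z t)).2.2 (Set.Ici 0) t :=
      hz'.snd.snd
    have hq1 := hud.div hyd hyne
    have hq2 := hvd.div ((hasDerivWithinAt_const t (Set.Ici (0:ℝ)) (1:ℝ)).sub hyd) h1yne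
    have hexp : HasDerivAt (fun t : ℝ => Real.exp (t / 2)) (Real.exp (t / 2) * (1 / 2)) t := by
      simpa using ((hasDerivAt_id t).div_const 2).exp
    have hf' := (hq1.sub hq2).mul hexp.hasDerivWithinAt
    convert hf' using 1
    · rfl
    · rfl
    · rfl
    simp only [gdrift]
    simp only [Pi.sub_apply, Pi.div_apply]
    have hE := (Real.exp_pos (t / 2)).ne'
    field_simp
    ring
  intro t ht
  have hft : f t = f 0 := by
    rcases eq_or_lt_of_le (Set.mem_Ici.mp ht) with h | h
    · rw [← h]
    · exact constant_of_has_deriv_right_zero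
        (fun x hx => ((key x hx.1).continuousWithinAt).mono
          (Set.Icc_subset_Ici_self))
        (fun x hx => (key x hx.1).mono (Set.Ici_subset_Ici.mpr hx.1))
        t (Set.right_mem_Icc.mpr h.le)
  have hf0 : f 0 = 1 := by
    simp [hfdef, hz0, ne_of_gt ha.1]
  have hE : Real.exp (t / 2) ≠ 0 := (Real.exp_pos _).ne'
  have h1 : ((z t).2.1 / (z t).1 - (z t).2.2 / (1 - (z t).1)) * Real.exp (t / 2) = 1 :=
    hft.trans hf0
  have h2 : Real.exp (-t / 2) * Real.exp (t / 2) = 1 := by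
    rw [← Real.exp_add]; ring_nf; exact Real.exp_zero
  exact mul_right_cancel₀ hE (h1.trans h2.symm)
end

section
/- Let s > 0 and let (y_t, u_t, v_t) be any differentiable solution on an interval of the system y' = s y(1−y)/(y+(1+s)(1−y)), u' = u/2 + (u+v)y/2 − u/(y+(1+s)(1−y)), v' = v/2 + (u+v)(1−y)/2 − (1+s)v/(y+(1+s)(1−y)) with y_t ∈ (0,1). Then d/dt (u_t/y_t) = (u_t+v_t)/2 − u_t/(2 y_t) and d/dt (v_t/(1−y_t)) = (u_t+v_t)/2 − v_t/(2(1−y_t)). -/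
open MeasureTheory Filter

/-- For any differentiable solution `(y, u, v)` of the dynamical system on an interval `I`
with `y` taking values in `(0,1)`, one has
`(u/y)' = (u+v)/2 − u/(2y)` and `(v/(1−y))' = (u+v)/2 − v/(2(1−y))` on `I`. -/
theorem dynamical_system_quotient_derivatives
    (s : ℝ) (hs : 0 < s) (I : Set ℝ) (hI : I.OrdConnected)
    (z : ℝ → ℝ × ℝ × ℝ)
    (hy : ∀ t ∈ I, (z t).1 ∈ Set.Ioo (0 : ℝ) 1)
    (hz : ∀ t ∈ I, HasDerivWithinAt z (gdrift s (z t)) I t) :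
    ∀ t ∈ I,
      HasDerivWithinAt (fun τ => (z τ).2.1 / (z τ).1)
        (((z t).2.1 + (z t).2.2) / 2 - (z t).2.1 / (2 * (z t).1)) I t ∧
      HasDerivWithinAt (fun τ => (z τ).2.2 / (1 - (z τ).1))
        (((z t).2.1 + (z t).2.2) / 2 - (z t).2.2 / (2 * (1 - (z t).1))) I t := by
  intro t ht
  obtain ⟨hy0, hy1⟩ := hy t ht
  have hzt := hz t ht
  have hD : (z t).1 + (1 + s) * (1 - (z t).1) ≠ 0 := by nlinarith
  have h1 : HasDerivWithinAt (fun τ => (z τ).1) ((gdrift s (z t)).1) I t := by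
    simpa using (hzt.hasFDerivWithinAt.fst).hasDerivWithinAt
  have h2 : HasDerivWithinAt (fun τ => (z τ).2.1) ((gdrift s (z t)).2.1) I t := by
    simpa using ((hzt.hasFDerivWithinAt.snd).fst).hasDerivWithinAt
  have h3 : HasDerivWithinAt (fun τ => (z τ).2.2) ((gdrift s (z t)).2.2) I t := by
    simpa using ((hzt.hasFDerivWithinAt.snd).snd).hasDerivWithinAt
  constructor
  · have h := h2.fun_div h1 (ne_of_gt hy0)
    refine h.congr_deriv ?_
    simp only [gdrift]
    field_simp
    ring
  · have h1' : HasDerivWithinAt (fun τ => 1 - (z τ).1) (-(gdrift s (z t)).1) I t := by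
      exact h1.const_sub 1
    have h := h3.fun_div h1' (by linarith : (1 : ℝ) - (z t).1 ≠ 0)
    refine h.congr_deriv ?_
    simp only [gdrift]
    have h1y : (1 : ℝ) - (z t).1 ≠ 0 := by linarith
    field_simp
    ring
end
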